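/- arXiv:math/0404345 — 6 statements merged into one kernel-verified Lean document; each statement's English description precedes it below -/
import Mathlib

section
/- Let l ≥ 1. Define ℒ-incidence numbers on the subsets of {1,…,l} by [J;J∪{i}]_ℒ := [J;J∪{i}]_{A_{l+1}}, the incidence number of the Toda chain complex of type A_{l+1} evaluated at the same subsets J, J∪{i} ⊆ {1,…,l} ⊂ {1,…,l+1} (equivalently: with n_1, n_2 computed in {1,…,l}∖J, replace n_2 by n_2+1 whenever the component of i contains l, then apply the type-A formula). These satisfy δ∘δ = 0, and the resulting cochain complex 𝒞^•(ℒ) over ℚ, with 𝒞^q(ℒ) := Maps({J ⊆ {1,…,l} : |J| = l−q}, ℚ) and (δf)(J) := Σ_{i∉J} [J;J∪{i}]_ℒ·f(J∪{i}), is exact: H^q(𝒞^•(ℒ); ℚ) = 0 for every q. -/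
/-- `n1 l J i`: the number of elements of the connected component of `i` in the
complement of `J` (maximal run of consecutive indices avoiding `J`) that are smaller
than `i`.  Here `Fin l` represents the simple roots `{1,…,l}` (index `i` ↦ root `i+1`). -/
def n1 (l : ℕ) (J : Finset (Fin l)) (i : Fin l) : ℕ :=
  (Finset.univ.filter (fun j : Fin l => j < i ∧ ∀ k : Fin l, j ≤ k → k ≤ i → k ∉ J)).card

/-- `n2 l J i`: the number of elements of the connected component of `i` in the
complement of `J` that are larger than `i`. -/
def n2 (l : ℕ) (J : Finset (Fin l)) (i : Fin l) : ℕ :=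
  (Finset.univ.filter (fun j : Fin l => i < j ∧ ∀ k : Fin l, i ≤ k → k ≤ j → k ∉ J)).card

/-- `nu l J i = ν(J; J∪{i})`: the number of `j ∉ J` with `j < i`. -/
def nu (l : ℕ) (J : Finset (Fin l)) (i : Fin l) : ℕ :=
  (Finset.univ.filter (fun j : Fin l => j < i ∧ j ∉ J)).card

/-- The incidence number `[J ; J ∪ {i}]` of the type-`A_l` Toda chain complex:
with `m = n1+n2+1` and `k = n1+1`, it is `0` if `m` and `k` are both odd, and
`(-1)^ν · 2 · C(⌊(m+1)/2⌋, ⌊k/2⌋)` otherwise. -/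
def incA (l : ℕ) (J : Finset (Fin l)) (i : Fin l) : ℤ :=
  if Odd (n1 l J i + n2 l J i + 1) ∧ Odd (n1 l J i + 1) then 0
  else (-1) ^ (nu l J i) * 2 *
    (((n1 l J i + n2 l J i + 2) / 2).choose ((n1 l J i + 1) / 2) : ℤ)

/-- The cochain group in degree `q`: `R`-valued functions on the subsets `J ⊆ {1,…,l}`
with `|J| = l - q` (recorded as `J.card + q = l`). -/
abbrev Coch (R : Type) [CommRing R] (l q : ℕ) : Type :=
  {J : Finset (Fin l) // J.card + q = l} → R

/-- `J ∪ {i}` for `i ∉ J`, as an element of the index set one degree lower. -/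
def insElt (l q : ℕ) (J : {J : Finset (Fin l) // J.card + (q + 1) = l})
    (i : {x : Fin l // x ∈ J.1ᶜ}) : {J' : Finset (Fin l) // J'.card + q = l} :=
  ⟨insert i.1 J.1, by
    have hi : i.1 ∉ J.1 := Finset.mem_compl.mp i.2
    have hJ := J.2
    rw [Finset.card_insert_of_notMem hi]; omega⟩

/-- `(δf)(J) = Σ_{i ∉ J} inc(J; J∪{i}) · f(J∪{i})`. -/
def deltaFun (R : Type) [CommRing R] (l : ℕ) (inc : Finset (Fin l) → Fin l → ℤ) (q : ℕ)
    (f : Coch R l q) : Coch R l (q + 1) :=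
  fun J => ∑ i ∈ J.1ᶜ.attach, (inc J.1 i.1 : R) * f (insElt l q J i)

/-- The coboundary map `δ : C^q → C^{q+1}` as a linear map. -/
def delta (R : Type) [CommRing R] (l : ℕ) (inc : Finset (Fin l) → Fin l → ℤ) (q : ℕ) :
    Coch R l q →ₗ[R] Coch R l (q + 1) where
  toFun := deltaFun R l inc q
  map_add' f g := by
    funext J
    simp [deltaFun, mul_add, Finset.sum_add_distrib]
  map_smul' c f := by
    funext J
    simp [deltaFun, Finset.mul_sum, mul_left_comm]
/-- The ℒ-incidence numbers on subsets of `{1,…,l}`: the type-`A_{l+1}` incidence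
numbers evaluated at the same subsets regarded inside `{1,…,l+1}` (via `Fin.castSucc`). -/
def incL (l : ℕ) (J : Finset (Fin l)) (i : Fin l) : ℤ :=
  incA (l + 1) (J.image Fin.castSucc) i.castSucc


/-- magnitude part of the incidence number -/
def Amag (x y : ℕ) : ℤ :=
  if Odd (x + y + 1) ∧ Odd (x + 1) then 0
  else 2 * (((x + y + 2) / 2).choose ((x + 1) / 2) : ℤ)

lemma Amag_ee (a b : ℕ) : Amag (2*a) (2*b) = 0 := by
  rw [Amag, if_pos]
  constructor <;> [exact ⟨a+b, by ring⟩; exact ⟨a, by ring⟩]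

lemma Amag_eo (a b : ℕ) : Amag (2*a) (2*b+1) = 2 * ((a+b+1).choose a : ℤ) := by
  rw [Amag, if_neg]
  · have h1 : (2*a + (2*b+1) + 2)/2 = a+b+1 := by omega
    have h2 : (2*a + 1)/2 = a := by omega
    rw [h1, h2]
  · rintro ⟨⟨k, hk⟩, -⟩; omega

lemma Amag_oe (a b : ℕ) : Amag (2*a+1) (2*b) = 2 * ((a+b+1).choose (a+1) : ℤ) := by
  rw [Amag, if_neg]
  · have h1 : (2*a+1 + 2*b + 2)/2 = a+b+1 := by omega
    have h2 : (2*a+1 + 1)/2 = a+1 := by omega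
    rw [h1, h2]
  · rintro ⟨-, k, hk⟩; omega

lemma Amag_oo (a b : ℕ) : Amag (2*a+1) (2*b+1) = 2 * ((a+b+2).choose (a+1) : ℤ) := by
  rw [Amag, if_neg]
  · have h1 : (2*a+1 + (2*b+1) + 2)/2 = a+b+2 := by omega
    have h2 : (2*a+1 + 1)/2 = a+1 := by omega
    rw [h1, h2]
  · rintro ⟨-, k, hk⟩; omega

lemma Amag_key (p u v : ℕ) :
    Amag p (u + v + 1) * Amag u v = Amag (p + u + 1) v * Amag p u := by
  obtain ⟨a, rfl | rfl⟩ := Nat.even_or_odd' p <;>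
  obtain ⟨b, rfl | rfl⟩ := Nat.even_or_odd' u <;>
  obtain ⟨c, rfl | rfl⟩ := Nat.even_or_odd' v
  · -- eee
    have h1 : 2*b + 2*c + 1 = 2*(b+c)+1 := by ring
    have h2 : 2*a + 2*b + 1 = 2*(a+b)+1 := by ring
    rw [h1, h2, Amag_ee, Amag_ee, mul_zero, mul_zero]
  · -- eeo
    have h1 : 2*b + (2*c+1) + 1 = 2*(b+c+1) := by ring
    have h2 : 2*a + 2*b + 1 = 2*(a+b)+1 := by ring
    rw [h1, h2, Amag_ee, Amag_ee, zero_mul, mul_zero]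
  · -- eoe
    have h1 : 2*b+1 + 2*c + 1 = 2*(b+c+1) := by ring
    have h2 : 2*a + (2*b+1) + 1 = 2*(a+b+1) := by ring
    rw [h1, h2, Amag_ee, Amag_ee, zero_mul, zero_mul]
  · -- eoo
    have h1 : 2*b+1 + (2*c+1) + 1 = 2*(b+c+1)+1 := by ring
    have h2 : 2*a + (2*b+1) + 1 = 2*(a+b+1) := by ring
    rw [h1, h2]
    simp only [Amag_eo, Amag_oe, Amag_oo]
    have key : (a+b+c+2).choose (a+b+1) * (a+b+1).choose a
        = (a+b+c+2).choose a * (b+c+2).choose (b+1) := by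
      rw [Nat.choose_mul (by omega)]
      congr 1 <;> congr 1 <;> omega
    have key' : (((a+b+c+2).choose (a+b+1) : ℕ) : ℤ) * ((a+b+1).choose a : ℕ)
        = (((a+b+c+2).choose a : ℕ) : ℤ) * ((b+c+2).choose (b+1) : ℕ) := by exact_mod_cast key
    rw [show a+(b+c+1)+1 = a+b+c+2 by ring, show a+b+1+c+1 = a+b+c+2 by ring]
    linear_combination (-4 : ℤ) * key'
  · -- oee
    have h1 : 2*b + 2*c + 1 = 2*(b+c)+1 := by ring
    have h2 : 2*a+1 + 2*b + 1 = 2*(a+b+1) := by ring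
    rw [h1, h2, Amag_ee, Amag_ee, mul_zero, zero_mul]
  · -- oeo
    have h1 : 2*b + (2*c+1) + 1 = 2*(b+c+1) := by ring
    have h2 : 2*a+1 + 2*b + 1 = 2*(a+b+1) := by ring
    rw [h1, h2]
    simp only [Amag_eo, Amag_oe, Amag_oo]
    have key : (a+b+c+2).choose (a+b+1) * (a+b+1).choose (a+1)
        = (a+b+c+2).choose (a+1) * (b+c+1).choose b := by
      rw [Nat.choose_mul (by omega)]
      congr 1 <;> congr 1 <;> omega
    have key' : (((a+b+c+2).choose (a+b+1) : ℕ) : ℤ) * ((a+b+1).choose (a+1) : ℕ)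
        = (((a+b+c+2).choose (a+1) : ℕ) : ℤ) * ((b+c+1).choose b : ℕ) := by exact_mod_cast key
    rw [show a+(b+c+1)+1 = a+b+c+2 by ring, show a+b+1+c+1 = a+b+c+2 by ring]
    linear_combination (-4 : ℤ) * key'
  · -- ooe
    have h1 : 2*b+1 + 2*c + 1 = 2*(b+c+1) := by ring
    have h2 : 2*a+1 + (2*b+1) + 1 = 2*(a+b+1)+1 := by ring
    rw [h1, h2]
    simp only [Amag_eo, Amag_oe, Amag_oo]
    have key : (a+b+c+2).choose (a+b+2) * (a+b+2).choose (a+1)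
        = (a+b+c+2).choose (a+1) * (b+c+1).choose (b+1) := by
      rw [Nat.choose_mul (by omega)]
      congr 1 <;> congr 1 <;> omega
    have key' : (((a+b+c+2).choose (a+b+2) : ℕ) : ℤ) * ((a+b+2).choose (a+1) : ℕ)
        = (((a+b+c+2).choose (a+1) : ℕ) : ℤ) * ((b+c+1).choose (b+1) : ℕ) := by exact_mod_cast key
    rw [show a+(b+c+1)+1 = a+b+c+2 by ring, show a+b+1+c+1 = a+b+c+2 by ring,
      show a+b+1+1 = a+b+2 by ring]
    linear_combination (-4 : ℤ) * key'
  · -- ooo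
    have h1 : 2*b+1 + (2*c+1) + 1 = 2*(b+c+1)+1 := by ring
    have h2 : 2*a+1 + (2*b+1) + 1 = 2*(a+b+1)+1 := by ring
    rw [h1, h2]
    simp only [Amag_eo, Amag_oe, Amag_oo]
    have key : (a+b+c+3).choose (a+b+2) * (a+b+2).choose (a+1)
        = (a+b+c+3).choose (a+1) * (b+c+2).choose (b+1) := by
      rw [Nat.choose_mul (by omega)]
      congr 1 <;> congr 1 <;> omega
    have key' : (((a+b+c+3).choose (a+b+2) : ℕ) : ℤ) * ((a+b+2).choose (a+1) : ℕ)
        = (((a+b+c+3).choose (a+1) : ℕ) : ℤ) * ((b+c+2).choose (b+1) : ℕ) := by exact_mod_cast key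
    rw [show a+(b+c+1)+2 = a+b+c+3 by ring, show a+b+1+c+2 = a+b+c+3 by ring,
      show a+b+1+1 = a+b+2 by ring]
    linear_combination (-4 : ℤ) * key'

def botFree (m : ℕ) (J : Finset (Fin m)) (i : Fin m) : Prop := ∀ k : Fin m, k ≤ i → k ∉ J
def topFree (m : ℕ) (J : Finset (Fin m)) (i : Fin m) : Prop := ∀ k : Fin m, i ≤ k → k ∉ J

instance (m : ℕ) (J : Finset (Fin m)) (i : Fin m) : Decidable (botFree m J i) := by
  unfold botFree; infer_instance
instance (m : ℕ) (J : Finset (Fin m)) (i : Fin m) : Decidable (topFree m J i) := by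
  unfold topFree; infer_instance

def n1Y (a m : ℕ) (J : Finset (Fin m)) (i : Fin m) : ℕ :=
  n1 m J i + if botFree m J i then a else 0
def n2Y (m : ℕ) (J : Finset (Fin m)) (i : Fin m) : ℕ :=
  n2 m J i + if topFree m J i then 1 else 0

def incY (a m : ℕ) (J : Finset (Fin m)) (i : Fin m) : ℤ :=
  (-1) ^ (nu m J i) * Amag (n1Y a m J i) (n2Y m J i)

def mid {m : ℕ} (i j : Fin m) : Finset (Fin m) :=
  Finset.univ.filter (fun x => i < x ∧ x < j)

section SameRun
variable {m : ℕ} {J : Finset (Fin m)} {i j : Fin m}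

lemma SR1 (hij : i < j) (hrun : ∀ k, i ≤ k → k ≤ j → k ∉ J) :
    n1 m (insert i J) j = (mid i j).card := by
  unfold n1 mid
  congr 1
  apply Finset.filter_congr
  intro x _
  constructor
  · rintro ⟨hxj, hcl⟩
    refine ⟨?_, hxj⟩
    by_contra hxi
    push_neg at hxi
    exact hcl i hxi (le_of_lt hij) (Finset.mem_insert_self i J)
  · rintro ⟨hix, hxj⟩
    refine ⟨hxj, fun k hxk hkj hkJ => ?_⟩
    rcases Finset.mem_insert.mp hkJ with rfl | hkJ
    · exact absurd (lt_of_lt_of_le hix hxk) (lt_irrefl _)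
    · exact hrun k (le_of_lt (lt_of_lt_of_le hix hxk)) hkj hkJ

lemma SR2 (hij : i < j) (hrun : ∀ k, i ≤ k → k ≤ j → k ∉ J) :
    n2 m (insert j J) i = (mid i j).card := by
  unfold n2 mid
  congr 1
  apply Finset.filter_congr
  intro x _
  constructor
  · rintro ⟨hix, hcl⟩
    refine ⟨hix, ?_⟩
    by_contra hxj
    push_neg at hxj
    exact hcl j (le_of_lt hij) hxj (Finset.mem_insert_self j J)
  · rintro ⟨hix, hxj⟩
    refine ⟨hix, fun k hik hkx hkJ => ?_⟩
    rcases Finset.mem_insert.mp hkJ with rfl | hkJ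
    · exact absurd (lt_of_le_of_lt hkx hxj) (lt_irrefl _)
    · exact hrun k hik (le_of_lt (lt_of_le_of_lt hkx hxj)) hkJ

lemma SR3 (hij : i < j) (hrun : ∀ k, i ≤ k → k ≤ j → k ∉ J) :
    n1 m J j = n1 m J i + ((mid i j).card + 1) := by
  unfold n1
  have hset : (Finset.univ.filter (fun x : Fin m => x < j ∧ ∀ k, x ≤ k → k ≤ j → k ∉ J))
      = (Finset.univ.filter (fun x : Fin m => x < i ∧ ∀ k, x ≤ k → k ≤ i → k ∉ J))
        ∪ insert i (mid i j) := by
    ext x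
    simp only [Finset.mem_filter, Finset.mem_univ, true_and, Finset.mem_union,
      Finset.mem_insert, mid]
    constructor
    · rintro ⟨hxj, hcl⟩
      rcases lt_trichotomy x i with hxi | rfl | hix
      · exact Or.inl ⟨hxi, fun k hxk hki => hcl k hxk (le_trans hki (le_of_lt hij))⟩
      · exact Or.inr (Or.inl rfl)
      · exact Or.inr (Or.inr ⟨hix, hxj⟩)
    · rintro (⟨hxi, hcl⟩ | rfl | ⟨hix, hxj⟩)
      · refine ⟨lt_trans hxi hij, fun k hxk hkj hkJ => ?_⟩
        rcases le_or_gt k i with hki | hik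
        · exact hcl k hxk hki hkJ
        · exact hrun k (le_of_lt hik) hkj hkJ
      · exact ⟨hij, fun k hxk hkj => hrun k hxk hkj⟩
      · exact ⟨hxj, fun k hxk hkj => hrun k (le_of_lt (lt_of_lt_of_le hix hxk)) hkj⟩
  rw [hset, Finset.card_union_of_disjoint, Finset.card_insert_of_notMem]
  · simp [mid]
  · rw [Finset.disjoint_left]
    rintro x hx hx'
    simp only [Finset.mem_filter, Finset.mem_univ, true_and] at hx
    simp only [Finset.mem_insert, mid, Finset.mem_filter, Finset.mem_univ, true_and] at hx'
    rcases hx' with rfl | ⟨hix, -⟩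
    · exact absurd hx.1 (lt_irrefl _)
    · exact absurd (lt_trans hix hx.1) (lt_irrefl _)

lemma SR4 (hij : i < j) (hrun : ∀ k, i ≤ k → k ≤ j → k ∉ J) :
    n2 m J i = n2 m J j + ((mid i j).card + 1) := by
  unfold n2
  have hset : (Finset.univ.filter (fun x : Fin m => i < x ∧ ∀ k, i ≤ k → k ≤ x → k ∉ J))
      = (Finset.univ.filter (fun x : Fin m => j < x ∧ ∀ k, j ≤ k → k ≤ x → k ∉ J))
        ∪ insert j (mid i j) := by
    ext x
    simp only [Finset.mem_filter, Finset.mem_univ, true_and, Finset.mem_union,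
      Finset.mem_insert, mid]
    constructor
    · rintro ⟨hix, hcl⟩
      rcases lt_trichotomy x j with hxj | rfl | hjx
      · exact Or.inr (Or.inr ⟨hix, hxj⟩)
      · exact Or.inr (Or.inl rfl)
      · exact Or.inl ⟨hjx, fun k hjk hkx => hcl k (le_trans (le_of_lt hij) hjk) hkx⟩
    · rintro (⟨hjx, hcl⟩ | rfl | ⟨hix, hxj⟩)
      · refine ⟨lt_trans hij hjx, fun k hik hkx hkJ => ?_⟩
        rcases le_or_gt k j with hkj | hjk
        · exact hrun k hik hkj hkJ
        · exact hcl k (le_of_lt hjk) hkx hkJ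
      · exact ⟨hij, fun k hik hkx => hrun k hik hkx⟩
      · exact ⟨hix, fun k hik hkx => hrun k hik (le_trans hkx (le_of_lt hxj))⟩
  rw [hset, Finset.card_union_of_disjoint, Finset.card_insert_of_notMem]
  · simp [mid]
  · rw [Finset.disjoint_left]
    rintro x hx hx'
    simp only [Finset.mem_filter, Finset.mem_univ, true_and] at hx
    simp only [Finset.mem_insert, mid, Finset.mem_filter, Finset.mem_univ, true_and] at hx'
    rcases hx' with rfl | hx2
    · exact absurd hx.1 (lt_irrefl _)
    · exact absurd (lt_trans hx2.2 hx.1) (lt_irrefl _)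

lemma SR5 (hij : i < j) (hiJ : i ∉ J) (hrun : ∀ k, i ≤ k → k ≤ j → k ∉ J) :
    nu m J j = nu m J i + ((mid i j).card + 1) := by
  unfold nu
  have hset : (Finset.univ.filter (fun x : Fin m => x < j ∧ x ∉ J))
      = (Finset.univ.filter (fun x : Fin m => x < i ∧ x ∉ J)) ∪ insert i (mid i j) := by
    ext x
    simp only [Finset.mem_filter, Finset.mem_univ, true_and, Finset.mem_union,
      Finset.mem_insert, mid]
    constructor
    · rintro ⟨hxj, hxJ⟩
      rcases lt_trichotomy x i with hxi | rfl | hix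
      · exact Or.inl ⟨hxi, hxJ⟩
      · exact Or.inr (Or.inl rfl)
      · exact Or.inr (Or.inr ⟨hix, hxj⟩)
    · rintro (⟨hxi, hxJ⟩ | rfl | ⟨hix, hxj⟩)
      · exact ⟨lt_trans hxi hij, hxJ⟩
      · exact ⟨hij, hiJ⟩
      · exact ⟨hxj, hrun x (le_of_lt hix) (le_of_lt hxj)⟩
  rw [hset, Finset.card_union_of_disjoint, Finset.card_insert_of_notMem]
  · simp [mid]
  · rw [Finset.disjoint_left]
    rintro x hx hx'
    simp only [Finset.mem_filter, Finset.mem_univ, true_and] at hx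
    simp only [Finset.mem_insert, mid, Finset.mem_filter, Finset.mem_univ, true_and] at hx'
    rcases hx' with rfl | ⟨hix, -⟩
    · exact absurd hx.1 (lt_irrefl _)
    · exact absurd (lt_trans hix hx.1) (lt_irrefl _)

lemma SR6 (hij : i < j) (hiJ : i ∉ J) :
    nu m J j = nu m (insert i J) j + 1 := by
  unfold nu
  have hset : (Finset.univ.filter (fun x : Fin m => x < j ∧ x ∉ J))
      = insert i (Finset.univ.filter (fun x : Fin m => x < j ∧ x ∉ insert i J)) := by
    ext x
    simp only [Finset.mem_filter, Finset.mem_univ, true_and, Finset.mem_insert]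
    constructor
    · rintro ⟨hxj, hxJ⟩
      rcases eq_or_ne x i with rfl | hxi
      · exact Or.inl rfl
      · exact Or.inr ⟨hxj, by simp [hxJ, hxi]⟩
    · rintro (rfl | ⟨hxj, hxJ⟩)
      · exact ⟨hij, hiJ⟩
      · exact ⟨hxj, fun h => hxJ (Or.inr h)⟩
  rw [hset, Finset.card_insert_of_notMem]
  simp
end SameRun

section MoreRun
variable {m : ℕ} {J : Finset (Fin m)} {i j : Fin m}

lemma botFree_mono (h : botFree m (insert j J) i) : botFree m J i :=
  fun k hk hkJ => h k hk (Finset.mem_insert_of_mem hkJ)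
lemma topFree_mono (h : topFree m (insert j J) i) : topFree m J i :=
  fun k hk hkJ => h k hk (Finset.mem_insert_of_mem hkJ)

lemma SB1 (hij : i ≤ j) (hrun : ∀ k, i ≤ k → k ≤ j → k ∉ J) :
    botFree m J j ↔ botFree m J i :=
  ⟨fun h k hk => h k (le_trans hk hij),
   fun h k hk => (le_or_gt k i).elim (fun h' => h k h')
     (fun h' hkJ => hrun k (le_of_lt h') hk hkJ)⟩

lemma SB2 (hij : i ≤ j) (hrun : ∀ k, i ≤ k → k ≤ j → k ∉ J) :
    topFree m J i ↔ topFree m J j :=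
  ⟨fun h k hk => h k (le_trans hij hk),
   fun h k hk => (le_or_gt j k).elim (fun h' => h k h')
     (fun h' hkJ => hrun k hk (le_of_lt h') hkJ)⟩

lemma SB3 (hij : i ≤ j) : ¬ botFree m (insert i J) j :=
  fun h => h i hij (Finset.mem_insert_self i J)
lemma SB4 (hij : i ≤ j) : ¬ topFree m (insert j J) i :=
  fun h => h j hij (Finset.mem_insert_self j J)

lemma SB5 (hij : i < j) : botFree m (insert j J) i ↔ botFree m J i :=
  ⟨botFree_mono, fun h k hk hkJ => (Finset.mem_insert.mp hkJ).elim
    (fun he => absurd (he ▸ hk) (not_le_of_gt (he ▸ hij))) (h k hk)⟩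

lemma SB6 (hij : i < j) : topFree m (insert i J) j ↔ topFree m J j := by
  constructor
  · exact topFree_mono
  · intro h k hk hkJ
    rcases Finset.mem_insert.mp hkJ with rfl | hkJ
    · exact absurd hk (not_le_of_gt hij)
    · exact h k hk hkJ

lemma SN2 (hij : i < j) : n2 m (insert i J) j = n2 m J j := by
  unfold n2
  congr 1
  apply Finset.filter_congr
  intro x _
  constructor
  · rintro ⟨hjx, hcl⟩
    exact ⟨hjx, fun k hk hk' hkJ => hcl k hk hk' (Finset.mem_insert_of_mem hkJ)⟩
  · rintro ⟨hjx, hcl⟩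
    refine ⟨hjx, fun k hk hk' hkJ => ?_⟩
    rcases Finset.mem_insert.mp hkJ with rfl | hkJ
    · exact absurd (lt_of_lt_of_le hij hk) (lt_irrefl _)
    · exact hcl k hk hk' hkJ

lemma SN1' (hij : i < j) : n1 m (insert j J) i = n1 m J i := by
  unfold n1
  congr 1
  apply Finset.filter_congr
  intro x _
  constructor
  · rintro ⟨hxi, hcl⟩
    exact ⟨hxi, fun k hk hk' hkJ => hcl k hk hk' (Finset.mem_insert_of_mem hkJ)⟩
  · rintro ⟨hxi, hcl⟩
    refine ⟨hxi, fun k hk hk' hkJ => ?_⟩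
    rcases Finset.mem_insert.mp hkJ with rfl | hkJ
    · exact absurd (lt_of_le_of_lt hk' hij) (lt_irrefl _)
    · exact hcl k hk hk' hkJ

lemma Snu (hij : i < j) : nu m (insert j J) i = nu m J i := by
  unfold nu
  congr 1
  apply Finset.filter_congr
  intro x _
  constructor
  · rintro ⟨hxi, hx⟩
    exact ⟨hxi, fun hk => hx (Finset.mem_insert_of_mem hk)⟩
  · rintro ⟨hxi, hx⟩
    refine ⟨hxi, fun hk => ?_⟩
    rcases Finset.mem_insert.mp hk with rfl | hk'
    · exact absurd (lt_trans hxi hij) (lt_irrefl _)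
    · exact hx hk'

lemma D1 (hw : ∃ w, i < w ∧ w < j ∧ w ∈ J) : n1 m (insert i J) j = n1 m J j := by
  obtain ⟨w, hiw, hwj, hwJ⟩ := hw
  unfold n1
  congr 1
  apply Finset.filter_congr
  intro x _
  constructor
  · rintro ⟨hxj, hcl⟩
    exact ⟨hxj, fun k hk hk' hkJ => hcl k hk hk' (Finset.mem_insert_of_mem hkJ)⟩
  · rintro ⟨hxj, hcl⟩
    refine ⟨hxj, fun k hk hk' hkJ => ?_⟩
    rcases Finset.mem_insert.mp hkJ with rfl | hkJ
    · -- k = i; then x ≤ i so w ∈ [x, j] contradicting hcl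
      exact hcl w (le_trans hk (le_of_lt hiw)) (le_of_lt hwj) hwJ
    · exact hcl k hk hk' hkJ

lemma D5 (hw : ∃ w, i < w ∧ w < j ∧ w ∈ J) : n2 m (insert j J) i = n2 m J i := by
  obtain ⟨w, hiw, hwj, hwJ⟩ := hw
  unfold n2
  congr 1
  apply Finset.filter_congr
  intro x _
  constructor
  · rintro ⟨hix, hcl⟩
    exact ⟨hix, fun k hk hk' hkJ => hcl k hk hk' (Finset.mem_insert_of_mem hkJ)⟩
  · rintro ⟨hix, hcl⟩
    refine ⟨hix, fun k hk hk' hkJ => ?_⟩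
    rcases Finset.mem_insert.mp hkJ with rfl | hkJ
    · exact hcl w (le_of_lt hiw) (le_trans (le_of_lt hwj) hk') hwJ
    · exact hcl k hk hk' hkJ

end MoreRun

lemma incY_one (a m : ℕ) {J : Finset (Fin m)} {i j : Fin m} (hij : i < j)
    (hiJ : i ∉ J) (hjJ : j ∉ J) :
    incY a m J i * incY a m (insert i J) j + incY a m J j * incY a m (insert j J) i = 0 := by
  by_cases hrun : ∀ k, i ≤ k → k ≤ j → k ∉ J
  · -- same run
    set u := (mid i j).card with hu
    set ν := nu m J i with hν
    set P := n1Y a m J i with hP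
    set v := n2Y m J j with hv
    have hn2Yi : n2Y m J i = u + v + 1 := by
      unfold v
      unfold n2Y
      rw [SR4 hij hrun, if_congr (SB2 (le_of_lt hij) hrun) rfl rfl]
      split_ifs <;> omega
    have hn1Yj : n1Y a m J j = P + u + 1 := by
      unfold P
      unfold n1Y
      rw [SR3 hij hrun, if_congr (SB1 (le_of_lt hij) hrun) rfl rfl]
      split_ifs <;> omega
    have hnuj : nu m J j = ν + u + 1 := by
      rw [SR5 hij hiJ hrun, hν, hu]; omega
    have hnuins : nu m (insert i J) j = ν + u := by
      have h6 := SR6 hij hiJ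
      omega
    have hn1Yins : n1Y a m (insert i J) j = u := by
      unfold n1Y
      rw [SR1 hij hrun, if_neg (SB3 (le_of_lt hij)), add_zero, hu]
    have hn2Yins : n2Y m (insert i J) j = v := by
      unfold v
      unfold n2Y
      rw [SN2 hij, if_congr (SB6 hij) rfl rfl]
    have hn1Yjins : n1Y a m (insert j J) i = P := by
      unfold P
      unfold n1Y
      rw [SN1' hij, if_congr (SB5 hij) rfl rfl]
    have hn2Yjins : n2Y m (insert j J) i = u := by
      unfold n2Y
      rw [SR2 hij hrun, if_neg (SB4 (le_of_lt hij)), add_zero, hu]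
    have h1 : incY a m J i = (-1) ^ ν * Amag P (u + v + 1) := by
      rw [incY, ← hν, ← hP, hn2Yi]
    have h2 : incY a m (insert i J) j = ((-1) ^ ν * (-1) ^ u) * Amag u v := by
      rw [incY, hnuins, hn1Yins, hn2Yins, pow_add]
    have h3 : incY a m J j = -(((-1) ^ ν * (-1) ^ u) * Amag (P + u + 1) v) := by
      rw [incY, hnuj, hn1Yj, ← hv, pow_add, pow_add, pow_one]
      ring
    have h4 : incY a m (insert j J) i = (-1) ^ ν * Amag P u := by
      rw [incY, Snu hij, ← hν, hn1Yjins, hn2Yjins]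
    rw [h1, h2, h3, h4]
    linear_combination ((-1 : ℤ) ^ ν * ((-1) ^ ν * (-1) ^ u)) * Amag_key P u v
  · -- different runs
    push_neg at hrun
    obtain ⟨w, hiw, hwj, hwJ⟩ := hrun
    have hiw' : i < w := lt_of_le_of_ne hiw (fun h => hiJ (h ▸ hwJ))
    have hwj' : w < j := lt_of_le_of_ne hwj (fun h => hjJ (h ▸ hwJ))
    have hw : ∃ w, i < w ∧ w < j ∧ w ∈ J := ⟨w, hiw', hwj', hwJ⟩
    have hbotj : ¬ botFree m J j := fun h => h w hwj hwJ
    have htopi : ¬ topFree m J i := fun h => h w hiw hwJ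
    have h1 : incY a m (insert j J) i = incY a m J i := by
      rw [incY, incY, Snu hij]
      congr 2
      · unfold n1Y
        rw [SN1' hij, if_congr (SB5 hij) rfl rfl]
      · unfold n2Y
        rw [D5 hw, if_neg (fun h => htopi (topFree_mono h)), if_neg htopi]
    have h2 : incY a m (insert i J) j = (-1) ^ (nu m (insert i J) j) *
        Amag (n1Y a m J j) (n2Y m J j) := by
      rw [incY]
      congr 2
      · unfold n1Y
        rw [D1 hw, if_neg (fun h => hbotj (botFree_mono h)), if_neg hbotj]
      · unfold n2Y
        rw [SN2 hij, if_congr (SB6 hij) rfl rfl]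
    have h3 : incY a m J j = -((-1) ^ (nu m (insert i J) j) *
        Amag (n1Y a m J j) (n2Y m J j)) := by
      rw [incY, SR6 hij hiJ, pow_add, pow_one]
      ring
    rw [h1, h2, h3]
    ring

lemma incY_anticomm (a m : ℕ) {J : Finset (Fin m)} {i j : Fin m}
    (hiJ : i ∉ J) (hjJ : j ∉ J) (hij : i ≠ j) :
    incY a m J i * incY a m (insert i J) j + incY a m J j * incY a m (insert j J) i = 0 := by
  rcases lt_or_gt_of_ne hij with h | h
  · exact incY_one a m h hiJ hjJ
  · have := incY_one a m h hjJ hiJ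
    linarith


/-- totalization of a cochain to all finsets -/
def toFunc (R : Type) [CommRing R] (m q : ℕ) (f : Coch R m q) : Finset (Fin m) → R :=
  fun K => if h : K.card + q = m then f ⟨K, h⟩ else 0

lemma toFunc_eq (R : Type) [CommRing R] (m q : ℕ) (f : Coch R m q)
    (K : Finset (Fin m)) (h : K.card + q = m) : toFunc R m q f K = f ⟨K, h⟩ := by
  rw [toFunc, dif_pos h]

lemma card_insert_compl {m q : ℕ} {J : {J : Finset (Fin m) // J.card + (q + 1) = m}}
    {i : Fin m} (hi : i ∈ J.1ᶜ) : (insert i J.1).card + q = m := by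
  rw [Finset.card_insert_of_notMem (Finset.mem_compl.mp hi)]
  have := J.2; omega

lemma deltaFun_eq (R : Type) [CommRing R] (m : ℕ) (inc : Finset (Fin m) → Fin m → ℤ)
    (q : ℕ) (f : Coch R m q) (J : {J : Finset (Fin m) // J.card + (q + 1) = m}) :
    deltaFun R m inc q f J
      = ∑ i ∈ Finset.univ, if i ∈ J.1ᶜ
          then (inc J.1 i : R) * toFunc R m q f (insert i J.1) else 0 := by
  have h1 : ∀ x : {y // y ∈ J.1ᶜ}, x ∈ J.1ᶜ.attach →
      (inc J.1 x.1 : R) * f (insElt m q J x)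
        = (fun i : Fin m => if i ∈ J.1ᶜ then (inc J.1 i : R) * toFunc R m q f (insert i J.1)
            else 0) x.1 := by
    intro x _
    show _ = if x.1 ∈ J.1ᶜ then (inc J.1 x.1 : R) * toFunc R m q f (insert x.1 J.1) else 0
    rw [if_pos x.2, toFunc_eq R m q f _ (card_insert_compl x.2)]
    rfl
  unfold deltaFun
  calc (∑ i ∈ J.1ᶜ.attach, (inc J.1 i.1 : R) * f (insElt m q J i))
      = ∑ x ∈ J.1ᶜ.attach, (fun i : Fin m => if i ∈ J.1ᶜ
          then (inc J.1 i : R) * toFunc R m q f (insert i J.1) else 0) x.1 :=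
        Finset.sum_congr rfl h1
    _ = ∑ i ∈ J.1ᶜ, (fun i : Fin m => if i ∈ J.1ᶜ
          then (inc J.1 i : R) * toFunc R m q f (insert i J.1) else 0) i :=
        Finset.sum_attach (J.1ᶜ) (fun i : Fin m => if i ∈ J.1ᶜ
          then (inc J.1 i : R) * toFunc R m q f (insert i J.1) else 0)
    _ = ∑ i ∈ Finset.univ, (if i ∈ J.1ᶜ
          then (inc J.1 i : R) * toFunc R m q f (insert i J.1) else 0) :=
        Finset.sum_subset (Finset.subset_univ _) (fun x _ hx => if_neg hx)

lemma deltaFun_deltaFun (R : Type) [CommRing R] (m : ℕ)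
    (inc : Finset (Fin m) → Fin m → ℤ)
    (hanti : ∀ (J : Finset (Fin m)) (i j : Fin m), i ∉ J → j ∉ J → i ≠ j →
      inc J i * inc (insert i J) j + inc J j * inc (insert j J) i = 0)
    (q : ℕ) (f : Coch R m q) :
    deltaFun R m inc (q + 1) (deltaFun R m inc q f) = 0 := by
  funext J
  rw [deltaFun_eq]
  set A : Fin m × Fin m → R := fun p =>
    if p.1 ∈ J.1ᶜ then
      (if p.2 ∈ (insert p.1 J.1)ᶜ then
        (inc J.1 p.1 : R) * ((inc (insert p.1 J.1) p.2 : R)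
          * toFunc R m q f (insert p.2 (insert p.1 J.1)))
       else 0)
    else 0 with hA
  have step : ∀ i : Fin m,
      (if i ∈ J.1ᶜ then (inc J.1 i : R)
          * toFunc R m (q+1) (deltaFun R m inc q f) (insert i J.1) else 0)
        = ∑ j ∈ Finset.univ, A (i, j) := by
    intro i
    by_cases hi : i ∈ J.1ᶜ
    · rw [if_pos hi, toFunc_eq R m (q+1) _ _ (card_insert_compl hi),
        deltaFun_eq R m inc q f ⟨insert i J.1, card_insert_compl hi⟩, Finset.mul_sum]
      refine Finset.sum_congr rfl (fun j _ => ?_)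
      simp only [hA, mul_ite, mul_zero, if_pos hi]
    · rw [if_neg hi]
      refine (Finset.sum_eq_zero (fun j _ => ?_)).symm
      simp only [hA]; exact if_neg hi
  rw [Finset.sum_congr rfl (fun i _ => step i), ← Finset.sum_product']
  have hdiag : ∀ i : Fin m, A (i, i) = 0 := by
    intro i
    simp only [hA]
    by_cases hi : i ∈ J.1ᶜ
    · rw [if_pos hi, if_neg (by simp : ¬ (i ∈ (insert i J.1)ᶜ))]
    · exact if_neg hi
  have hswap : ∀ p : Fin m × Fin m, A p + A (p.2, p.1) = 0 := by
    rintro ⟨i, j⟩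
    by_cases hi : i ∈ J.1ᶜ
    · by_cases hj : j ∈ J.1ᶜ
      · rcases eq_or_ne i j with rfl | hij
        · rw [hdiag]; ring
        · have hiJ : i ∉ J.1 := Finset.mem_compl.mp hi
          have hjJ : j ∉ J.1 := Finset.mem_compl.mp hj
          have hji : j ∈ (insert i J.1)ᶜ := by
            rw [Finset.mem_compl, Finset.mem_insert]
            push_neg
            exact ⟨hij.symm, hjJ⟩
          have hij' : i ∈ (insert j J.1)ᶜ := by
            rw [Finset.mem_compl, Finset.mem_insert]
            push_neg
            exact ⟨hij, hiJ⟩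
          simp only [hA, if_pos hi, if_pos hj, if_pos hji, if_pos hij']
          have hcast := congrArg (fun z : ℤ => (z : R)) (hanti J.1 i j hiJ hjJ hij)
          push_cast at hcast
          have hT : insert j (insert i J.1) = insert i (insert j J.1) :=
            Finset.insert_comm j i J.1
          rw [hT]
          linear_combination (toFunc R m q f (insert i (insert j J.1))) * hcast
      · have hjJ : j ∈ J.1 := by
          by_contra h
          exact hj (Finset.mem_compl.mpr h)
        have h2 : ¬ (j ∈ (insert i J.1)ᶜ) :=
          fun hc => (Finset.mem_compl.mp hc) (Finset.mem_insert_of_mem hjJ)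
        simp only [hA, if_pos hi, if_neg h2, if_neg hj, add_zero]
    · have hiJ : i ∈ J.1 := by
        by_contra h
        exact hi (Finset.mem_compl.mpr h)
      have h2 : ¬ (i ∈ (insert j J.1)ᶜ) :=
        fun hc => (Finset.mem_compl.mp hc) (Finset.mem_insert_of_mem hiJ)
      by_cases hj : j ∈ J.1ᶜ
      · simp only [hA, if_neg hi, if_pos hj, if_neg h2, zero_add]
      · simp only [hA, if_neg hi, if_neg hj, add_zero]
  refine Finset.sum_ninvolution (fun p => (p.2, p.1)) hswap (fun p hne hgp => hne ?_)
    (fun p => Finset.mem_product.mpr ⟨Finset.mem_univ _, Finset.mem_univ _⟩) (fun p => rfl)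
  obtain ⟨x, y⟩ := p
  obtain ⟨h1, h2⟩ := Prod.mk.inj hgp
  rw [h1]
  exact hdiag x

lemma mem_image_castSucc {l : ℕ} (J : Finset (Fin l)) (k : Fin l) :
    k.castSucc ∈ J.image Fin.castSucc ↔ k ∈ J := by
  constructor
  · intro h
    obtain ⟨a, ha, hak⟩ := Finset.mem_image.mp h
    rwa [← Fin.castSucc_inj.mp hak]
  · exact Finset.mem_image_of_mem _

lemma last_not_mem_image {l : ℕ} (J : Finset (Fin l)) :
    Fin.last l ∉ J.image Fin.castSucc := by
  intro h
  obtain ⟨a, _, hak⟩ := Finset.mem_image.mp h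
  exact absurd hak (Fin.castSucc_lt_last a).ne

lemma n1_castSucc (l : ℕ) (J : Finset (Fin l)) (i : Fin l) :
    n1 (l+1) (J.image Fin.castSucc) i.castSucc = n1 l J i := by
  unfold n1
  rw [Finset.card_filter, Finset.card_filter, Fin.sum_univ_castSucc]
  rw [if_neg (by rintro ⟨h, -⟩; exact absurd h (asymm (Fin.castSucc_lt_last i))), add_zero]
  apply Finset.sum_congr rfl
  intro x _
  apply if_congr _ rfl rfl
  constructor
  · rintro ⟨h1, h2⟩
    refine ⟨Fin.castSucc_lt_castSucc_iff.mp h1, fun k hxk hki hkJ => ?_⟩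
    exact h2 k.castSucc (Fin.castSucc_le_castSucc_iff.mpr hxk)
      (Fin.castSucc_le_castSucc_iff.mpr hki) (Finset.mem_image_of_mem _ hkJ)
  · rintro ⟨h1, h2⟩
    refine ⟨Fin.castSucc_lt_castSucc_iff.mpr h1, fun k hxk hki hkim => ?_⟩
    have hkl : k.val < l := lt_of_le_of_lt (by simpa [Fin.le_def] using hki) i.isLt
    have hk : k = (⟨k.val, hkl⟩ : Fin l).castSucc := by
      apply Fin.ext; rfl
    rw [hk] at hkim
    refine h2 ⟨k.val, hkl⟩ ?_ ?_ ((mem_image_castSucc J _).mp hkim)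
    · simpa [Fin.le_def] using hxk
    · simpa [Fin.le_def] using hki

lemma nu_castSucc (l : ℕ) (J : Finset (Fin l)) (i : Fin l) :
    nu (l+1) (J.image Fin.castSucc) i.castSucc = nu l J i := by
  unfold nu
  rw [Finset.card_filter, Finset.card_filter, Fin.sum_univ_castSucc]
  rw [if_neg (by rintro ⟨h, -⟩; exact absurd h (asymm (Fin.castSucc_lt_last i))), add_zero]
  apply Finset.sum_congr rfl
  intro x _
  apply if_congr _ rfl rfl
  rw [Fin.castSucc_lt_castSucc_iff, mem_image_castSucc]

lemma n2_castSucc (l : ℕ) (J : Finset (Fin l)) (i : Fin l) :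
    n2 (l+1) (J.image Fin.castSucc) i.castSucc = n2Y l J i := by
  unfold n2Y n2
  rw [Finset.card_filter, Finset.card_filter, Fin.sum_univ_castSucc]
  congr 1
  · apply Finset.sum_congr rfl
    intro x _
    apply if_congr _ rfl rfl
    constructor
    · rintro ⟨h1, h2⟩
      refine ⟨Fin.castSucc_lt_castSucc_iff.mp h1, fun k hik hkx hkJ => ?_⟩
      exact h2 k.castSucc (Fin.castSucc_le_castSucc_iff.mpr hik)
        (Fin.castSucc_le_castSucc_iff.mpr hkx) (Finset.mem_image_of_mem _ hkJ)
    · rintro ⟨h1, h2⟩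
      refine ⟨Fin.castSucc_lt_castSucc_iff.mpr h1, fun k hik hkx hkim => ?_⟩
      have hkl : k.val < l := lt_of_le_of_lt (by simpa [Fin.le_def] using hkx) x.isLt
      have hk : k = (⟨k.val, hkl⟩ : Fin l).castSucc := by apply Fin.ext; rfl
      rw [hk] at hkim
      refine h2 ⟨k.val, hkl⟩ ?_ ?_ ((mem_image_castSucc J _).mp hkim)
      · simpa [Fin.le_def] using hik
      · simpa [Fin.le_def] using hkx
  · -- last summand equals the topFree correction
    by_cases ht : topFree l J i
    · rw [if_pos, if_pos ht]
      refine ⟨Fin.castSucc_lt_last i, fun k hik hkl hkim => ?_⟩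
      rcases eq_or_lt_of_le hkl with rfl | hlt
      · exact last_not_mem_image J hkim
      · have hkl' : k.val < l := by simpa [Fin.lt_def] using hlt
        have hk : k = (⟨k.val, hkl'⟩ : Fin l).castSucc := by apply Fin.ext; rfl
        rw [hk] at hkim
        exact ht ⟨k.val, hkl'⟩ (by simpa [Fin.le_def] using hik)
          ((mem_image_castSucc J _).mp hkim)
    · rw [if_neg, if_neg ht]
      rintro ⟨-, h2⟩
      apply ht
      intro k hik hkJ
      exact h2 k.castSucc (Fin.castSucc_le_castSucc_iff.mpr hik)
        (le_of_lt (Fin.castSucc_lt_last k)) (Finset.mem_image_of_mem _ hkJ)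

lemma incA_eq (l : ℕ) (J : Finset (Fin l)) (i : Fin l) :
    incA l J i = (-1) ^ (nu l J i) * Amag (n1 l J i) (n2 l J i) := by
  rw [incA, Amag]
  split_ifs with h
  · ring
  · ring

lemma incL_eq_incY (l : ℕ) (J : Finset (Fin l)) (i : Fin l) :
    incL l J i = incY 0 l J i := by
  rw [incL, incA_eq, incY, n1_castSucc, n2_castSucc, nu_castSucc,
    show n1Y 0 l J i = n1 l J i from by simp [n1Y]]

-- PART5

section SuccTransfer
variable {m : ℕ} {S : Finset (Fin (m+1))} {J' : Finset (Fin m)} {i' : Fin m}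

/-- peel a positive element of `Fin (m+1)` -/
lemma fin_succ_peel {k : Fin (m+1)} (hk : k ≠ 0) :
    ∃ k' : Fin m, k = k'.succ := by
  have hv : k.val ≠ 0 := fun h => hk (Fin.ext h)
  have hlt : k.val - 1 < m := by omega
  exact ⟨⟨k.val - 1, hlt⟩, Fin.ext (by simp [Fin.val_succ]; omega)⟩

lemma succ_n2 (hS : ∀ k : Fin m, k.succ ∈ S ↔ k ∈ J') :
    n2 (m+1) S i'.succ = n2 m J' i' := by
  unfold n2
  rw [Finset.card_filter, Finset.card_filter, Fin.sum_univ_succ]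
  rw [if_neg (by rintro ⟨h, -⟩; exact absurd h (not_lt_of_ge (le_of_lt (Fin.succ_pos i')))),
    zero_add]
  apply Finset.sum_congr rfl
  intro x _
  apply if_congr _ rfl rfl
  constructor
  · rintro ⟨h1, h2⟩
    refine ⟨Fin.succ_lt_succ_iff.mp h1, fun k hik hkx hkJ => ?_⟩
    exact h2 k.succ (Fin.succ_le_succ_iff.mpr hik) (Fin.succ_le_succ_iff.mpr hkx)
      ((hS k).mpr hkJ)
  · rintro ⟨h1, h2⟩
    refine ⟨Fin.succ_lt_succ_iff.mpr h1, fun k hik hkx hkS => ?_⟩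
    have hk0 : k ≠ 0 := by
      intro h
      rw [h] at hik
      exact absurd hik (not_le_of_gt (Fin.succ_pos i'))
    obtain ⟨k', rfl⟩ := fin_succ_peel hk0
    exact h2 k' (Fin.succ_le_succ_iff.mp hik) (Fin.succ_le_succ_iff.mp hkx) ((hS k').mp hkS)

lemma succ_topFree (hS : ∀ k : Fin m, k.succ ∈ S ↔ k ∈ J') :
    topFree (m+1) S i'.succ ↔ topFree m J' i' := by
  constructor
  · intro h k hik hkJ
    exact h k.succ (Fin.succ_le_succ_iff.mpr hik) ((hS k).mpr hkJ)
  · intro h k hik hkS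
    have hk0 : k ≠ 0 := by
      intro he
      rw [he] at hik
      exact absurd hik (not_le_of_gt (Fin.succ_pos i'))
    obtain ⟨k', rfl⟩ := fin_succ_peel hk0
    exact h k' (Fin.succ_le_succ_iff.mp hik) ((hS k').mp hkS)

lemma succ_n1_mem (hS : ∀ k : Fin m, k.succ ∈ S ↔ k ∈ J') (h0 : (0 : Fin (m+1)) ∈ S) :
    n1 (m+1) S i'.succ = n1 m J' i' := by
  unfold n1
  rw [Finset.card_filter, Finset.card_filter, Fin.sum_univ_succ]
  rw [if_neg (by rintro ⟨-, h⟩; exact h 0 (le_refl 0) (le_of_lt (Fin.succ_pos i')) h0),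
    zero_add]
  apply Finset.sum_congr rfl
  intro x _
  apply if_congr _ rfl rfl
  constructor
  · rintro ⟨h1, h2⟩
    refine ⟨Fin.succ_lt_succ_iff.mp h1, fun k hxk hki hkJ => ?_⟩
    exact h2 k.succ (Fin.succ_le_succ_iff.mpr hxk) (Fin.succ_le_succ_iff.mpr hki)
      ((hS k).mpr hkJ)
  · rintro ⟨h1, h2⟩
    refine ⟨Fin.succ_lt_succ_iff.mpr h1, fun k hxk hki hkS => ?_⟩
    have hk0 : k ≠ 0 := by
      intro he
      rw [he] at hxk
      exact absurd hxk (not_le_of_gt (Fin.succ_pos x))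
    obtain ⟨k', rfl⟩ := fin_succ_peel hk0
    exact h2 k' (Fin.succ_le_succ_iff.mp hxk) (Fin.succ_le_succ_iff.mp hki) ((hS k').mp hkS)

lemma succ_botFree_not_mem (hS : ∀ k : Fin m, k.succ ∈ S ↔ k ∈ J')
    (h0 : (0 : Fin (m+1)) ∉ S) :
    botFree (m+1) S i'.succ ↔ botFree m J' i' := by
  constructor
  · intro h k hki hkJ
    exact h k.succ (Fin.succ_le_succ_iff.mpr hki) ((hS k).mpr hkJ)
  · intro h k hki hkS
    rcases eq_or_ne k 0 with rfl | hk0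
    · exact h0 hkS
    · obtain ⟨k', rfl⟩ := fin_succ_peel hk0
      exact h k' (Fin.succ_le_succ_iff.mp hki) ((hS k').mp hkS)

lemma succ_n1_not_mem (hS : ∀ k : Fin m, k.succ ∈ S ↔ k ∈ J')
    (h0 : (0 : Fin (m+1)) ∉ S) :
    n1 (m+1) S i'.succ = n1 m J' i' + (if botFree m J' i' then 1 else 0) := by
  unfold n1
  rw [Finset.card_filter, Finset.card_filter, Fin.sum_univ_succ]
  have hzero : ((0 : Fin (m+1)) < i'.succ ∧
      ∀ k : Fin (m+1), 0 ≤ k → k ≤ i'.succ → k ∉ S) ↔ botFree m J' i' := by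
    constructor
    · rintro ⟨-, h⟩
      intro k hki hkJ
      exact h k.succ (Fin.zero_le _) (Fin.succ_le_succ_iff.mpr hki) ((hS k).mpr hkJ)
    · intro h
      refine ⟨Fin.succ_pos i', fun k _ hki hkS => ?_⟩
      rcases eq_or_ne k 0 with rfl | hk0
      · exact h0 hkS
      · obtain ⟨k', rfl⟩ := fin_succ_peel hk0
        exact h k' (Fin.succ_le_succ_iff.mp hki) ((hS k').mp hkS)
  rw [if_congr hzero rfl rfl, add_comm (if botFree m J' i' then 1 else 0)]
  congr 1
  apply Finset.sum_congr rfl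
  intro x _
  apply if_congr _ rfl rfl
  constructor
  · rintro ⟨h1, h2⟩
    refine ⟨Fin.succ_lt_succ_iff.mp h1, fun k hxk hki hkJ => ?_⟩
    exact h2 k.succ (Fin.succ_le_succ_iff.mpr hxk) (Fin.succ_le_succ_iff.mpr hki)
      ((hS k).mpr hkJ)
  · rintro ⟨h1, h2⟩
    refine ⟨Fin.succ_lt_succ_iff.mpr h1, fun k hxk hki hkS => ?_⟩
    have hk0 : k ≠ 0 := by
      intro he
      rw [he] at hxk
      exact absurd hxk (not_le_of_gt (Fin.succ_pos x))
    obtain ⟨k', rfl⟩ := fin_succ_peel hk0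
    exact h2 k' (Fin.succ_le_succ_iff.mp hxk) (Fin.succ_le_succ_iff.mp hki) ((hS k').mp hkS)

lemma succ_nu (hS : ∀ k : Fin m, k.succ ∈ S ↔ k ∈ J') :
    nu (m+1) S i'.succ = nu m J' i' + (if (0 : Fin (m+1)) ∈ S then 0 else 1) := by
  unfold nu
  rw [Finset.card_filter, Finset.card_filter, Fin.sum_univ_succ]
  have h0iff : ((0 : Fin (m+1)) < i'.succ ∧ (0 : Fin (m+1)) ∉ S)
      ↔ (0 : Fin (m+1)) ∉ S := by
    constructor
    · exact fun h => h.2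
    · exact fun h => ⟨Fin.succ_pos i', h⟩
  rw [if_congr h0iff rfl rfl]
  have : (∑ x : Fin m, if x.succ < i'.succ ∧ x.succ ∉ S then 1 else 0)
      = ∑ x : Fin m, if x < i' ∧ x ∉ J' then 1 else 0 := by
    apply Finset.sum_congr rfl
    intro x _
    apply if_congr _ rfl rfl
    rw [Fin.succ_lt_succ_iff]
    constructor
    · rintro ⟨h1, h2⟩
      exact ⟨h1, fun h => h2 ((hS x).mpr h)⟩
    · rintro ⟨h1, h2⟩
      exact ⟨h1, fun h => h2 ((hS x).mp h)⟩
  rw [this]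
  by_cases h0 : (0 : Fin (m+1)) ∈ S
  · rw [if_neg (fun h => h h0), if_pos h0]
    omega
  · rw [if_pos h0, if_neg h0]
    omega

end SuccTransfer

section GrowShrink
variable {m : ℕ}

lemma hS_grow (J' : Finset (Fin m)) (k : Fin m) :
    k.succ ∈ J'.image Fin.succ ↔ k ∈ J' := by
  simp [Finset.mem_image, Fin.succ_inj]

lemma hS_insert (J' : Finset (Fin m)) (k : Fin m) :
    k.succ ∈ insert 0 (J'.image Fin.succ) ↔ k ∈ J' := by
  rw [Finset.mem_insert]
  simp [Fin.succ_ne_zero, Finset.mem_image, Fin.succ_inj]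

lemma zero_not_mem_grow (J' : Finset (Fin m)) :
    (0 : Fin (m+1)) ∉ J'.image Fin.succ := by
  simp only [Finset.mem_image]
  rintro ⟨a, -, ha⟩
  exact Fin.succ_ne_zero a ha

lemma G1 (a : ℕ) {m : ℕ} (J' : Finset (Fin m)) (i' : Fin m) :
    incY a (m+1) (insert 0 (J'.image Fin.succ)) i'.succ = incY 0 m J' i' := by
  have hS := hS_insert J'
  have h0 : (0 : Fin (m+1)) ∈ insert 0 (J'.image Fin.succ) := Finset.mem_insert_self _ _
  unfold incY n1Y n2Y
  rw [succ_n2 hS, succ_nu hS, succ_n1_mem hS h0, if_pos h0,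
    if_neg (show ¬ botFree (m+1) (insert 0 (J'.image Fin.succ)) i'.succ from
      fun h => h 0 (Fin.zero_le _) h0),
    if_congr (succ_topFree hS) rfl rfl, ite_self, add_zero, add_zero]

lemma G2 (a : ℕ) {m : ℕ} (J' : Finset (Fin m)) (i' : Fin m) :
    incY a (m+1) (J'.image Fin.succ) i'.succ = - incY (a+1) m J' i' := by
  have hS := hS_grow J'
  have h0 := zero_not_mem_grow J'
  unfold incY n1Y n2Y
  rw [succ_n2 hS, succ_nu hS, succ_n1_not_mem hS h0, if_neg h0,
    if_congr (succ_botFree_not_mem hS h0) rfl rfl,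
    if_congr (succ_topFree hS) rfl rfl]
  have hbf : n1 m J' i' + (if botFree m J' i' then 1 else 0)
        + (if botFree m J' i' then a else 0)
      = n1 m J' i' + (if botFree m J' i' then a + 1 else 0) := by
    split_ifs <;> omega
  rw [hbf, pow_succ]
  ring

def shrink (S : Finset (Fin (m+1))) : Finset (Fin m) :=
  Finset.univ.filter (fun x => x.succ ∈ S)

lemma card_image_succ (J' : Finset (Fin m)) : (J'.image Fin.succ).card = J'.card :=
  Finset.card_image_of_injective _ (Fin.succ_injective m)

lemma shrink_image (J' : Finset (Fin m)) : shrink (J'.image Fin.succ) = J' := by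
  ext x
  simp [shrink, Finset.mem_image, Fin.succ_inj]

lemma shrink_insert0 (J' : Finset (Fin m)) :
    shrink (insert 0 (J'.image Fin.succ)) = J' := by
  ext x
  simp [shrink, Finset.mem_insert, Fin.succ_ne_zero, Finset.mem_image, Fin.succ_inj]

lemma grow_shrink {S : Finset (Fin (m+1))} (h0 : (0 : Fin (m+1)) ∉ S) :
    (shrink S).image Fin.succ = S := by
  ext y
  simp only [Finset.mem_image, shrink, Finset.mem_filter, Finset.mem_univ, true_and]
  constructor
  · rintro ⟨x, hx, rfl⟩
    exact hx
  · intro hy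
    have hy0 : y ≠ 0 := fun h => h0 (h ▸ hy)
    obtain ⟨y', rfl⟩ := fin_succ_peel hy0
    exact ⟨y', hy, rfl⟩

lemma insert_grow_shrink {S : Finset (Fin (m+1))} (h0 : (0 : Fin (m+1)) ∈ S) :
    insert 0 ((shrink S).image Fin.succ) = S := by
  ext y
  simp only [Finset.mem_insert, Finset.mem_image, shrink, Finset.mem_filter,
    Finset.mem_univ, true_and]
  constructor
  · rintro (rfl | ⟨x, hx, rfl⟩)
    · exact h0
    · exact hx
  · intro hy
    rcases eq_or_ne y 0 with rfl | hy0
    · exact Or.inl rfl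
    · obtain ⟨y', rfl⟩ := fin_succ_peel hy0
      exact Or.inr ⟨y', hy, rfl⟩

lemma card_shrink_mem {S : Finset (Fin (m+1))} (h0 : (0 : Fin (m+1)) ∈ S) :
    (shrink S).card + 1 = S.card := by
  conv_rhs => rw [← insert_grow_shrink h0]
  rw [Finset.card_insert_of_notMem (zero_not_mem_grow _), card_image_succ]

lemma card_shrink_not_mem {S : Finset (Fin (m+1))} (h0 : (0 : Fin (m+1)) ∉ S) :
    (shrink S).card = S.card := by
  conv_rhs => rw [← grow_shrink h0]
  rw [card_image_succ]

end GrowShrink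

section Transfer
variable (R : Type) [CommRing R] (m q : ℕ)

def resQ (f : Coch R (m+1) q) : Coch R m q :=
  fun J' => f ⟨insert 0 (J'.1.image Fin.succ), by
    rw [Finset.card_insert_of_notMem (zero_not_mem_grow _), card_image_succ]
    have := J'.2; omega⟩

def resS (f : Coch R (m+1) (q+1)) : Coch R m q :=
  fun J' => f ⟨J'.1.image Fin.succ, by rw [card_image_succ]; have := J'.2; omega⟩

def extQ (g : Coch R m q) : Coch R (m+1) q :=
  fun J => if h : (0 : Fin (m+1)) ∈ J.1 then
      g ⟨shrink J.1, by have := card_shrink_mem h; have := J.2; omega⟩ else 0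

def extS (g : Coch R m q) : Coch R (m+1) (q+1) :=
  fun J => if h : (0 : Fin (m+1)) ∈ J.1 then 0
    else g ⟨shrink J.1, by have := card_shrink_not_mem h; have := J.2; omega⟩

lemma toFunc_resQ (f : Coch R (m+1) q) (K : Finset (Fin m)) (h : K.card + q = m) :
    toFunc R m q (resQ R m q f) K
      = toFunc R (m+1) q f (insert 0 (K.image Fin.succ)) := by
  have hbig : (insert 0 (K.image Fin.succ)).card + q = m + 1 := by
    rw [Finset.card_insert_of_notMem (zero_not_mem_grow _), card_image_succ]; omega
  rw [toFunc_eq R m q _ K h, toFunc_eq R (m+1) q f _ hbig]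
  rfl

lemma toFunc_resS (f : Coch R (m+1) (q+1)) (K : Finset (Fin m)) (h : K.card + q = m) :
    toFunc R m q (resS R m q f) K = toFunc R (m+1) (q+1) f (K.image Fin.succ) := by
  have hbig : (K.image Fin.succ).card + (q+1) = m + 1 := by
    rw [card_image_succ]; omega
  rw [toFunc_eq R m q _ K h, toFunc_eq R (m+1) (q+1) f _ hbig]
  rfl

lemma chainQ (a : ℕ) (f : Coch R (m+1) q) :
    resQ R m (q+1) (deltaFun R (m+1) (incY a (m+1)) q f)
      = deltaFun R m (incY 0 m) q (resQ R m q f) := by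
  funext J'
  have hc : (insert 0 (J'.1.image Fin.succ)).card + (q+1) = m + 1 := by
    rw [Finset.card_insert_of_notMem (zero_not_mem_grow _), card_image_succ]
    have := J'.2; omega
  show deltaFun R (m+1) (incY a (m+1)) q f ⟨insert 0 (J'.1.image Fin.succ), hc⟩ = _
  rw [deltaFun_eq R (m+1) (incY a (m+1)) q f ⟨insert 0 (J'.1.image Fin.succ), hc⟩,
    deltaFun_eq R m (incY 0 m) q (resQ R m q f) J', Fin.sum_univ_succ,
    if_neg (show (0 : Fin (m+1)) ∉ (insert 0 (J'.1.image Fin.succ))ᶜ from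
      fun h => (Finset.mem_compl.mp h) (Finset.mem_insert_self _ _)), zero_add]
  apply Finset.sum_congr rfl
  intro i' _
  by_cases hi' : i' ∈ J'.1ᶜ
  · have hbig : i'.succ ∈ (insert 0 (J'.1.image Fin.succ))ᶜ := by
      rw [Finset.mem_compl]
      rw [hS_insert]
      exact Finset.mem_compl.mp hi'
    have hcard : (insert i' J'.1).card + q = m := by
      rw [Finset.card_insert_of_notMem (Finset.mem_compl.mp hi')]
      have := J'.2; omega
    rw [if_pos hbig, if_pos hi', G1, toFunc_resQ R m q f _ hcard, Finset.image_insert,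
      Finset.insert_comm]
  · have hbig : i'.succ ∉ (insert 0 (J'.1.image Fin.succ))ᶜ := by
      rw [Finset.mem_compl, hS_insert]
      intro h
      exact hi' (Finset.mem_compl.mpr h)
    rw [if_neg hbig, if_neg hi']

lemma chainS (a : ℕ) (f : Coch R (m+1) (q+1)) :
    resS R m (q+1) (deltaFun R (m+1) (incY a (m+1)) (q+1) f)
      = fun J' => (incY a (m+1) (J'.1.image Fin.succ) 0 : R) * resQ R m (q+1) f J'
          - deltaFun R m (incY (a+1) m) q (resS R m q f) J' := by
  funext J'
  have hc : (J'.1.image Fin.succ).card + (q+1+1) = m + 1 := by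
    rw [card_image_succ]; have := J'.2; omega
  show deltaFun R (m+1) (incY a (m+1)) (q+1) f ⟨J'.1.image Fin.succ, hc⟩ = _
  rw [deltaFun_eq R (m+1) (incY a (m+1)) (q+1) f ⟨J'.1.image Fin.succ, hc⟩,
    Fin.sum_univ_succ, deltaFun_eq R m (incY (a+1) m) q (resS R m q f) J']
  have h0 : (0 : Fin (m+1)) ∈ (J'.1.image Fin.succ)ᶜ :=
    Finset.mem_compl.mpr (zero_not_mem_grow _)
  have hres : toFunc R (m+1) (q+1) f (insert 0 (J'.1.image Fin.succ))
      = resQ R m (q+1) f J' := by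
    have hbig : (insert 0 (J'.1.image Fin.succ)).card + (q+1) = m + 1 := by
      rw [Finset.card_insert_of_notMem (zero_not_mem_grow _), card_image_succ]
      have := J'.2; omega
    rw [toFunc_eq R (m+1) (q+1) f _ hbig]
    rfl
  rw [if_pos h0, hres]
  have hterm : ∀ i' : Fin m,
      (if i'.succ ∈ (J'.1.image Fin.succ)ᶜ
        then (incY a (m+1) (J'.1.image Fin.succ) i'.succ : R)
          * toFunc R (m+1) (q+1) f (insert i'.succ (J'.1.image Fin.succ))
        else 0)
      = -(if i' ∈ J'.1ᶜ
          then (incY (a+1) m J'.1 i' : R) * toFunc R m q (resS R m q f) (insert i' J'.1)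
          else 0) := by
    intro i'
    by_cases hi' : i' ∈ J'.1ᶜ
    · have hbig : i'.succ ∈ (J'.1.image Fin.succ)ᶜ := by
        rw [Finset.mem_compl, hS_grow]
        exact Finset.mem_compl.mp hi'
      have hcard : (insert i' J'.1).card + q = m := by
        rw [Finset.card_insert_of_notMem (Finset.mem_compl.mp hi')]
        have := J'.2; omega
      rw [if_pos hbig, if_pos hi', G2, toFunc_resS R m q f _ hcard, Finset.image_insert]
      push_cast
      ring
    · have hbig : i'.succ ∉ (J'.1.image Fin.succ)ᶜ := by
        rw [Finset.mem_compl, hS_grow]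
        intro h
        exact hi' (Finset.mem_compl.mpr h)
      rw [if_neg hbig, if_neg hi', neg_zero]
  rw [Finset.sum_congr rfl (fun i' _ => hterm i'), Finset.sum_neg_distrib]
  ring

lemma resQ_extQ (g : Coch R m q) : resQ R m q (extQ R m q g) = g := by
  funext J'
  show extQ R m q g ⟨insert 0 (J'.1.image Fin.succ), _⟩ = g J'
  unfold extQ
  rw [dif_pos (Finset.mem_insert_self _ _)]
  congr 1
  exact Subtype.ext (shrink_insert0 J'.1)

lemma resQ_extS (g : Coch R m q) : resQ R m (q+1) (extS R m q g) = 0 := by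
  funext J'
  show extS R m q g ⟨insert 0 (J'.1.image Fin.succ), _⟩ = 0
  unfold extS
  rw [dif_pos (Finset.mem_insert_self _ _)]

lemma resS_extS (g : Coch R m q) : resS R m q (extS R m q g) = g := by
  funext J'
  show extS R m q g ⟨J'.1.image Fin.succ, _⟩ = g J'
  unfold extS
  rw [dif_neg (zero_not_mem_grow _)]
  congr 1
  exact Subtype.ext (shrink_image J'.1)

lemma f_eq_resQ {d : ℕ} (f : Coch R (m+1) d) (J : {J : Finset (Fin (m+1)) // J.card + d = m+1})
    (h0 : (0 : Fin (m+1)) ∈ J.1) :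
    f J = resQ R m d f ⟨shrink J.1, by
      have := card_shrink_mem h0; have := J.2; omega⟩ := by
  have hc2 : (insert 0 ((shrink J.1).image Fin.succ)).card + d = m + 1 := by
    rw [Finset.card_insert_of_notMem (zero_not_mem_grow _), card_image_succ]
    have := card_shrink_mem h0; have := J.2; omega
  have : resQ R m d f ⟨shrink J.1, by
      have := card_shrink_mem h0; have := J.2; omega⟩
      = f ⟨insert 0 ((shrink J.1).image Fin.succ), hc2⟩ := rfl
  rw [this]
  congr 1
  exact Subtype.ext (insert_grow_shrink h0).symm

lemma f_eq_resS (f : Coch R (m+1) (q+1)) (J : {J : Finset (Fin (m+1)) // J.card + (q+1) = m+1})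
    (h0 : (0 : Fin (m+1)) ∉ J.1) :
    f J = resS R m q f ⟨shrink J.1, by
      have := card_shrink_not_mem h0; have := J.2; omega⟩ := by
  have hc2 : ((shrink J.1).image Fin.succ).card + (q+1) = m + 1 := by
    rw [card_image_succ]
    have := card_shrink_not_mem h0; have := J.2; omega
  have : resS R m q f ⟨shrink J.1, by
      have := card_shrink_not_mem h0; have := J.2; omega⟩
      = f ⟨(shrink J.1).image Fin.succ, hc2⟩ := rfl
  rw [this]
  congr 1
  exact Subtype.ext (grow_shrink h0).symm

lemma recon (f : Coch R (m+1) (q+1)) (hQ : resQ R m (q+1) f = 0)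
    (hS : resS R m q f = 0) : f = 0 := by
  funext J
  by_cases h0 : (0 : Fin (m+1)) ∈ J.1
  · rw [f_eq_resQ R m f J h0, hQ]
    rfl
  · rw [f_eq_resS R m q f J h0, hS]
    rfl

end Transfer

section Exactness

lemma delta_apply (R : Type) [CommRing R] (l : ℕ) (inc : Finset (Fin l) → Fin l → ℤ)
    (q : ℕ) (f : Coch R l q) : delta R l inc q f = deltaFun R l inc q f := rfl

lemma deltaFun_zero (R : Type) [CommRing R] (l : ℕ) (inc : Finset (Fin l) → Fin l → ℤ)
    (q : ℕ) : deltaFun R l inc q 0 = 0 := by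
  rw [← delta_apply]
  exact map_zero _

lemma resQ_sub (R : Type) [CommRing R] (m q : ℕ) (f g : Coch R (m+1) q) :
    resQ R m q (f - g) = resQ R m q f - resQ R m q g := by
  funext J'; rfl

lemma resQ_add (R : Type) [CommRing R] (m q : ℕ) (f g : Coch R (m+1) q) :
    resQ R m q (f + g) = resQ R m q f + resQ R m q g := by
  funext J'; rfl

lemma resS_add (R : Type) [CommRing R] (m q : ℕ) (f g : Coch R (m+1) (q+1)) :
    resS R m q (f + g) = resS R m q f + resS R m q g := by
  funext J'; rfl

lemma resQ_zero (R : Type) [CommRing R] (m q : ℕ) :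
    resQ R m q (0 : Coch R (m+1) q) = 0 := by
  funext J'; rfl

lemma resS_zero (R : Type) [CommRing R] (m q : ℕ) :
    resS R m q (0 : Coch R (m+1) (q+1)) = 0 := by
  funext J'; rfl

def ExactAll (m : ℕ) : Prop :=
  ∀ a : ℕ,
    (∀ x : Coch ℚ m 0, deltaFun ℚ m (incY a m) 0 x = 0 → x = 0) ∧
    (∀ q : ℕ, ∀ x : Coch ℚ m (q+1), deltaFun ℚ m (incY a m) (q+1) x = 0 →
      ∃ y : Coch ℚ m q, deltaFun ℚ m (incY a m) q y = x)

lemma incY_base (a : ℕ) : incY a 1 ∅ 0 = Amag a 1 := by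
  have h1 : n1 1 (∅ : Finset (Fin 1)) 0 = 0 := by
    unfold n1
    rw [Finset.card_eq_zero, Finset.filter_eq_empty_iff]
    rintro x - ⟨h, -⟩
    exact absurd h (Fin.not_lt_zero x)
  have h2 : n2 1 (∅ : Finset (Fin 1)) 0 = 0 := by
    unfold n2
    rw [Finset.card_eq_zero, Finset.filter_eq_empty_iff]
    rintro x - ⟨h, -⟩
    rw [Fin.fin_one_eq_zero x] at h
    exact absurd h (lt_irrefl 0)
  have h3 : nu 1 (∅ : Finset (Fin 1)) 0 = 0 := by
    unfold nu
    rw [Finset.card_eq_zero, Finset.filter_eq_empty_iff]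
    rintro x - ⟨h, -⟩
    exact absurd h (Fin.not_lt_zero x)
  have hbot : botFree 1 (∅ : Finset (Fin 1)) 0 := fun k _ hk => Finset.notMem_empty k hk
  have htop : topFree 1 (∅ : Finset (Fin 1)) 0 := fun k _ hk => Finset.notMem_empty k hk
  unfold incY n1Y n2Y
  rw [h1, h2, h3, if_pos hbot, if_pos htop, pow_zero, one_mul, Nat.zero_add, Nat.zero_add]

lemma Amag_y1_pos (a : ℕ) : 0 < Amag a 1 := by
  rw [Amag, if_neg]
  · have h := Nat.choose_pos (show (a+1)/2 ≤ (a+1+2)/2 by omega)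
    have h' : (0:ℤ) < (((a+1+2)/2).choose ((a+1)/2) : ℤ) := by exact_mod_cast h
    linarith
  · rintro ⟨⟨s, hs⟩, t, ht⟩
    omega

lemma exact_base : ExactAll 1 := by
  intro a
  have hcne : ((incY a 1 ∅ 0 : ℤ) : ℚ) ≠ 0 := by
    rw [incY_base]
    exact_mod_cast ne_of_gt (Amag_y1_pos a)
  have hempty : (∅ : Finset (Fin 1)).card + (0+1) = 1 := by simp
  have hcard : (insert (0:Fin 1) (∅ : Finset (Fin 1))).card + 0 = 1 := by simp
  constructor
  · intro x hx
    funext J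
    have h := congrFun hx ⟨∅, hempty⟩
    rw [deltaFun_eq ℚ 1 (incY a 1) 0 x ⟨∅, hempty⟩, Fin.sum_univ_one,
      if_pos (by simp : (0 : Fin 1) ∈ (∅ : Finset (Fin 1))ᶜ)] at h
    have hx0 : toFunc ℚ 1 0 x (insert 0 ∅) = 0 := by
      rcases mul_eq_zero.mp h with h' | h'
      · exact absurd h' hcne
      · exact h'
    rw [toFunc_eq ℚ 1 0 x _ hcard] at hx0
    have hJ : J = ⟨insert 0 ∅, hcard⟩ := by
      apply Subtype.ext
      have h1 : J.1 = Finset.univ := by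
        apply Finset.eq_univ_of_card
        have := J.2
        simpa using this
      rw [h1]
      show (Finset.univ : Finset (Fin 1)) = insert 0 ∅
      decide
    rw [hJ]
    exact hx0
  · intro q x hx
    rcases q with _ | q₂
    · refine ⟨fun _ => ((incY a 1 ∅ 0 : ℤ) : ℚ)⁻¹ * x ⟨∅, hempty⟩, ?_⟩
      funext J
      obtain ⟨Jv, hJv⟩ := J
      have hJv' : Jv = ∅ := by
        rw [← Finset.card_eq_zero]
        omega
      subst hJv'
      rw [deltaFun_eq ℚ 1 (incY a 1) 0 _ ⟨∅, hJv⟩, Fin.sum_univ_one,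
        if_pos (by simp : (0 : Fin 1) ∈ (∅ : Finset (Fin 1))ᶜ),
        toFunc_eq ℚ 1 0 _ _ hcard]
      show ((incY a 1 ∅ 0 : ℤ) : ℚ) * (((incY a 1 ∅ 0 : ℤ) : ℚ)⁻¹ * x ⟨∅, hempty⟩)
        = x ⟨∅, hJv⟩
      rw [← mul_assoc, mul_inv_cancel₀ hcne, one_mul]
    · refine ⟨0, ?_⟩
      funext J
      exact absurd J.2 (by omega)

lemma exact_step (m : ℕ) (IH : ExactAll (m+1)) : ExactAll (m+2) := by
  intro a
  have hanti : ∀ (J : Finset (Fin (m+2))) (i j : Fin (m+2)), i ∉ J → j ∉ J → i ≠ j →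
      incY a (m+2) J i * incY a (m+2) (insert i J) j
        + incY a (m+2) J j * incY a (m+2) (insert j J) i = 0 :=
    fun J i j hi hj hij => incY_anticomm a (m+2) hi hj hij
  constructor
  · intro x hx
    have h1 : deltaFun ℚ (m+1) (incY 0 (m+1)) 0 (resQ ℚ (m+1) 0 x) = 0 := by
      rw [← chainQ ℚ (m+1) 0 a x, hx, resQ_zero]
    have h2 : resQ ℚ (m+1) 0 x = 0 := (IH 0).1 _ h1
    funext J
    have hJu : J.1 = Finset.univ := by
      apply Finset.eq_univ_of_card
      have := J.2
      simpa using this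
    have h0 : (0 : Fin (m+2)) ∈ J.1 := by
      rw [hJu]; exact Finset.mem_univ 0
    rw [f_eq_resQ ℚ (m+1) x J h0, h2]
    rfl
  · intro q x hx
    have hQker : deltaFun ℚ (m+1) (incY 0 (m+1)) (q+1) (resQ ℚ (m+1) (q+1) x) = 0 := by
      rw [← chainQ ℚ (m+1) (q+1) a x, hx, resQ_zero]
    obtain ⟨y', hy'⟩ := (IH 0).2 q _ hQker
    set y₁ : Coch ℚ (m+2) q := extQ ℚ (m+1) q y' with hy₁def
    set x₁ : Coch ℚ (m+2) (q+1) := x - deltaFun ℚ (m+2) (incY a (m+2)) q y₁ with hx₁def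
    have hδx₁ : deltaFun ℚ (m+2) (incY a (m+2)) (q+1) x₁ = 0 := by
      have hsub : deltaFun ℚ (m+2) (incY a (m+2)) (q+1) x₁
          = deltaFun ℚ (m+2) (incY a (m+2)) (q+1) x
            - deltaFun ℚ (m+2) (incY a (m+2)) (q+1)
                (deltaFun ℚ (m+2) (incY a (m+2)) q y₁) := by
        rw [hx₁def, ← delta_apply, map_sub]
        rfl
      rw [hsub, hx, deltaFun_deltaFun ℚ (m+2) (incY a (m+2)) hanti q y₁, sub_zero]
    have hQx₁ : resQ ℚ (m+1) (q+1) x₁ = 0 := by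
      rw [hx₁def, resQ_sub, chainQ ℚ (m+1) q a y₁, hy₁def, resQ_extQ, hy', sub_self]
    have hSker : deltaFun ℚ (m+1) (incY (a+1) (m+1)) q (resS ℚ (m+1) q x₁) = 0 := by
      have hc2 := chainS ℚ (m+1) q a x₁
      rw [hδx₁, resS_zero, hQx₁] at hc2
      funext J'
      have h := congrFun hc2 J'
      simp only [Pi.zero_apply, mul_zero, zero_sub] at h
      simp only [Pi.zero_apply]
      linarith [h]
    rcases q with _ | q₂
    · have hS0 : resS ℚ (m+1) 0 x₁ = 0 := (IH (a+1)).1 _ hSker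
      have hx₁0 : x - deltaFun ℚ (m+2) (incY a (m+2)) 0 y₁ = 0 := by
        rw [← hx₁def]
        exact recon ℚ (m+1) 0 x₁ hQx₁ hS0
      exact ⟨y₁, (sub_eq_zero.mp hx₁0).symm⟩
    · obtain ⟨z', hz'⟩ := (IH (a+1)).2 q₂ _ hSker
      set y₂ : Coch ℚ (m+2) (q₂+1) := extS ℚ (m+1) q₂ z' with hy₂def
      set dy₂ : Coch ℚ (m+2) (q₂+1+1) :=
        deltaFun ℚ (m+2) (incY a (m+2)) (q₂+1) y₂ with hdy₂def
      have hQ2 : resQ ℚ (m+1) (q₂+1+1) dy₂ = 0 := by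
        rw [hdy₂def, chainQ ℚ (m+1) (q₂+1) a y₂, hy₂def, resQ_extS, deltaFun_zero]
      have hS2 : resS ℚ (m+1) (q₂+1) dy₂ = - resS ℚ (m+1) (q₂+1) x₁ := by
        rw [hdy₂def, chainS ℚ (m+1) q₂ a y₂, hy₂def, resQ_extS, resS_extS, hz']
        funext J'
        simp
      have hrecon : x₁ + dy₂ = 0 := by
        apply recon ℚ (m+1) (q₂+1) _ ?_ ?_
        · rw [resQ_add, hQx₁, hQ2, add_zero]
        · rw [resS_add, hS2, add_neg_cancel]
      refine ⟨y₁ - y₂, ?_⟩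
      have hmap : deltaFun ℚ (m+2) (incY a (m+2)) (q₂+1) (y₁ - y₂)
          = deltaFun ℚ (m+2) (incY a (m+2)) (q₂+1) y₁ - dy₂ := by
        rw [← delta_apply, map_sub]
        rfl
      have h1 : deltaFun ℚ (m+2) (incY a (m+2)) (q₂+1) y₁ = x - x₁ := by
        rw [hx₁def, sub_sub_cancel]
      have h2 : dy₂ = -x₁ := eq_neg_of_add_eq_zero_right hrecon
      rw [hmap, h1, h2]
      abel

lemma exactAll : ∀ m : ℕ, ExactAll (m+1) := by
  intro m
  induction m with
  | zero => exact exact_base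
  | succ n ih => exact exact_step n ih

end Exactness

-- PART7

/-- **Casian–Kodama, Lemma 7.7**: the cochain complex `𝒞^•(ℒ)` over ℚ built from the
ℒ-incidence numbers satisfies `δ∘δ = 0` and is exact: `H^q(𝒞^•(ℒ); ℚ) = 0` for all `q`. -/
theorem cohomology_todaComplex_local_coefficients (l : ℕ) (hl : 1 ≤ l) :
    (∀ q : ℕ, (delta ℚ l (incL l) (q + 1)).comp (delta ℚ l (incL l) q) = 0) ∧
    Subsingleton (LinearMap.ker (delta ℚ l (incL l) 0)) ∧
    ∀ q : ℕ,
      Subsingleton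
        (LinearMap.ker (delta ℚ l (incL l) (q + 1)) ⧸
          (LinearMap.range (delta ℚ l (incL l) q)).comap
            (LinearMap.ker (delta ℚ l (incL l) (q + 1))).subtype) := by
  obtain ⟨m, rfl⟩ : ∃ m, l = m + 1 := ⟨l - 1, by omega⟩
  have hfun : incL (m+1) = incY 0 (m+1) := by
    funext J i
    exact incL_eq_incY _ J i
  rw [hfun]
  obtain ⟨hinj, hsurj⟩ := exactAll m 0
  refine ⟨?_, ?_, ?_⟩
  · intro q
    apply LinearMap.ext
    intro f
    exact deltaFun_deltaFun ℚ (m+1) (incY 0 (m+1))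
      (fun J i j hi hj hij => incY_anticomm 0 (m+1) hi hj hij) q f
  · constructor
    rintro ⟨x, hx⟩ ⟨y, hy⟩
    have hx' : x = 0 := hinj x (LinearMap.mem_ker.mp hx)
    have hy' : y = 0 := hinj y (LinearMap.mem_ker.mp hy)
    apply Subtype.ext
    show x = y
    rw [hx', hy']
  · intro q
    rw [Submodule.Quotient.subsingleton_iff, eq_top_iff]
    rintro ⟨x, hx⟩ -
    rw [Submodule.mem_comap]
    obtain ⟨y, hy⟩ := hsurj q x (LinearMap.mem_ker.mp hx)
    exact ⟨y, hy⟩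
end

section
/- Let l ≥ 2. For every J ⊆ {1,…,l−1} and every i ∈ {1,…,l−1}∖J, the following are equivalent: (a) J ⇒_ℒ J∪{i} is an edge of 𝒢^ℒ_{A_l}; (b) J∪{l} ⇒_ℒ J∪{i}∪{l} is an edge of 𝒢^ℒ_{A_l}; (c) J ⇒ J∪{i} is an edge of 𝒢_{A_{l−1}}. In particular, the two full subgraphs of 𝒢^ℒ_{A_l} on the vertex sets {J : l ∉ J} and {J : l ∈ J} are isomorphic as oriented graphs via J ↦ J∪{l}, and both coincide with 𝒢_{A_{l−1}}. -/
/-- `J ⇒ J ∪ {i}` is an oriented edge of the graph `𝒢_{A_n}` iff `n1` or `n2` is odd. -/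
def edgeA (n : ℕ) (J : Finset (Fin n)) (i : Fin n) : Prop :=
  Odd (n1 n J i) ∨ Odd (n2 n J i)

/-- `J ⇒_ℒ J ∪ {i}` is an oriented edge of the graph `𝒢^ℒ_{A_n}` iff `J ⇒ J ∪ {i}` is
an edge of `𝒢_{A_{n+1}}` when `J, J∪{i} ⊆ {1,…,n}` are regarded as subsets of
`{1,…,n+1}`. -/
def edgeL (n : ℕ) (J : Finset (Fin n)) (i : Fin n) : Prop :=
  edgeA (n + 1) (J.image Fin.castSucc) i.castSucc

section aux

variable {m : ℕ}

private lemma n1_transfer (J : Finset (Fin m)) (S : Finset (Fin (m + 2))) (i : Fin m)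
    (hS : ∀ x : Fin (m + 2), (x : ℕ) < m → (x ∈ S ↔ ∃ j ∈ J, (j : ℕ) = (x : ℕ))) :
    n1 (m + 2) S i.castSucc.castSucc = n1 m J i := by
  unfold n1
  symm
  refine Finset.card_nbij (fun a => a.castSucc.castSucc) ?_ ?_ ?_
  · intro a ha
    simp only [Finset.mem_coe, Finset.mem_filter, Finset.mem_univ, true_and, Fin.lt_def, Fin.le_def,
      Fin.coe_castSucc] at ha ⊢
    obtain ⟨hlt, hrun⟩ := ha
    refine ⟨hlt, ?_⟩
    intro k hk1 hk2 hkS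
    have hkm : (k : ℕ) < m := lt_of_le_of_lt hk2 i.isLt
    obtain ⟨j, hjJ, hj⟩ := (hS k hkm).mp hkS
    exact hrun j (by omega) (by omega) hjJ
  · intro a _ b _ h
    exact Fin.castSucc_injective _ (Fin.castSucc_injective _ (by simpa using h))
  · intro b hb
    simp only [Finset.coe_filter, Finset.mem_univ, true_and, Set.mem_setOf_eq, Fin.lt_def,
      Fin.le_def, Fin.coe_castSucc] at hb
    obtain ⟨hlt, hrun⟩ := hb
    have hbm : (b : ℕ) < m := lt_trans hlt i.isLt
    refine ⟨⟨b, hbm⟩, ?_, by simp [Fin.ext_iff]⟩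
    simp only [Finset.coe_filter, Finset.mem_univ, true_and, Set.mem_setOf_eq, Fin.lt_def]
    refine ⟨hlt, ?_⟩
    intro k hk1 hk2 hkJ
    refine hrun k.castSucc.castSucc
      (by simp only [Fin.le_def, Fin.coe_castSucc] at hk1 ⊢; exact hk1)
      (by simp only [Fin.le_def, Fin.coe_castSucc] at hk2 ⊢; exact hk2) ?_
    exact (hS _ (by simpa using k.isLt)).mpr ⟨k, hkJ, by simp⟩

private lemma n2_transfer (J : Finset (Fin m)) (S : Finset (Fin (m + 2))) (i : Fin m)
    (hS : ∀ x : Fin (m + 2), (x : ℕ) < m → (x ∈ S ↔ ∃ j ∈ J, (j : ℕ) = (x : ℕ)))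
    (hx : ∃ x : Fin (m + 2), (i : ℕ) ≤ (x : ℕ) ∧ (x : ℕ) ≤ m ∧ x ∈ S) :
    n2 (m + 2) S i.castSucc.castSucc = n2 m J i := by
  obtain ⟨x, hxi, hxm, hxS⟩ := hx
  unfold n2
  symm
  refine Finset.card_nbij (fun a => a.castSucc.castSucc) ?_ ?_ ?_
  · intro a ha
    simp only [Finset.mem_coe, Finset.mem_filter, Finset.mem_univ, true_and, Fin.lt_def, Fin.le_def,
      Fin.coe_castSucc] at ha ⊢
    obtain ⟨hlt, hrun⟩ := ha
    refine ⟨hlt, ?_⟩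
    intro k hk1 hk2 hkS
    have hkm : (k : ℕ) < m := lt_of_le_of_lt hk2 a.isLt
    obtain ⟨j, hjJ, hj⟩ := (hS k hkm).mp hkS
    exact hrun j (by omega) (by omega) hjJ
  · intro a _ b _ h
    exact Fin.castSucc_injective _ (Fin.castSucc_injective _ (by simpa using h))
  · intro b hb
    simp only [Finset.coe_filter, Finset.mem_univ, true_and, Set.mem_setOf_eq, Fin.lt_def,
      Fin.le_def, Fin.coe_castSucc] at hb
    obtain ⟨hlt, hrun⟩ := hb
    have hbm : (b : ℕ) < m := by
      by_contra h
      exact hrun x (by omega) (by omega) hxS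
    refine ⟨⟨b, hbm⟩, ?_, by simp [Fin.ext_iff]⟩
    simp only [Finset.coe_filter, Finset.mem_univ, true_and, Set.mem_setOf_eq, Fin.lt_def]
    refine ⟨hlt, ?_⟩
    intro k hk1 hk2 hkJ
    refine hrun k.castSucc.castSucc
      (by simp only [Fin.le_def, Fin.coe_castSucc] at hk1 ⊢; exact hk1)
      (by simp only [Fin.le_def, Fin.coe_castSucc] at hk2 ⊢; exact hk2) ?_
    exact (hS _ (by simpa using k.isLt)).mpr ⟨k, hkJ, by simp⟩

private lemma hS_img2 (J : Finset (Fin m)) :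
    ∀ x : Fin (m + 2), (x : ℕ) < m →
      (x ∈ (J.image Fin.castSucc).image Fin.castSucc ↔ ∃ j ∈ J, (j : ℕ) = (x : ℕ)) := by
  intro x _
  simp only [Finset.mem_image, Fin.ext_iff, Fin.coe_castSucc]
  constructor
  · rintro ⟨a, ⟨b, hb, hba⟩, hax⟩
    exact ⟨b, hb, by omega⟩
  · rintro ⟨j, hj, hjx⟩
    exact ⟨j.castSucc, ⟨j, hj, rfl⟩, hjx⟩

private lemma n2_parity_img2 (J : Finset (Fin m)) (i : Fin m) :
    Odd (n2 (m + 2) ((J.image Fin.castSucc).image Fin.castSucc) i.castSucc.castSucc) ↔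
      Odd (n2 m J i) := by
  by_cases hP : ∀ k : Fin m, i ≤ k → k ∉ J
  · -- the run reaches the top: both filters are `Ioi`
    have hsmall : n2 m J i = m - 1 - (i : ℕ) := by
      unfold n2
      rw [show (Finset.univ.filter (fun j : Fin m => i < j ∧ ∀ k : Fin m, i ≤ k → k ≤ j → k ∉ J))
          = Finset.Ioi i by
        ext j
        simp only [Finset.mem_filter, Finset.mem_univ, true_and, Finset.mem_Ioi]
        exact ⟨fun h => h.1, fun h => ⟨h, fun k hk _ => hP k hk⟩⟩]
      exact Fin.card_Ioi i
    have hbig : n2 (m + 2) ((J.image Fin.castSucc).image Fin.castSucc) i.castSucc.castSucc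
        = m + 1 - (i : ℕ) := by
      unfold n2
      rw [show (Finset.univ.filter (fun j : Fin (m+2) => i.castSucc.castSucc < j ∧
          ∀ k : Fin (m+2), i.castSucc.castSucc ≤ k → k ≤ j →
            k ∉ (J.image Fin.castSucc).image Fin.castSucc))
          = Finset.Ioi i.castSucc.castSucc by
        ext j
        simp only [Finset.mem_filter, Finset.mem_univ, true_and, Finset.mem_Ioi]
        refine ⟨fun h => h.1, fun h => ⟨h, ?_⟩⟩
        intro k hk1 _ hkS
        have hkm : (k : ℕ) < m := by
          rcases Finset.mem_image.mp hkS with ⟨a, ha, rfl⟩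
          rcases Finset.mem_image.mp ha with ⟨b, _, rfl⟩
          simpa using b.isLt
        obtain ⟨j0, hj0, hj0k⟩ := (hS_img2 J k hkm).mp hkS
        refine hP j0 ?_ hj0
        simp only [Fin.le_def, Fin.coe_castSucc] at hk1 ⊢
        omega]
      rw [Fin.card_Ioi]
      simp only [Fin.coe_castSucc]
      omega
    rw [hsmall, hbig, Nat.odd_iff, Nat.odd_iff]
    have := i.isLt
    omega
  · push_neg at hP
    obtain ⟨k0, hk0i, hk0J⟩ := hP
    refine Iff.of_eq (congrArg Odd ?_)
    refine n2_transfer J _ i (hS_img2 J) ⟨k0.castSucc.castSucc, ?_, ?_, ?_⟩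
    · simp only [Fin.le_def, Fin.coe_castSucc] at hk0i ⊢; exact hk0i
    · simp only [Fin.coe_castSucc]
      omega
    · exact (hS_img2 J _ (by simpa using k0.isLt)).mpr ⟨k0, hk0J, by simp⟩

end aux

/-- **Casian–Kodama, Lemma 7.8**: let `l = m + 1 ≥ 2`.  For `J ⊆ {1,…,l-1}` and
`i ∈ {1,…,l-1}∖J`, the following are equivalent: (a) `J ⇒_ℒ J∪{i}` in `𝒢^ℒ_{A_l}`;
(b) `J∪{l} ⇒_ℒ J∪{i}∪{l}` in `𝒢^ℒ_{A_l}`; (c) `J ⇒ J∪{i}` in `𝒢_{A_{l-1}}`.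
In particular the two full subgraphs of `𝒢^ℒ_{A_l}` on `{J : l ∉ J}` and `{J : l ∈ J}`
are isomorphic via `J ↦ J∪{l}`, and both coincide with `𝒢_{A_{l-1}}`. -/
theorem graphL_top_bottom_subgraphs (m : ℕ) (hm : 1 ≤ m)
    (J : Finset (Fin m)) (i : Fin m) (hi : i ∉ J) :
    (edgeL (m + 1) (J.image Fin.castSucc) i.castSucc ↔
      edgeL (m + 1) (insert (Fin.last m) (J.image Fin.castSucc)) i.castSucc) ∧
    (edgeL (m + 1) (J.image Fin.castSucc) i.castSucc ↔ edgeA m J i) := by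
  have him2 : ∀ x : Fin (m + 2), (x : ℕ) < m →
      (x ∈ ((insert (Fin.last m) (J.image Fin.castSucc)).image Fin.castSucc) ↔
        ∃ j ∈ J, (j : ℕ) = (x : ℕ)) := by
    intro x hx
    rw [Finset.image_insert, Finset.mem_insert]
    rw [← hS_img2 J x hx]
    constructor
    · rintro (rfl | h)
      · simp at hx
      · exact h
    · exact Or.inr
  -- (a) ↔ (c)
  have hac : edgeL (m + 1) (J.image Fin.castSucc) i.castSucc ↔ edgeA m J i := by
    unfold edgeL edgeA
    rw [n1_transfer J _ i (hS_img2 J)]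
    exact or_congr Iff.rfl (n2_parity_img2 J i)
  -- (b) ↔ (c)
  have hbc : edgeL (m + 1) (insert (Fin.last m) (J.image Fin.castSucc)) i.castSucc ↔
      edgeA m J i := by
    unfold edgeL edgeA
    rw [n1_transfer J _ i him2, n2_transfer J _ i him2
      ⟨(Fin.last m).castSucc, by simp, by simp,
        Finset.mem_image.mpr ⟨Fin.last m, Finset.mem_insert_self _ _, rfl⟩⟩]
  exact ⟨hac.trans hbc.symm, hac⟩
end

section
/- For every l ≥ 1, the set W⁻_[{1}] = { w ∈ S_{l+1} : w(j−1) < w(j) and w(j−1)+w(j) is odd for every j ∈ {2,…,l} } has exactly 2 elements. -/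
/-- The set `W⁻_[J] ⊆ S_{l+1}`: permutations `w` of `{0,1,…,l}` such that for every
simple root `j ∈ {1,…,l}∖J` (represented by `i : Fin l`, root `j = i+1`) one has
`w(j-1) < w(j)` and `w(j-1) + w(j)` is odd. -/
def Wminus (l : ℕ) (J : Finset (Fin l)) : Finset (Equiv.Perm (Fin (l + 1))) :=
  Finset.univ.filter fun w => ∀ i : Fin l, i ∉ J →
    (w i.castSucc < w i.succ ∧ Odd ((w i.castSucc : ℕ) + (w i.succ : ℕ)))

lemma sub_one_val (l : ℕ) (hl : 1 ≤ l) (x : Fin (l+1)) :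
    ((x - 1 : Fin (l+1)) : ℕ) = if (x:ℕ) = 0 then l else (x:ℕ) - 1 := by
  rw [Fin.sub_def]
  have h1 : ((1 : Fin (l+1)) : ℕ) = 1 := by
    rw [Fin.val_one']; exact Nat.mod_eq_of_lt (by omega)
  simp only [h1]
  have hx := x.isLt
  rcases Nat.eq_zero_or_pos (x:ℕ) with h | h
  · simp [h]
  · have : l + 1 - 1 + (x:ℕ) = (l+1) + ((x:ℕ) - 1) := by omega
    rw [this, Nat.add_mod_left, Nat.mod_eq_of_lt (by omega)]
    simp [Nat.pos_iff_ne_zero.mp h]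

lemma main_aux (l : ℕ) (hl : 1 ≤ l) (w : Equiv.Perm (Fin (l+1)))
    (h : ∀ j, 1 ≤ j → ∀ hj : j < l,
      ((w ⟨j, by omega⟩ : Fin (l+1)) : ℕ) < ((w ⟨j+1, by omega⟩ : Fin (l+1)) : ℕ) ∧
      Odd (((w ⟨j, by omega⟩ : Fin (l+1)) : ℕ) + ((w ⟨j+1, by omega⟩ : Fin (l+1)) : ℕ))) :
    (∀ j, 1 ≤ j → ∀ hj2 : j ≤ l, ((w ⟨j, by omega⟩ : Fin (l+1)) : ℕ) = j) ∨
    (∀ j, 1 ≤ j → ∀ hj2 : j ≤ l, ((w ⟨j, by omega⟩ : Fin (l+1)) : ℕ) = j - 1) := by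
  set a : ℕ → ℕ := fun j => if hj : j < l + 1 then ((w ⟨j, hj⟩ : Fin (l+1)) : ℕ) else 0 with ha_def
  have haval : ∀ j, ∀ hj : j ≤ l, a j = ((w ⟨j, by omega⟩ : Fin (l+1)) : ℕ) := by
    intro j hj
    simp only [ha_def]
    rw [dif_pos (by omega)]
  have ha : ∀ j, 1 ≤ j → j < l → a j < a (j+1) ∧ Odd (a j + a (j+1)) := by
    intro j h1 h2
    rw [haval j (by omega), haval (j+1) (by omega)]
    exact h j h1 h2
  have habd : ∀ j, j ≤ l → a j ≤ l := by
    intro j hj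
    rw [haval j hj]
    exact Nat.lt_succ_iff.mp (Fin.isLt _)
  have mono : ∀ d j, 1 ≤ j → j + d ≤ l → a j + d ≤ a (j + d) := by
    intro d
    induction d with
    | zero => intro j _ _; simp
    | succ d ih =>
      intro j h1 h2
      have h3 := ih j h1 (by omega)
      have h4 := (ha (j+d) (by omega) (by omega)).1
      have he : j + (d+1) = (j+d)+1 := by omega
      rw [he]; omega
  have a1le : a 1 ≤ 1 := by
    have := mono (l-1) 1 le_rfl (by omega)
    have he : 1 + (l - 1) = l := by omega
    rw [he] at this
    have := habd l le_rfl
    omega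
  have upper : ∀ k, 1 ≤ k → k ≤ l → a k ≤ k := by
    intro k h1 h2
    have := mono (l-k) k h1 (by omega)
    have he : k + (l - k) = l := by omega
    rw [he] at this
    have := habd l le_rfl
    omega
  rcases Nat.le_one_iff_eq_zero_or_eq_one.mp a1le with h1 | h1
  · right
    intro j hj hj2
    rw [← haval j hj2]
    induction j with
    | zero => omega
    | succ j ih =>
      rcases Nat.eq_zero_or_pos j with hj0 | hj0
      · subst hj0; simpa using h1
      · have hprev := ih (by omega) (by omega)
        have hup := upper (j+1) (by omega) hj2
        obtain ⟨hlt, m, hm⟩ := ha j hj0 (by omega)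
        omega
  · left
    intro j hj hj2
    rw [← haval j hj2]
    induction j with
    | zero => omega
    | succ j ih =>
      rcases Nat.eq_zero_or_pos j with hj0 | hj0
      · subst hj0; simpa using h1
      · have hprev := ih (by omega) (by omega)
        have hup := upper (j+1) (by omega) hj2
        have hlt := (ha j hj0 (by omega)).1
        omega

set_option maxHeartbeats 1000000 in
/-- **Casian–Kodama, Lemma 4.7 (first part)**: for type `A_l`, the set `W⁻_[{α₁}]`
has exactly two elements. -/
theorem card_Wminus_alpha_one (l : ℕ) (hl : 1 ≤ l) :
    (Wminus l {(⟨0, by omega⟩ : Fin l)}).card = 2 := by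
  classical
  have key : Wminus l {(⟨0, by omega⟩ : Fin l)} =
      {1, Equiv.subRight (1 : Fin (l+1))} := by
    ext w
    simp only [Wminus, Finset.mem_filter, Finset.mem_univ, true_and, Finset.mem_insert,
      Finset.mem_singleton]
    constructor
    · intro hw
      have h : ∀ j, 1 ≤ j → ∀ hj : j < l,
          ((w ⟨j, by omega⟩ : Fin (l+1)) : ℕ) < ((w ⟨j+1, by omega⟩ : Fin (l+1)) : ℕ) ∧
          Odd (((w ⟨j, by omega⟩ : Fin (l+1)) : ℕ) + ((w ⟨j+1, by omega⟩ : Fin (l+1)) : ℕ)) := by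
        intro j h1 hj
        have hne : ¬(⟨j, hj⟩ : Fin l) = ⟨0, by omega⟩ := by
          simp only [Fin.ext_iff]; omega
        have hmem := hw ⟨j, hj⟩ hne
        have e1 : (⟨j, hj⟩ : Fin l).castSucc = (⟨j, by omega⟩ : Fin (l+1)) := rfl
        have e2 : (⟨j, hj⟩ : Fin l).succ = (⟨j+1, by omega⟩ : Fin (l+1)) := rfl
        rw [e1, e2] at hmem
        exact ⟨hmem.1, hmem.2⟩
      rcases main_aux l hl w h with hc | hc
      · left
        apply Equiv.ext
        intro x
        apply Fin.ext
        simp only [Equiv.Perm.one_apply]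
        rcases Nat.eq_zero_or_pos (x : ℕ) with hx | hx
        · have hx0 : x = (⟨0, by omega⟩ : Fin (l+1)) := Fin.ext hx
          rw [hx0]; show _ = 0
          by_contra hne
          set v : ℕ := ((w ⟨0, by omega⟩ : Fin (l+1)) : ℕ) with hv
          have hv1 : 1 ≤ v := by omega
          have hvl : v ≤ l := by
            have := (w (⟨0, by omega⟩ : Fin (l+1))).isLt; omega
          have heq : w ⟨v, by omega⟩ = w ⟨0, by omega⟩ :=
            Fin.ext (by rw [hc v hv1 hvl])
          have := w.injective heq
          simp only [Fin.mk.injEq] at this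
          omega
        · have hxl : (x:ℕ) ≤ l := Nat.lt_succ_iff.mp x.isLt
          exact hc (x:ℕ) hx hxl
      · right
        apply Equiv.ext
        intro x
        apply Fin.ext
        have hsub : ((Equiv.subRight (1 : Fin (l+1))) x : ℕ)
            = if (x:ℕ) = 0 then l else (x:ℕ) - 1 := by
          rw [Equiv.subRight_apply]; exact sub_one_val l hl x
        rcases Nat.eq_zero_or_pos (x : ℕ) with hx | hx
        · rw [hsub, if_pos hx]
          have hx0 : x = (⟨0, by omega⟩ : Fin (l+1)) := Fin.ext hx
          rw [hx0]
          by_contra hne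
          set v : ℕ := ((w ⟨0, by omega⟩ : Fin (l+1)) : ℕ) with hv
          have hvl : v ≤ l := by
            have := (w (⟨0, by omega⟩ : Fin (l+1))).isLt; omega
          have hvl' : v ≤ l - 1 := by omega
          have heq : w ⟨v+1, by omega⟩ = w ⟨0, by omega⟩ :=
            Fin.ext (by rw [hc (v+1) (by omega) (by omega)]; omega)
          have := w.injective heq
          simp only [Fin.mk.injEq] at this
          omega
        · rw [hsub, if_neg (by omega)]
          have hxl : (x:ℕ) ≤ l := Nat.lt_succ_iff.mp x.isLt
          exact hc (x:ℕ) hx hxl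
    · intro hw
      rcases hw with hw | hw
      · subst hw
        intro i hi
        simp only [Equiv.Perm.one_apply]
        refine ⟨Fin.castSucc_lt_succ, ?_⟩
        rw [Nat.odd_iff]
        simp only [Fin.coe_castSucc, Fin.val_succ]
        omega
      · subst hw
        intro i hi
        have hi1 : 1 ≤ (i : ℕ) := by
          rcases Nat.eq_zero_or_pos (i:ℕ) with h0 | h0
          · exact absurd (Fin.ext h0) hi
          · exact h0
        have hc : ((Equiv.subRight (1 : Fin (l+1))) i.castSucc : ℕ) = (i:ℕ) - 1 := by
          rw [Equiv.subRight_apply, sub_one_val l hl,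
            if_neg (by simp only [Fin.coe_castSucc]; omega)]
          simp only [Fin.coe_castSucc]
        have hs : ((Equiv.subRight (1 : Fin (l+1))) i.succ : ℕ) = (i:ℕ) := by
          rw [Equiv.subRight_apply, sub_one_val l hl,
            if_neg (by simp only [Fin.val_succ]; omega)]
          simp only [Fin.val_succ]
          omega
        refine ⟨?_, ?_⟩
        · rw [Fin.lt_iff_val_lt_val, hc, hs]; omega
        · rw [hc, hs, Nat.odd_iff]; omega
  rw [key]
  rw [Finset.card_insert_of_notMem, Finset.card_singleton]
  simp only [Finset.mem_singleton]
  intro hcontra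
  have h0 : (((1 : Equiv.Perm (Fin (l+1))) ⟨0, by omega⟩ : Fin (l+1)) : ℕ) = 0 := rfl
  have h1 : (((Equiv.subRight (1 : Fin (l+1))) ⟨0, by omega⟩ : Fin (l+1)) : ℕ) = l := by
    rw [Equiv.subRight_apply, sub_one_val l hl]
    simp
  rw [hcontra, h1] at h0
  omega
end

section
/- For every l ≥ 2, the set W⁻_[{2}] = { w ∈ S_{l+1} : w(j−1) < w(j) and w(j−1)+w(j) is odd for every j ∈ {1,…,l}∖{2} } has exactly 2·⌊(l+1)/2⌋ elements. -/
/-- Value function for the explicit permutations. -/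
def fk (l k p : ℕ) : ℕ :=
  if k = l then (if p = 0 then 0 else if p = 1 then l else p - 1)
  else (if p = 0 then k else if p = 1 then k + 1 else if p < k + 2 then p - 2 else p)

lemma fk_lt (l k p : ℕ) (hk : k ≤ l) (hp : p < l + 1) : fk l k p < l + 1 := by
  unfold fk; split_ifs <;> first | exact ‹False›.elim | omega

lemma fk_inj (l k : ℕ) {p q : ℕ} (hp : p < l + 1) (hq : q < l + 1)
    (h : fk l k p = fk l k q) : p = q := by
  unfold fk at h; split_ifs at h <;> omega

/-- The explicit permutation family. -/
noncomputable def Fperm (l k : ℕ) : Equiv.Perm (Fin (l + 1)) :=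
  Equiv.ofBijective (fun p => ⟨fk l (min k l) p, fk_lt l (min k l) p (Nat.min_le_right k l) p.isLt⟩)
    (Finite.injective_iff_bijective.mp
      (fun p q h => Fin.ext (fk_inj l (min k l) p.isLt q.isLt (congrArg Fin.val h))))

lemma Fperm_val (l k : ℕ) (x : Fin (l + 1)) : (Fperm l k x : ℕ) = fk l (min k l) x.val := rfl

lemma Fperm_eq_of_val (l k : ℕ) (w : Equiv.Perm (Fin (l + 1))) (hk : k ≤ l)
    (h : ∀ p (hp : p < l + 1), fk l k p = (w ⟨p, hp⟩ : ℕ)) : Fperm l k = w := by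
  apply Equiv.ext
  intro x
  apply Fin.ext
  rw [Fperm_val, Nat.min_eq_left hk, h x.val x.isLt]

/-- Structure lemma for increasing sequences with alternating parity bounded by `n+2`. -/
lemma seq_struct (n : ℕ) (a : ℕ → ℕ)
    (hstep : ∀ t, t < n → a t < a (t + 1) ∧ (a t + a (t + 1)) % 2 = 1)
    (hn : a n ≤ n + 2) :
    (∀ t ≤ n, a t = t + 1) ∨ (∃ m, m ≤ n + 1 ∧ ∀ t ≤ n, a t = if t < m then t else t + 2) := by
  have key : ∀ d s, s + d ≤ n → a s + d ≤ a (s + d) := by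
    intro d
    induction d with
    | zero => intro s _; simp
    | succ d ih =>
      intro s hs
      have h1 := ih s (by omega)
      have h2 := (hstep (s + d) (by omega)).1
      have : s + (d+1) = (s+d) + 1 := by omega
      rw [this]; omega
  have par : ∀ t ≤ n, (a t + a 0 + t) % 2 = 0 := by
    intro t
    induction t with
    | zero => intro _; omega
    | succ t ih =>
      intro h
      have h1 := ih (by omega)
      have h2 := (hstep t (by omega)).2
      omega
  have lower : ∀ t ≤ n, a 0 + t ≤ a t := by
    intro t ht; have := key t 0 (by omega); simpa using this
  have upper : ∀ t ≤ n, a t ≤ t + 2 := by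
    intro t ht; have := key (n - t) t (by omega)
    have e : t + (n - t) = n := by omega
    rw [e] at this; omega
  have ha0 : a 0 ≤ 2 := by have := lower n (le_refl n); omega
  rcases Nat.lt_or_ge (a 0) 1 with h0 | h0
  · -- a 0 = 0
    right
    by_cases hex : ∃ t, t ≤ n ∧ a t = t + 2
    · refine ⟨Nat.find hex, ?_, ?_⟩
      · have := (Nat.find_spec hex).1; omega
      · intro t ht
        have hspec := Nat.find_spec hex
        rcases Nat.lt_or_ge t (Nat.find hex) with hlt | hge
        · have hne := Nat.find_min hex hlt
          have := lower t ht; have := upper t ht; have := par t ht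
          simp only [if_pos hlt]
          omega
        · -- induction from the find point upward
          have main : ∀ d, Nat.find hex + d ≤ n → a (Nat.find hex + d) = Nat.find hex + d + 2 := by
            intro d
            induction d with
            | zero => intro _; simpa using hspec.2
            | succ d ih =>
              intro hd
              have h1 := ih (by omega)
              have h2 := (hstep (Nat.find hex + d) (by omega)).1
              have h3 := upper (Nat.find hex + d + 1) (by omega)
              have e : Nat.find hex + (d + 1) = (Nat.find hex + d) + 1 := by omega
              rw [e]; omega
          have := main (t - Nat.find hex) (by omega)
          have e : Nat.find hex + (t - Nat.find hex) = t := by omega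
          rw [e] at this
          simp only [if_neg (by omega : ¬ t < Nat.find hex)]
          omega
    · push_neg at hex
      refine ⟨n + 1, le_refl _, ?_⟩
      intro t ht
      have := hex t ht
      have := lower t ht; have := upper t ht; have := par t ht
      simp only [if_pos (by omega : t < n + 1)]
      omega
  rcases Nat.lt_or_ge (a 0) 2 with h1 | h1
  · -- a 0 = 1
    left
    intro t ht
    have := lower t ht; have := upper t ht; have := par t ht
    omega
  · -- a 0 = 2
    right
    refine ⟨0, by omega, ?_⟩
    intro t ht
    have := lower t ht; have := upper t ht; have := par t ht
    simp only [if_neg (by omega : ¬ t < 0)]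
    omega

/-- **Casian–Kodama, Lemma 4.7 (second part)**: for type `A_l` with `l ≥ 2`, the set
`W⁻_[{α₂}]` has exactly `2·⌊(l+1)/2⌋` elements. -/
theorem card_Wminus_alpha_two (l : ℕ) (hl : 2 ≤ l) :
    (Wminus l {(⟨1, by omega⟩ : Fin l)}).card = 2 * ((l + 1) / 2) := by
  set idx : Finset ℕ := (Finset.range (l + 1)).filter (fun k => k < l ∨ l % 2 = 1) with hidx
  have main : Wminus l {(⟨1, by omega⟩ : Fin l)} = idx.image (Fperm l) := by
    ext w
    simp only [Wminus, Finset.mem_filter, Finset.mem_univ, true_and, Finset.mem_image,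
      hidx, Finset.mem_range]
    constructor
    · -- hard direction: every element is some Fperm l k
      intro hw
      have hc : ∀ p (hp : p < l), p ≠ 1 →
          ((w (⟨p, hp⟩ : Fin l).castSucc : ℕ) < (w (⟨p, hp⟩ : Fin l).succ : ℕ) ∧
            ((w (⟨p, hp⟩ : Fin l).castSucc : ℕ) + (w (⟨p, hp⟩ : Fin l).succ : ℕ)) % 2 = 1) := by
        intro p hp hp1
        have hne : (⟨p, hp⟩ : Fin l) ∉ ({(⟨1, by omega⟩ : Fin l)} : Finset (Fin l)) := by
          simp [Fin.ext_iff, hp1]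
        obtain ⟨h1, h2⟩ := hw _ hne
        exact ⟨by exact_mod_cast h1, by rw [Nat.odd_iff] at h2; exact h2⟩
      set b : ℕ → ℕ := fun p => (w ⟨min p l, Nat.lt_succ_of_le (Nat.min_le_right p l)⟩ : ℕ) with hbdef
      have hble : ∀ p, b p ≤ l := by
        intro p; exact Nat.lt_succ_iff.mp (w _).isLt
      have hbval : ∀ p (hp : p ≤ l), b p = (w ⟨p, by omega⟩ : ℕ) := by
        intro p hp
        simp only [hbdef]
        congr 2
        exact Fin.ext (by simp; omega)
      have hb : ∀ p, p < l → p ≠ 1 → b p < b (p + 1) ∧ (b p + b (p + 1)) % 2 = 1 := by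
        intro p hp hp1
        have := hc p hp hp1
        have e1 : b p = (w (⟨p, hp⟩ : Fin l).castSucc : ℕ) := by
          rw [hbval p (by omega)]; congr 2
        have e2 : b (p + 1) = (w (⟨p, hp⟩ : Fin l).succ : ℕ) := by
          rw [hbval (p + 1) (by omega)]; congr 2
        rw [e1, e2]; exact this
      have hbinj : ∀ p q, p ≤ l → q ≤ l → b p = b q → p = q := by
        intro p q hp hq h
        rw [hbval p hp, hbval q hq] at h
        have := w.injective (Fin.ext h)
        exact congrArg Fin.val this
      have hbsurj : ∀ v, v ≤ l → ∃ p, p ≤ l ∧ b p = v := by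
        intro v hv
        refine ⟨(w.symm ⟨v, by omega⟩).val, Nat.lt_succ_iff.mp (w.symm _).isLt, ?_⟩
        rw [hbval _ (Nat.lt_succ_iff.mp (w.symm _).isLt)]
        have : (⟨(w.symm ⟨v, by omega⟩).val, by omega⟩ : Fin (l+1)) = w.symm ⟨v, by omega⟩ :=
          Fin.ext rfl
        rw [this, Equiv.apply_symm_apply]
      -- set up the sequence a t = b (t+2)
      have hstep : ∀ t, t < l - 2 → b (t + 2) < b (t + 2 + 1) ∧
          (b (t + 2) + b (t + 2 + 1)) % 2 = 1 := by
        intro t ht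
        exact hb (t + 2) (by omega) (by omega)
      have hn : b ((l - 2) + 2) ≤ (l - 2) + 2 := by
        have := hble ((l - 2) + 2); omega
      rcases seq_struct (l - 2) (fun t => b (t + 2)) hstep hn with hL | ⟨m, hm, hR⟩
      · -- case: b p = p - 1 for 2 ≤ p ≤ l; complement {0, l}; k = l, l odd
        have hpos : ∀ p, 2 ≤ p → p ≤ l → b p = p - 1 := by
          intro p h2 hp
          have := hL (p - 2) (by omega)
          have e : p - 2 + 2 = p := by omega
          rw [e] at this; omega
        have h0 : b 0 = 0 ∨ b 1 = 0 := by
          obtain ⟨p, hp, hbp⟩ := hbsurj 0 (by omega)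
          rcases Nat.lt_or_ge p 2 with h | h
          · interval_cases p
            · left; exact hbp
            · right; exact hbp
          · have := hpos p h hp; omega
        have hl' : b 0 = l ∨ b 1 = l := by
          obtain ⟨p, hp, hbp⟩ := hbsurj l (by omega)
          rcases Nat.lt_or_ge p 2 with h | h
          · interval_cases p
            · left; exact hbp
            · right; exact hbp
          · have := hpos p h hp; omega
        have hord := hb 0 (by omega) (by omega)
        simp only [Nat.zero_add] at hord
        have hble0 := hble 0
        have hble1 := hble 1
        have hb0 : b 0 = 0 := by omega
        have hb1 : b 1 = l := by omega
        have hodd : l % 2 = 1 := by omega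
        have hval : ∀ p, p ≤ l → fk l l p = b p := by
          intro p hp
          by_cases hp0 : p = 0
          · subst hp0; simp [fk, hb0]
          by_cases hp1 : p = 1
          · subst hp1; simp [fk, hb1]
          have h2 : 2 ≤ p := by omega
          rw [hpos p h2 hp]
          unfold fk
          split_ifs <;> first | exact ‹False›.elim | omega
        refine ⟨l, ⟨by omega, Or.inr hodd⟩, Fperm_eq_of_val l l w (le_refl l) ?_⟩
        intro p hp
        rw [hval p (by omega)]
        exact hbval p (by omega)
      · -- case: b p = if p-2 < m then p-2 else p; complement {m, m+1}; k = m
        have hm' : m ≤ l - 1 := by omega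
        have hpos : ∀ p, 2 ≤ p → p ≤ l → b p = if p - 2 < m then p - 2 else p := by
          intro p h2 hp
          have := hR (p - 2) (by omega)
          have e : p - 2 + 2 = p := by omega
          rw [e] at this; exact this
        have h0 : b 0 = m ∨ b 1 = m := by
          obtain ⟨p, hp, hbp⟩ := hbsurj m (by omega)
          rcases Nat.lt_or_ge p 2 with h | h
          · interval_cases p
            · left; exact hbp
            · right; exact hbp
          · have := hpos p h hp; split_ifs at this <;> omega
        have h1 : b 0 = m + 1 ∨ b 1 = m + 1 := by
          obtain ⟨p, hp, hbp⟩ := hbsurj (m + 1) (by omega)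
          rcases Nat.lt_or_ge p 2 with h | h
          · interval_cases p
            · left; exact hbp
            · right; exact hbp
          · have := hpos p h hp; split_ifs at this <;> omega
        have hord := hb 0 (by omega) (by omega)
        simp only [Nat.zero_add] at hord
        have hble0 := hble 0
        have hble1 := hble 1
        have hb0 : b 0 = m := by omega
        have hb1 : b 1 = m + 1 := by omega
        have hml : m ≠ l := by omega
        have hval : ∀ p, p ≤ l → fk l m p = b p := by
          intro p hp
          by_cases hp0 : p = 0
          · subst hp0; simp [fk, hml, hb0]
          by_cases hp1 : p = 1
          · subst hp1; simp [fk, hml, hb1]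
          have h2 : 2 ≤ p := by omega
          rw [hpos p h2 hp]
          unfold fk
          split_ifs <;> first | exact ‹False›.elim | omega
        refine ⟨m, ⟨by omega, Or.inl (by omega)⟩, Fperm_eq_of_val l m w (by omega) ?_⟩
        intro p hp
        rw [hval p (by omega)]
        exact hbval p (by omega)
    · -- easy direction: every Fperm l k is in Wminus
      rintro ⟨k, ⟨hk, hkor⟩, rfl⟩
      intro i hi
      have hi1 : (i : ℕ) ≠ 1 := by
        intro h; exact hi (by simp [Finset.mem_singleton, Fin.ext_iff, h])
      have hkl : min k l = k := Nat.min_eq_left (by omega)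
      have hil : (i : ℕ) < l := i.isLt
      rcases hkor with hkor | hkor <;>
      exact ⟨by
        rw [Fin.lt_def, Fperm_val, Fperm_val, hkl]
        simp only [Fin.coe_castSucc, Fin.val_succ]
        unfold fk
        split_ifs <;> first | exact ‹False›.elim | omega, by
        rw [Nat.odd_iff, Fperm_val, Fperm_val, hkl]
        simp only [Fin.coe_castSucc, Fin.val_succ]
        unfold fk
        split_ifs <;> first | exact ‹False›.elim | omega⟩
  rw [main]
  rw [Finset.card_image_of_injOn]
  · have hcard : idx = if l % 2 = 1 then Finset.range (l + 1) else Finset.range l := by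
      rw [hidx]
      split_ifs with h
      · apply Finset.filter_true_of_mem; intro x _; exact Or.inr h
      · ext x
        simp only [Finset.mem_filter, Finset.mem_range]
        omega
    rw [hcard]
    split_ifs with h <;> simp <;> omega
  · intro k hk k' hk' h
    simp only [hidx, Finset.mem_coe, Finset.mem_filter, Finset.mem_range] at hk hk'
    have e0 := congrArg (fun e : Equiv.Perm (Fin (l+1)) => (e ⟨0, by omega⟩ : ℕ)) h
    have e1 := congrArg (fun e : Equiv.Perm (Fin (l+1)) => (e ⟨1, by omega⟩ : ℕ)) h
    simp only [Fperm_val, Fin.val_mk] at e0 e1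
    rw [Nat.min_eq_left (by omega : k ≤ l), Nat.min_eq_left (by omega : k' ≤ l)] at e0 e1
    unfold fk at e0 e1
    split_ifs at e0 e1 <;> first | exact ‹False›.elim | omega
end

section
/- Let J ⊆ {1,…,l}, let w_∘ ∈ S_{l+1} be the order-reversing permutation w_∘(i) = l−i, and let w^J ∈ S_{l+1} be the permutation that reverses each maximal block of the partition of {0,1,…,l} determined by J: writing J = {j_1 < ⋯ < j_r}, w^J maps each of the intervals [0, j_1−1], [j_1, j_2−1], …, [j_r, l] onto itself reversing the order within it. Then for every w ∈ S_{l+1}: w ∈ W⁻_[J] if and only if w_∘ ∘ w ∘ w^J ∈ W⁻_[J]. -/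
/-- `loJ l J x`: the left endpoint of the block of the partition of `{0,…,l}`
determined by `J` which contains the position `x`; the cuts are the positions
`i+1` for `i ∈ J` (root `α_{i+1}` separates positions `i` and `i+1`). -/
def loJ (l : ℕ) (J : Finset (Fin l)) (x : Fin (l + 1)) : ℕ :=
  (J.filter fun i : Fin l => (i : ℕ) + 1 ≤ (x : ℕ)).sup fun i : Fin l => (i : ℕ) + 1

/-- `hiJ l J x`: the right endpoint of the block containing the position `x`. -/
def hiJ (l : ℕ) (J : Finset (Fin l)) (x : Fin (l + 1)) : ℕ :=
  (insert l ((J.filter fun i : Fin l => (x : ℕ) ≤ (i : ℕ)).image fun i : Fin l => (i : ℕ))).min'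
    (Finset.insert_nonempty _ _)

namespace WmAux

variable (l : ℕ) (J : Finset (Fin l))

lemma loJ_le (x : Fin (l+1)) : loJ l J x ≤ (x:ℕ) :=
  Finset.sup_le fun i hi => (Finset.mem_filter.1 hi).2

lemma le_hiJ (x : Fin (l+1)) : (x:ℕ) ≤ hiJ l J x := by
  apply Finset.le_min'
  intro y hy
  rcases Finset.mem_insert.1 hy with h | h
  · have := x.isLt; omega
  · rcases Finset.mem_image.1 h with ⟨i, hi, rfl⟩
    exact (Finset.mem_filter.1 hi).2

lemma hiJ_le (x : Fin (l+1)) : hiJ l J x ≤ l :=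
  Finset.min'_le _ l (Finset.mem_insert_self _ _)

lemma block_gap (x : Fin (l+1)) {j : Fin l} (hj : j ∈ J) :
    (j:ℕ)+1 ≤ loJ l J x ∨ hiJ l J x ≤ (j:ℕ) := by
  by_cases h : (j:ℕ)+1 ≤ (x:ℕ)
  · exact Or.inl (Finset.le_sup (f := fun i : Fin l => (i:ℕ)+1) (Finset.mem_filter.2 ⟨hj, h⟩))
  · refine Or.inr (Finset.min'_le _ _ (Finset.mem_insert_of_mem ?_))
    exact Finset.mem_image.2 ⟨j, Finset.mem_filter.2 ⟨hj, by omega⟩, rfl⟩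

lemma loJ_eq (x y : Fin (l+1)) (h1 : loJ l J x ≤ (y:ℕ)) (h2 : (y:ℕ) ≤ hiJ l J x) :
    loJ l J y = loJ l J x := by
  apply le_antisymm
  · apply Finset.sup_le
    intro j hj
    have hjJ := (Finset.mem_filter.1 hj).1
    have hjy := (Finset.mem_filter.1 hj).2
    rcases block_gap l J x hjJ with h | h
    · exact h
    · omega
  · apply Finset.sup_le
    intro j hj
    have hjJ := (Finset.mem_filter.1 hj).1
    have hle : (j:ℕ)+1 ≤ loJ l J x :=
      Finset.le_sup (f := fun i : Fin l => (i:ℕ)+1) hj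
    exact Finset.le_sup (f := fun i : Fin l => (i:ℕ)+1)
      (Finset.mem_filter.2 ⟨hjJ, by omega⟩)

lemma hiJ_eq (x y : Fin (l+1)) (h1 : loJ l J x ≤ (y:ℕ)) (h2 : (y:ℕ) ≤ hiJ l J x) :
    hiJ l J y = hiJ l J x := by
  apply le_antisymm
  · have hmem := Finset.min'_mem (insert l ((J.filter fun i : Fin l => (x:ℕ) ≤ (i:ℕ)).image
      fun i : Fin l => (i:ℕ))) (Finset.insert_nonempty _ _)
    rcases Finset.mem_insert.1 hmem with h | h
    · have : hiJ l J x = l := h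
      rw [this]
      exact hiJ_le l J y
    · rcases Finset.mem_image.1 h with ⟨j, hj, hjeq⟩
      have hjJ := (Finset.mem_filter.1 hj).1
      apply Finset.min'_le
      apply Finset.mem_insert_of_mem
      refine Finset.mem_image.2 ⟨j, Finset.mem_filter.2 ⟨hjJ, ?_⟩, hjeq⟩
      have : (j:ℕ) = hiJ l J x := hjeq
      omega
  · apply Finset.le_min'
    intro z hz
    rcases Finset.mem_insert.1 hz with h | h
    · exact le_of_le_of_eq (hiJ_le l J x) h.symm
    · rcases Finset.mem_image.1 h with ⟨j, hj, rfl⟩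
      have hjJ := (Finset.mem_filter.1 hj).1
      have hjy := (Finset.mem_filter.1 hj).2
      rcases block_gap l J x hjJ with h' | h' <;> omega

lemma adj_lo (i : Fin l) (hi : i ∉ J) :
    loJ l J i.succ = loJ l J i.castSucc := by
  have hfilt : (J.filter fun j : Fin l => (j:ℕ)+1 ≤ ((i.succ : Fin (l+1)):ℕ)) =
      (J.filter fun j : Fin l => (j:ℕ)+1 ≤ ((i.castSucc : Fin (l+1)):ℕ)) := by
    apply Finset.filter_congr
    intro j hj
    have hne : (j:ℕ) ≠ (i:ℕ) := fun h => hi (Fin.val_injective h ▸ hj)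
    simp only [Fin.val_succ, Fin.coe_castSucc, eq_iff_iff]
    constructor <;> intro h <;> omega
  unfold loJ
  rw [hfilt]

lemma adj_hi (i : Fin l) (hi : i ∉ J) :
    hiJ l J i.succ = hiJ l J i.castSucc := by
  have hfilt : (J.filter fun j : Fin l => ((i.succ : Fin (l+1)):ℕ) ≤ (j:ℕ)) =
      (J.filter fun j : Fin l => ((i.castSucc : Fin (l+1)):ℕ) ≤ (j:ℕ)) := by
    apply Finset.filter_congr
    intro j hj
    have hne : (j:ℕ) ≠ (i:ℕ) := fun h => hi (Fin.val_injective h ▸ hj)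
    simp only [Fin.val_succ, Fin.coe_castSucc, eq_iff_iff]
    constructor <;> intro h <;> omega
  have hset : (insert l ((J.filter fun j : Fin l => ((i.succ : Fin (l+1)):ℕ) ≤ (j:ℕ)).image
      fun j : Fin l => (j:ℕ))) = (insert l ((J.filter fun j : Fin l =>
      ((i.castSucc : Fin (l+1)):ℕ) ≤ (j:ℕ)).image fun j : Fin l => (j:ℕ))) := by
    rw [hfilt]
  unfold hiJ
  apply le_antisymm
  · apply Finset.min'_le
    rw [hset]
    exact Finset.min'_mem _ _
  · apply Finset.min'_le
    rw [← hset]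
    exact Finset.min'_mem _ _

lemma key (w0 wJ : Equiv.Perm (Fin (l + 1)))
    (hw0 : ∀ x : Fin (l + 1), ((w0 x : ℕ)) = l - (x : ℕ))
    (hwJ : ∀ x : Fin (l + 1), ((wJ x : ℕ)) = loJ l J x + hiJ l J x - (x : ℕ))
    (w : Equiv.Perm (Fin (l + 1))) (hw : w ∈ Wminus l J) :
    w0 * w * wJ ∈ Wminus l J := by
  rw [Wminus, Finset.mem_filter] at hw ⊢
  refine ⟨Finset.mem_univ _, ?_⟩
  intro i hi
  set x := i.castSucc with hx
  set y := i.succ with hy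
  have hxv : (x:ℕ) = (i:ℕ) := rfl
  have hyv : (y:ℕ) = (i:ℕ)+1 := rfl
  have hLx : loJ l J x ≤ (i:ℕ) := by have := loJ_le l J x; omega
  have hHy : (i:ℕ)+1 ≤ hiJ l J y := by have := le_hiJ l J y; omega
  have hlo : loJ l J y = loJ l J x := adj_lo l J i hi
  have hhi : hiJ l J y = hiJ l J x := adj_hi l J i hi
  have hHl : hiJ l J y ≤ l := hiJ_le l J y
  -- values of wJ at x and y
  have ha : (wJ y : ℕ) = loJ l J x + hiJ l J x - ((i:ℕ)+1) := by
    rw [hwJ y, hlo, hhi, hyv]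
  have hb : (wJ x : ℕ) = loJ l J x + hiJ l J x - (i:ℕ) := by
    rw [hwJ x, hxv]
  have hba : (wJ x : ℕ) = (wJ y : ℕ) + 1 := by
    rw [ha, hb]; omega
  have halt : (wJ y : ℕ) < l := by
    have := (wJ x).isLt; omega
  set a' : Fin l := ⟨(wJ y : ℕ), halt⟩ with ha'
  have hcast : a'.castSucc = wJ y := by
    apply Fin.ext; simp [ha']
  have hsucc : a'.succ = wJ x := by
    apply Fin.ext; simp [ha', hba]
  have ha'J : a' ∉ J := by
    intro hmem
    rcases block_gap l J y hmem with h | h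
    · simp only [ha'] at h
      rw [hlo] at h
      omega
    · simp only [ha'] at h
      rw [hhi] at h
      omega
  obtain ⟨hlt, hodd⟩ := hw.2 a' ha'J
  rw [hcast, hsucc] at hlt hodd
  have hwa := (w (wJ y)).isLt
  have hwb := (w (wJ x)).isLt
  simp only [Equiv.Perm.mul_apply]
  constructor
  · rw [Fin.lt_def]
    rw [hw0 (w (wJ x)), hw0 (w (wJ y))]
    rw [Fin.lt_def] at hlt
    omega
  · rw [hw0 (w (wJ x)), hw0 (w (wJ y))]
    rcases hodd with ⟨m, hm⟩
    rw [Fin.lt_def] at hlt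
    exact ⟨l - m - 1, by omega⟩

end WmAux

/-- **Casian–Kodama, Lemma 4.6 (Poincaré duality of Weyl elements)**: let
`w₀` be the order-reversing permutation `x ↦ l − x` of `{0,…,l}` (the longest Weyl
element), and let `w^J` be the permutation reversing each maximal block of the
partition of `{0,…,l}` determined by `J` (the longest element of `W^J`), i.e.
`w^J(x) = lo(x) + hi(x) − x`.  Then `w ∈ W⁻_[J]` iff `w₀ ∘ w ∘ w^J ∈ W⁻_[J]`. -/
theorem Wminus_duality (l : ℕ) (J : Finset (Fin l)) (w0 wJ : Equiv.Perm (Fin (l + 1)))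
    (hw0 : ∀ x : Fin (l + 1), ((w0 x : ℕ)) = l - (x : ℕ))
    (hwJ : ∀ x : Fin (l + 1), ((wJ x : ℕ)) = loJ l J x + hiJ l J x - (x : ℕ)) :
    ∀ w : Equiv.Perm (Fin (l + 1)), w ∈ Wminus l J ↔ w0 * w * wJ ∈ Wminus l J := by
  have hw0inv : ∀ x, w0 (w0 x) = x := by
    intro x
    apply Fin.ext
    rw [hw0, hw0]
    have := x.isLt; omega
  have hwJinv : ∀ x, wJ (wJ x) = x := by
    intro x
    have hL := WmAux.loJ_le l J x
    have hH := WmAux.le_hiJ l J x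
    have h1 : loJ l J x ≤ ((wJ x : Fin (l+1)) : ℕ) := by rw [hwJ]; omega
    have h2 : ((wJ x : Fin (l+1)) : ℕ) ≤ hiJ l J x := by rw [hwJ]; omega
    apply Fin.ext
    rw [hwJ (wJ x), WmAux.loJ_eq l J x (wJ x) h1 h2, WmAux.hiJ_eq l J x (wJ x) h1 h2, hwJ x]
    omega
  intro w
  constructor
  · exact WmAux.key l J w0 wJ hw0 hwJ w
  · intro h
    have := WmAux.key l J w0 wJ hw0 hwJ _ h
    have heq : w0 * (w0 * w * wJ) * wJ = w := by
      ext x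
      simp only [Equiv.Perm.mul_apply]
      rw [hwJinv, hw0inv]
    rwa [heq] at this
end

section
/- Let l ≥ 2. The set { t ∈ ℝ^l : τ_j(t) = 0 for every j ∈ {1,…,l}∖{2}, and τ_2(t) ≠ 0 } (the affine part of the one-dimensional Painlevé divisor 𝒟^{{α_2}} of the nilpotent sl(l+1,ℝ) Toda lattice) has exactly 2·⌊(l+1)/2⌋ connected components. -/
/-- `pp l k t` is the polynomial `p_k(t₁,…,t_l)` defined by the generating function
`exp(Σ tₙ λⁿ) = Σ p_k λᵏ`, i.e. `p_k(t) = Σ t₁^{k₁}⋯t_l^{k_l}/(k₁!⋯k_l!)`, summed over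
the tuples `(k₁,…,k_l)` of nonnegative integers with `k₁ + 2k₂ + ⋯ + l·k_l = k`
(each `kᵢ ≤ k`, so the tuples may be taken in `Fin (k+1)`). -/
noncomputable def pp (l k : ℕ) (t : Fin l → ℝ) : ℝ :=
  ∑ f ∈ Finset.univ.filter
      (fun f : Fin l → Fin (k + 1) => ∑ i : Fin l, ((i : ℕ) + 1) * (f i : ℕ) = k),
    ∏ i : Fin l, t i ^ (f i : ℕ) / (Nat.factorial (f i : ℕ) : ℝ)

/-- `tauP l k t` is the τ-function `τ_k(t) = det[(p_{l-i-j}(t))_{0≤i,j≤k-1}]` of the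
nilpotent Toda lattice for `sl(l+1,ℝ)`, with `p_m := 0` for `m < 0`. -/
noncomputable def tauP (l k : ℕ) (t : Fin l → ℝ) : ℝ :=
  Matrix.det (Matrix.of fun i j : Fin k =>
    if (i : ℕ) + (j : ℕ) ≤ l then pp l (l - (i : ℕ) - (j : ℕ)) t else 0)


open Real

/-- Fibonacci-like bivariate polynomials: `PF (k+2) = α * PF (k+1) + β * PF k`. -/
noncomputable def PF : ℕ → ℝ → ℝ → ℝ
  | 0, _, _ => 1
  | 1, a, _ => a
  | (k+2), a, b => a * PF (k+1) a b + b * PF k a b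

lemma PF_zero (a b : ℝ) : PF 0 a b = 1 := rfl
lemma PF_one (a b : ℝ) : PF 1 a b = a := rfl
lemma PF_add_two (k : ℕ) (a b : ℝ) : PF (k+2) a b = a * PF (k+1) a b + b * PF k a b := rfl

lemma PF_continuous (k : ℕ) : Continuous (fun z : ℝ × ℝ => PF k z.1 z.2) := by
  induction k using Nat.strong_induction_on with
  | _ k ih =>
    match k with
    | 0 => simpa [PF] using continuous_const
    | 1 => simpa [PF] using continuous_fst
    | (m+2) =>
      have h1 := ih (m+1) (by omega)
      have h0 := ih m (by omega)
      simp only [PF_add_two]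
      exact (continuous_fst.mul h1).add (continuous_snd.mul h0)

lemma PF_neg (k : ℕ) (a b : ℝ) : PF k (-a) b = (-1)^k * PF k a b := by
  induction k using Nat.strong_induction_on with
  | _ k ih =>
    match k with
    | 0 => simp [PF]
    | 1 => simp [PF]
    | (m+2) =>
      rw [PF_add_two, PF_add_two, ih (m+1) (by omega), ih m (by omega)]
      ring

lemma PF_pos (k : ℕ) {a b : ℝ} (ha : 0 < a) (hb : 0 < b) : 0 < PF k a b := by
  induction k using Nat.strong_induction_on with
  | _ k ih =>
    match k with
    | 0 => norm_num [PF]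
    | 1 => simpa [PF] using ha
    | (m+2) =>
      rw [PF_add_two]
      have h1 := ih (m+1) (by omega)
      have h0 := ih m (by omega)
      nlinarith

lemma PF_beta_zero (k : ℕ) (a : ℝ) : PF k a 0 = a ^ k := by
  induction k using Nat.strong_induction_on with
  | _ k ih =>
    match k with
    | 0 => simp [PF]
    | 1 => simp [PF]
    | (m+2) =>
      rw [PF_add_two, ih (m+1) (by omega)]
      ring

lemma PF_even_alpha_zero (j : ℕ) (b : ℝ) : PF (2*j) 0 b = b ^ j := by
  induction j with
  | zero => simp [PF]
  | succ m ih =>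
    have : 2*(m+1) = (2*m)+2 := by omega
    rw [this, PF_add_two, ih]
    ring

lemma PF_odd_alpha_zero (j : ℕ) (b : ℝ) : PF (2*j+1) 0 b = 0 := by
  induction j with
  | zero => simp [PF]
  | succ m ih =>
    have : 2*(m+1)+1 = (2*m+1)+2 := by omega
    rw [this, PF_add_two, ih]
    ring

/-- Chebyshev-U-like: `uC k c = PF k (2c) (-1)`. -/
noncomputable def uC (k : ℕ) (c : ℝ) : ℝ := PF k (2*c) (-1)

lemma uC_zero (c : ℝ) : uC 0 c = 1 := rfl
lemma uC_one (c : ℝ) : uC 1 c = 2*c := rfl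
lemma uC_add_two (k : ℕ) (c : ℝ) : uC (k+2) c = 2*c * uC (k+1) c - uC k c := by
  simp only [uC, PF_add_two]; ring

/-- scaling: `PF k (2ρc) (-ρ²) = ρ^k * uC k c`. -/
lemma PF_scale (k : ℕ) (ρ c : ℝ) : PF k (2*ρ*c) (-ρ^2) = ρ^k * uC k c := by
  induction k using Nat.strong_induction_on with
  | _ k ih =>
    match k with
    | 0 => simp [PF, uC]
    | 1 => simp [PF, uC]; ring
    | (m+2) =>
      rw [PF_add_two, ih (m+1) (by omega), ih m (by omega), uC_add_two]
      ring

lemma uC_sin (k : ℕ) (θ : ℝ) : uC k (Real.cos θ) * Real.sin θ = Real.sin ((k+1) * θ) := by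
  induction k using Nat.strong_induction_on with
  | _ k ih =>
    match k with
    | 0 => simp [uC_zero]
    | 1 => rw [uC_one]; rw [show ((1:ℕ)+1:ℝ)*θ = 2*θ by push_cast; ring, Real.sin_two_mul]; ring
    | (m+2) =>
      have h1 := ih (m+1) (by omega)
      have h0 := ih m (by omega)
      rw [uC_add_two]
      have key : Real.sin (((m+2:ℕ)+1) * θ) + Real.sin (((m:ℕ)+1) * θ)
          = 2 * Real.sin (((m+1:ℕ)+1) * θ) * Real.cos θ := by
        have e1 : (((m+2:ℕ)+1):ℝ) * θ = ((m+1:ℕ)+1) * θ + θ := by push_cast; ring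
        have e2 : (((m:ℕ)+1):ℝ) * θ = ((m+1:ℕ)+1) * θ - θ := by push_cast; ring
        rw [e1, e2, Real.sin_add, Real.sin_sub]
        ring
      linear_combination 2*Real.cos θ * h1 - h0 - key

lemma uC_neg (k : ℕ) (c : ℝ) : uC k (-c) = (-1)^k * uC k c := by
  have : (2:ℝ) * -c = -(2*c) := by ring
  rw [uC, this, PF_neg]; rfl

lemma uC_ge_one (k : ℕ) {c : ℝ} (hc : 1 ≤ c) : 1 ≤ uC k c ∧ uC k c ≤ uC (k+1) c := by
  induction k with
  | zero => constructor <;> simp [uC_zero, uC_one] <;> linarith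
  | succ m ih =>
    obtain ⟨h1, h2⟩ := ih
    have h3 : uC (m+2) c = 2*c*uC (m+1) c - uC m c := uC_add_two m c
    constructor
    · nlinarith
    · nlinarith

lemma uC_ne_zero_of_one_le_abs (k : ℕ) {c : ℝ} (hc : 1 ≤ |c|) : uC k c ≠ 0 := by
  rcases abs_cases c with ⟨h, _⟩ | ⟨h, _⟩
  · have := (uC_ge_one k (by linarith : 1 ≤ c)).1
    linarith
  · have hc' : 1 ≤ -c := by linarith
    have := (uC_ge_one k hc').1
    have hn := uC_neg k (-c)
    rw [neg_neg] at hn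
    rw [hn]
    intro h0
    have : uC k (-c) = 0 := by
      rcases Nat.even_or_odd k with he | ho
      · rw [he.neg_one_pow] at h0; linarith [h0]
      · rw [ho.neg_one_pow] at h0; linarith [h0]
    linarith

lemma pp_zero (l : ℕ) (t : Fin l → ℝ) : pp l 0 t = 1 := by
  unfold pp
  rw [Finset.sum_eq_single (fun _ => (0 : Fin 1))]
  · simp
  · intro f _ hf
    exact absurd (funext fun i => Subsingleton.elim _ _) hf
  · intro h
    exact absurd (Finset.mem_filter.mpr ⟨Finset.mem_univ _, by simp⟩) h

lemma pp_continuous (l k : ℕ) : Continuous (fun t : Fin l → ℝ => pp l k t) := by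
  unfold pp
  apply continuous_finset_sum
  intro f _
  apply continuous_finset_prod
  intro i _
  exact ((continuous_apply i).pow _).div_const _

/-- `pp l k` only depends on the coordinates `t_i` with `i+1 ≤ k`. -/
lemma pp_congr (l k : ℕ) {t t' : Fin l → ℝ}
    (h : ∀ i : Fin l, (i:ℕ) + 1 ≤ k → t i = t' i) : pp l k t = pp l k t' := by
  unfold pp
  apply Finset.sum_congr rfl
  intro f hf
  rw [Finset.mem_filter] at hf
  apply Finset.prod_congr rfl
  intro i _
  rcases Nat.eq_zero_or_pos (f i : ℕ) with h0 | hpos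
  · rw [h0]; simp
  · have hle : ((i:ℕ)+1) ≤ k := by
      calc (i:ℕ)+1 ≤ ((i:ℕ)+1) * (f i : ℕ) := Nat.le_mul_of_pos_right _ hpos
      _ ≤ ∑ j : Fin l, ((j:ℕ)+1) * (f j : ℕ) :=
          Finset.single_le_sum (f := fun j : Fin l => ((j:ℕ)+1)*(f j:ℕ))
            (fun j _ => Nat.zero_le _) (Finset.mem_univ i)
      _ = k := hf.2
    rw [h i hle]

/-- Extraction of the top coordinate: for `1 ≤ k ≤ l`,
`pp l k t = t (k-1) + pp l k (t with coordinate k-1 replaced by 0)`. -/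
lemma pp_extract (l k : ℕ) (hk1 : 1 ≤ k) (hkl : k ≤ l) (t : Fin l → ℝ) :
    pp l k t = t ⟨k-1, by omega⟩ + pp l k (Function.update t ⟨k-1, by omega⟩ 0) := by
  set j₀ : Fin l := ⟨k-1, by omega⟩ with hj₀
  have hcoe : ((j₀ : ℕ) + 1) = k := by simp [hj₀]; omega
  set F₀ : Fin l → Fin (k+1) := fun i => if i = j₀ then ⟨1, by omega⟩ else ⟨0, by omega⟩ with hF₀
  have hF₀w : ∑ i : Fin l, ((i:ℕ)+1) * (F₀ i : ℕ) = k := by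
    have : ∀ i : Fin l, ((i:ℕ)+1) * (F₀ i : ℕ) = if i = j₀ then k else 0 := by
      intro i
      by_cases h : i = j₀ <;> simp [hF₀, h]
      · subst h; omega
    rw [Finset.sum_congr rfl (fun i _ => this i), Finset.sum_ite_eq' Finset.univ j₀]
    simp
  -- characterize the f's with f j₀ ≠ 0
  have hchar : ∀ f : Fin l → Fin (k+1),
      (∑ i : Fin l, ((i:ℕ)+1) * (f i : ℕ) = k) → (f j₀ : ℕ) ≠ 0 → f = F₀ := by
    intro f hw hne
    have h1 : ((j₀:ℕ)+1) * (f j₀ : ℕ) ≤ k := by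
      calc ((j₀:ℕ)+1) * (f j₀:ℕ)
          ≤ ∑ j : Fin l, ((j:ℕ)+1)*(f j:ℕ) :=
            Finset.single_le_sum (f := fun j : Fin l => ((j:ℕ)+1)*(f j:ℕ))
              (fun j _ => Nat.zero_le _) (Finset.mem_univ j₀)
        _ = k := hw
    have hfj : (f j₀ : ℕ) = 1 := by rw [hcoe] at h1; nlinarith [Nat.one_le_iff_ne_zero.mpr hne]
    have hrest : ∀ i : Fin l, i ≠ j₀ → (f i : ℕ) = 0 := by
      intro i hi
      by_contra hne2
      have hip : 1 ≤ (f i : ℕ) := Nat.one_le_iff_ne_zero.mpr hne2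
      have : k + ((i:ℕ)+1) ≤ ∑ j : Fin l, ((j:ℕ)+1) * (f j : ℕ) := by
        have hsub : ({j₀, i} : Finset (Fin l)) ⊆ Finset.univ := Finset.subset_univ _
        calc k + ((i:ℕ)+1) = ((j₀:ℕ)+1) * (f j₀ : ℕ) + ((i:ℕ)+1) * 1 := by
              rw [hfj, hcoe]; ring
          _ ≤ ((j₀:ℕ)+1) * (f j₀ : ℕ) + ((i:ℕ)+1) * (f i : ℕ) := by
              have := Nat.mul_le_mul_left ((i:ℕ)+1) hip
              omega
          _ = ∑ j ∈ ({j₀, i} : Finset (Fin l)), ((j:ℕ)+1) * (f j : ℕ) := by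
              rw [Finset.sum_pair (Ne.symm hi)]
          _ ≤ _ := Finset.sum_le_sum_of_subset hsub
      omega
    funext i
    by_cases h : i = j₀
    · subst h; simp [hF₀]; exact Fin.ext (by simpa using hfj)
    · simp [hF₀, h]; exact Fin.ext (by simpa using hrest i h)
  have hmemF₀ : F₀ ∈ Finset.univ.filter
      (fun f : Fin l → Fin (k+1) => ∑ i : Fin l, ((i:ℕ)+1) * (f i : ℕ) = k) :=
    Finset.mem_filter.mpr ⟨Finset.mem_univ _, hF₀w⟩
  set FS := Finset.univ.filter
      (fun f : Fin l → Fin (k+1) => ∑ i : Fin l, ((i:ℕ)+1) * (f i : ℕ) = k) with hFS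
  have e2 : FS.filter (fun f => ¬ (f j₀ : ℕ) = 0) = {F₀} := by
    apply Finset.Subset.antisymm
    · intro f hf
      simp only [hFS, Finset.mem_filter] at hf
      simp [hchar f hf.1.2 hf.2]
    · intro f hf
      simp only [Finset.mem_singleton] at hf
      subst hf
      refine Finset.mem_filter.mpr ⟨hmemF₀, ?_⟩
      simp [hF₀]
  have hprodF₀ : ∏ i : Fin l, t i ^ (F₀ i : ℕ) / (Nat.factorial (F₀ i) : ℝ) = t j₀ := by
    rw [Finset.prod_eq_single j₀]
    · simp [hF₀]
    · intro i _ hi; simp [hF₀, hi]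
    · intro h; exact absurd (Finset.mem_univ _) h
  have hprodF₀' : ∏ i : Fin l, (Function.update t j₀ 0) i ^ (F₀ i : ℕ) / (Nat.factorial (F₀ i) : ℝ) = 0 := by
    apply Finset.prod_eq_zero (Finset.mem_univ j₀)
    simp [hF₀]
  have heq1 : ∀ f ∈ FS.filter (fun f => (f j₀ : ℕ) = 0),
      (∏ i : Fin l, (Function.update t j₀ 0) i ^ (f i : ℕ) / (Nat.factorial (f i):ℝ))
      = ∏ i : Fin l, t i ^ (f i : ℕ) / (Nat.factorial (f i):ℝ) := by
    intro f hf
    simp only [Finset.mem_filter] at hf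
    apply Finset.prod_congr rfl
    intro i _
    by_cases h : i = j₀
    · subst h; rw [hf.2]; simp
    · rw [Function.update_of_ne h]
  have hupd : pp l k (Function.update t j₀ 0)
      = ∑ f ∈ FS.filter (fun f => (f j₀ : ℕ) = 0),
          ∏ i : Fin l, t i ^ (f i : ℕ) / (Nat.factorial (f i):ℝ) := by
    unfold pp
    rw [← hFS, ← Finset.sum_filter_add_sum_filter_not FS (fun f => (f j₀ : ℕ) = 0), e2,
      Finset.sum_singleton, hprodF₀', Finset.sum_congr rfl heq1]
    ring
  have hmain : pp l k t
      = (∑ f ∈ FS.filter (fun f => (f j₀ : ℕ) = 0),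
          ∏ i : Fin l, t i ^ (f i : ℕ) / (Nat.factorial (f i):ℝ)) + t j₀ := by
    unfold pp
    rw [← hFS, ← Finset.sum_filter_add_sum_filter_not FS (fun f => (f j₀ : ℕ) = 0), e2,
      Finset.sum_singleton, hprodF₀]
  rw [hmain, hupd]
  ring

/-- Triangular inverse of the map `t ↦ (pp l 1 t, …, pp l l t)`. -/
noncomputable def gA (l : ℕ) : ℕ → (Fin l → ℝ) → ℝ
  | k, x =>
    (if h : k < l then x ⟨k, h⟩ else 0) -
      pp l (k+1) (fun i : Fin l => if h2 : (i:ℕ) < k then gA l i x else 0)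
  termination_by k => k
  decreasing_by exact h2

lemma gA_eq (l k : ℕ) (x : Fin l → ℝ) :
    gA l k x = (if h : k < l then x ⟨k, h⟩ else 0) -
      pp l (k+1) (fun i : Fin l => if h2 : (i:ℕ) < k then gA l i x else 0) := by
  rw [gA]

noncomputable def Ginv (l : ℕ) (x : Fin l → ℝ) : Fin l → ℝ := fun i => gA l i x

lemma gA_continuous (l k : ℕ) : Continuous (fun x : Fin l → ℝ => gA l k x) := by
  induction k using Nat.strong_induction_on with
  | _ k ih =>
    have h2 : Continuous (fun x : Fin l → ℝ =>
        (fun i : Fin l => if h2 : (i:ℕ) < k then gA l i x else 0)) := by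
      apply continuous_pi
      intro i
      by_cases h : (i:ℕ) < k
      · simpa [h] using ih i h
      · simpa [h] using continuous_const
    have : Continuous (fun x : Fin l → ℝ =>
        (if h : k < l then x ⟨k, h⟩ else 0) -
          pp l (k+1) (fun i : Fin l => if h2 : (i:ℕ) < k then gA l i x else 0)) := by
      apply Continuous.sub
      · by_cases h : k < l
        · simpa [h] using continuous_apply (⟨k, h⟩ : Fin l)
        · simpa [h] using continuous_const
      · exact (pp_continuous l (k+1)).comp h2
    convert this using 1
    funext x
    exact gA_eq l k x

lemma Ginv_continuous (l : ℕ) : Continuous (Ginv l) :=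
  continuous_pi fun i => gA_continuous l i

/-- `pp (k+1)` of `Ginv x` recovers `x k`. -/
lemma pp_Ginv (l : ℕ) (x : Fin l → ℝ) (k : ℕ) (hk : k < l) :
    pp l (k+1) (Ginv l x) = x ⟨k, hk⟩ := by
  have h1 : 1 ≤ k+1 := by omega
  have h2 : k+1 ≤ l := by omega
  have hidx : (⟨k+1-1, by omega⟩ : Fin l) = ⟨k, hk⟩ := by simp
  have e1 := pp_extract l (k+1) h1 h2 (Ginv l x)
  have e2 := pp_extract l (k+1) h1 h2 (fun i : Fin l => if h2 : (i:ℕ) < k then gA l i x else 0)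
  rw [hidx] at e1 e2
  have hagree : pp l (k+1) (Function.update (Ginv l x) ⟨k, hk⟩ 0)
      = pp l (k+1) (Function.update (fun i : Fin l => if h2 : (i:ℕ) < k then gA l i x else 0) ⟨k, hk⟩ 0) := by
    apply pp_congr
    intro i hi
    by_cases h : i = (⟨k, hk⟩ : Fin l)
    · subst h; simp
    · rw [Function.update_of_ne h, Function.update_of_ne h]
      have hilt : (i:ℕ) < k := by
        have : (i:ℕ) ≠ k := fun hc => h (Fin.ext hc)
        omega
      simp [hilt, Ginv]
  rw [dif_neg (by simp : ¬ (((⟨k, hk⟩ : Fin l)):ℕ) < k)] at e2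
  have : pp l (k+1) (Ginv l x) = Ginv l x ⟨k, hk⟩ +
      pp l (k+1) (fun i : Fin l => if h2 : (i:ℕ) < k then gA l i x else 0) := by
    rw [e1, hagree, e2]; ring
  rw [this]
  show gA l k x + _ = _
  rw [gA_eq l k x]
  simp [hk]

/-- The forward map. -/
noncomputable def Fmap (l : ℕ) (t : Fin l → ℝ) : Fin l → ℝ := fun i => pp l ((i:ℕ)+1) t

lemma Ginv_Fmap (l : ℕ) (t : Fin l → ℝ) : Ginv l (Fmap l t) = t := by
  funext j
  suffices h : ∀ k : ℕ, ∀ hk : k < l, gA l k (Fmap l t) = t ⟨k, hk⟩ by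
    exact h j j.isLt |>.trans (by simp)
  intro k
  induction k using Nat.strong_induction_on with
  | _ k ih =>
    intro hk
    rw [gA_eq]
    simp only [hk, dif_pos]
    have harg : (fun i : Fin l => if h2 : (i:ℕ) < k then gA l i (Fmap l t) else 0)
        = (fun i : Fin l => if (i:ℕ) < k then t i else 0) := by
      funext i
      by_cases h : (i:ℕ) < k
      · simp only [h, dif_pos, if_pos]
        rw [ih i h i.isLt]
      · simp [h]
    rw [harg]
    have h1 : 1 ≤ k+1 := by omega
    have h2 : k+1 ≤ l := by omega
    have hidx : (⟨k+1-1, by omega⟩ : Fin l) = ⟨k, hk⟩ := by simp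
    have e1 := pp_extract l (k+1) h1 h2 t
    have e2 := pp_extract l (k+1) h1 h2 (fun i : Fin l => if (i:ℕ) < k then t i else 0)
    rw [hidx] at e1 e2
    have hagree : pp l (k+1) (Function.update t ⟨k, hk⟩ 0)
        = pp l (k+1) (Function.update (fun i : Fin l => if (i:ℕ) < k then t i else 0) ⟨k, hk⟩ 0) := by
      apply pp_congr
      intro i hi
      by_cases h : i = (⟨k, hk⟩ : Fin l)
      · subst h; simp
      · rw [Function.update_of_ne h, Function.update_of_ne h]
        have hilt : (i:ℕ) < k := by
          have : (i:ℕ) ≠ k := fun hc => h (Fin.ext hc)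
          omega
        simp [hilt]
    rw [if_neg (by simp : ¬ (((⟨k, hk⟩ : Fin l)):ℕ) < k)] at e2
    have : pp l (k+1) (fun i : Fin l => if (i:ℕ) < k then t i else 0)
        = pp l (k+1) t - t ⟨k, hk⟩ := by
      rw [e2, ← hagree, e1]; ring
    rw [this]
    show Fmap l t ⟨k, hk⟩ - _ = _
    simp [Fmap]

/-! ### Hankel determinant machinery -/

def hankelM (a : ℕ → ℝ) (k : ℕ) : Matrix (Fin k) (Fin k) ℝ :=
  Matrix.of fun i j : Fin k => a ((i:ℕ) + (j:ℕ))

/-- `sval a γ δ n = a n - γ a (n-1) - δ a (n-2)`. -/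
def sval (a : ℕ → ℝ) (γ δ : ℝ) (n : ℕ) : ℝ := a n - γ * a (n-1) - δ * a (n-2)

/-- the matrix after the row operations `Rᵢ ↦ Rᵢ - γ Rᵢ₋₁ - δ Rᵢ₋₂` for `i ≥ 2`. -/
def Bmat (a : ℕ → ℝ) (γ δ : ℝ) (k : ℕ) : Matrix (Fin k) (Fin k) ℝ :=
  Matrix.of fun i j : Fin k =>
    if 2 ≤ (i:ℕ) then sval a γ δ ((i:ℕ) + (j:ℕ)) else a ((i:ℕ) + (j:ℕ))

/-- family interpolating: rows `i` with `2 ≤ i` and `j ≤ i` transformed. -/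
def Mfam (a : ℕ → ℝ) (γ δ : ℝ) (k : ℕ) (m : ℕ) : Matrix (Fin k) (Fin k) ℝ :=
  Matrix.of fun i j : Fin k =>
    if 2 ≤ (i:ℕ) ∧ m ≤ (i:ℕ) then sval a γ δ ((i:ℕ) + (j:ℕ)) else a ((i:ℕ) + (j:ℕ))

lemma det_Mfam (a : ℕ → ℝ) (γ δ : ℝ) (k : ℕ) :
    ∀ d m, 2 ≤ m → k ≤ m + d → (Mfam a γ δ k m).det = (hankelM a k).det := by
  intro d
  induction d with
  | zero =>
    intro m h2 hk
    congr 1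
    ext i j
    have : ¬ ((2:ℕ) ≤ (i:ℕ) ∧ m ≤ (i:ℕ)) := by
      rintro ⟨-, hmi⟩
      have := i.isLt
      omega
    simp [Mfam, hankelM, this]
  | succ d ih =>
    intro m h2 hk
    by_cases hm : k ≤ m + d
    · exact ih m h2 hm
    · -- k = m + d + 1 > m, so m < k ; do the two row updates at row m
      have hmk : m < k := by omega
      set i₀ : Fin k := ⟨m, hmk⟩ with hi₀
      set i₁ : Fin k := ⟨m-1, by omega⟩ with hi₁
      set i₂ : Fin k := ⟨m-2, by omega⟩ with hi₂
      have hne1 : i₀ ≠ i₁ := by simp [hi₀, hi₁, Fin.ext_iff]; omega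
      have hne2 : i₀ ≠ i₂ := by simp [hi₀, hi₂, Fin.ext_iff]; omega
      set M := Mfam a γ δ k (m+1) with hM
      set M' := M.updateRow i₀ (M i₀ + (-γ) • M i₁) with hM'
      have step1 : M'.det = M.det := Matrix.det_updateRow_add_smul_self M hne1 (-γ)
      have step2 : (M'.updateRow i₀ (M' i₀ + (-δ) • M' i₂)).det = M'.det :=
        Matrix.det_updateRow_add_smul_self M' hne2 (-δ)
      have hfinal : M'.updateRow i₀ (M' i₀ + (-δ) • M' i₂) = Mfam a γ δ k m := by
        ext i j
        by_cases hii : i = i₀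
        · subst hii
          rw [Matrix.updateRow_self]
          have hrow1 : M' i₀ = M i₀ + (-γ) • M i₁ := Matrix.updateRow_self
          have hrow2 : M' i₂ = M i₂ := Matrix.updateRow_ne (by exact fun h => hne2 h.symm)
          rw [Pi.add_apply, hrow1]
          simp only [Pi.add_apply, Pi.smul_apply, smul_eq_mul, hrow2]
          have hMi₀ : M i₀ j = a (m + (j:ℕ)) := by
            have : ¬ ((2:ℕ) ≤ m ∧ m+1 ≤ m) := by omega
            simp [hM, Mfam, hi₀, this]
          have hMi₁ : M i₁ j = a (m-1 + (j:ℕ)) := by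
            have : ¬ ((2:ℕ) ≤ m-1 ∧ m+1 ≤ m-1) := by omega
            simp [hM, Mfam, hi₁, this]
          have hMi₂ : M i₂ j = a (m-2 + (j:ℕ)) := by
            have : ¬ ((2:ℕ) ≤ m-2 ∧ m+1 ≤ m-2) := by omega
            simp [hM, Mfam, hi₂, this]
          have hcond : ((2:ℕ) ≤ m ∧ m ≤ m) := ⟨h2, le_refl m⟩
          have : Mfam a γ δ k m i₀ j = sval a γ δ (m + (j:ℕ)) := by
            simp [Mfam, hi₀, hcond]
          rw [this, hMi₀, hMi₁, hMi₂]
          unfold sval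
          have e1 : m + (j:ℕ) - 1 = m - 1 + (j:ℕ) := by omega
          have e2 : m + (j:ℕ) - 2 = m - 2 + (j:ℕ) := by omega
          rw [e1, e2]
          ring
        · rw [Matrix.updateRow_ne hii, hM', Matrix.updateRow_ne hii]
          have : ((2:ℕ) ≤ (i:ℕ) ∧ m+1 ≤ (i:ℕ)) ↔ ((2:ℕ) ≤ (i:ℕ) ∧ m ≤ (i:ℕ)) := by
            constructor
            · rintro ⟨ha, hb⟩; exact ⟨ha, by omega⟩
            · rintro ⟨ha, hb⟩
              refine ⟨ha, ?_⟩
              have : (i:ℕ) ≠ m := fun hc => hii (Fin.ext (by simp [hi₀, hc]))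
              omega
          by_cases hc : (2:ℕ) ≤ (i:ℕ) ∧ m+1 ≤ (i:ℕ)
          · simp [hM, Mfam, hc, this.mp hc]
            intro hh; exfalso; omega
          · have hc' : ¬ ((2:ℕ) ≤ (i:ℕ) ∧ m ≤ (i:ℕ)) := fun h => hc (this.mpr h)
            simp [hM, Mfam, hc, hc']
            intro hh1 hh2; exact absurd ⟨hh1, hh2⟩ hc
      calc (Mfam a γ δ k m).det = (M'.updateRow i₀ (M' i₀ + (-δ) • M' i₂)).det := by rw [hfinal]
        _ = M'.det := step2
        _ = M.det := step1
        _ = (hankelM a k).det := ih (m+1) (by omega) (by omega)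

lemma det_Bmat_eq (a : ℕ → ℝ) (γ δ : ℝ) (k : ℕ) :
    (hankelM a k).det = (Bmat a γ δ k).det := by
  have := det_Mfam a γ δ k k 2 (by omega) (by omega)
  rw [← this]
  congr 1
  ext i j
  by_cases hc : 2 ≤ (i:ℕ)
  · simp [Mfam, Bmat, hc]
  · simp [Mfam, Bmat, hc]

/-- Backward: if the recurrence holds in the window, the Hankel det vanishes. -/
lemma det_hankel_zero (a : ℕ → ℝ) (γ δ : ℝ) (k : ℕ) (hk : 3 ≤ k)
    (hs : ∀ n, 2 ≤ n → n ≤ k + 1 → sval a γ δ n = 0) :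
    (hankelM a k).det = 0 := by
  rw [det_Bmat_eq a γ δ k]
  apply Matrix.det_eq_zero_of_row_eq_zero (⟨2, by omega⟩ : Fin k)
  intro j
  have h2 : (2:ℕ) ≤ 2 := le_refl 2
  have : Bmat a γ δ k ⟨2, by omega⟩ j = sval a γ δ (2 + (j:ℕ)) := by
    simp [Bmat]
  rw [this]
  exact hs (2 + (j:ℕ)) (by omega) (by omega)

/-! ### The forward determinant computation -/

/-- the special permutation: `0 ↦ 1`, `1 ↦ 0`, `c ↦ k+1-c` for `2 ≤ c`. -/
def sigStarFun (k : ℕ) (hk : 3 ≤ k) : Fin k → Fin k := fun c =>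
  if h0 : (c:ℕ) = 0 then ⟨1, by omega⟩
  else if h1 : (c:ℕ) = 1 then ⟨0, by omega⟩
  else ⟨k+1-(c:ℕ), by have := c.isLt; omega⟩

lemma sigStarFun_val (k : ℕ) (hk : 3 ≤ k) (c : Fin k) :
    ((sigStarFun k hk c) : ℕ) =
      if (c:ℕ) = 0 then 1 else if (c:ℕ) = 1 then 0 else k+1-(c:ℕ) := by
  unfold sigStarFun
  by_cases h0 : (c:ℕ) = 0
  · simp [h0]
  · by_cases h1 : (c:ℕ) = 1 <;> simp [h0, h1]

lemma sigStarFun_involutive (k : ℕ) (hk : 3 ≤ k) : Function.Involutive (sigStarFun k hk) := by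
  intro c
  apply Fin.ext
  rw [sigStarFun_val, sigStarFun_val]
  have hck := c.isLt
  by_cases h0 : (c:ℕ) = 0
  · simp [h0]
  · by_cases h1 : (c:ℕ) = 1
    · simp [h0, h1]
    · rw [if_neg h0, if_neg h1, if_neg (by omega : ¬ (k+1-(c:ℕ) = 0)),
        if_neg (by omega : ¬ (k+1-(c:ℕ) = 1))]
      omega

def sigStar (k : ℕ) (hk : 3 ≤ k) : Equiv.Perm (Fin k) :=
  Function.Involutive.toPerm _ (sigStarFun_involutive k hk)

lemma sigStar_val (k : ℕ) (hk : 3 ≤ k) (c : Fin k) :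
    ((sigStar k hk c) : ℕ) =
      if (c:ℕ) = 0 then 1 else if (c:ℕ) = 1 then 0 else k+1-(c:ℕ) :=
  sigStarFun_val k hk c

/-- any permutation with the nonvanishing pattern of `Bmat` must be `sigStar`. -/
lemma perm_eq_sigStar (k : ℕ) (hk : 3 ≤ k) (σ : Equiv.Perm (Fin k))
    (h0 : ((σ ⟨0, by omega⟩):ℕ) ≠ 0)
    (h2 : ∀ c : Fin k, 2 ≤ ((σ c):ℕ) → k+1 ≤ ((σ c):ℕ) + (c:ℕ)) :
    σ = sigStar k hk := by
  have hsymm : ∀ n : ℕ, ∀ r : Fin k, (r:ℕ) = n → 2 ≤ (r:ℕ) → ((σ.symm r):ℕ) = k+1-(r:ℕ) := by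
    intro n
    induction n using Nat.strong_induction_on with
    | _ n ih =>
      intro r hrn hr2
      have happ : σ (σ.symm r) = r := σ.apply_symm_apply r
      have hge : k+1 ≤ (r:ℕ) + ((σ.symm r):ℕ) := by
        have := h2 (σ.symm r) (by rw [happ]; exact hr2)
        rw [happ] at this
        omega
      by_contra hne
      have hgt : k+2-(r:ℕ) ≤ ((σ.symm r):ℕ) := by
        have hlt := (σ.symm r).isLt
        have hrlt := r.isLt
        omega
      have hcle : ((σ.symm r):ℕ) ≤ k-1 := by have := (σ.symm r).isLt; omega
      have hr'2 : 2 ≤ k+1-((σ.symm r):ℕ) := by omega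
      have hr'lt : k+1-((σ.symm r):ℕ) < k := by have := r.isLt; omega
      have hr'small : k+1-((σ.symm r):ℕ) < n := by have := r.isLt; omega
      have hih := ih (k+1-((σ.symm r):ℕ)) hr'small ⟨k+1-((σ.symm r):ℕ), hr'lt⟩ rfl
        (by simp only [Fin.val_mk]; omega)
      have heq : ((σ.symm ⟨k+1-((σ.symm r):ℕ), hr'lt⟩):ℕ) = ((σ.symm r):ℕ) := by
        rw [hih]; simp only [Fin.val_mk]; omega
      have h3 : σ.symm ⟨k+1-((σ.symm r):ℕ), hr'lt⟩ = σ.symm r := Fin.ext heq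
      have h4 := σ.symm.injective h3
      have h5 : k+1-((σ.symm r):ℕ) = (r:ℕ) := by
        have := congrArg Fin.val h4
        simpa using this
      omega
  have hlow : ∀ c : Fin k, (c:ℕ) ≤ 1 → ((σ c):ℕ) ≤ 1 := by
    intro c hc
    by_contra hgt
    have h2' : 2 ≤ ((σ c):ℕ) := by omega
    have := hsymm ((σ c):ℕ) (σ c) rfl h2'
    rw [Equiv.symm_apply_apply] at this
    have hσck := (σ c).isLt
    have hck := c.isLt
    omega
  have hσ0 : ((σ ⟨0, by omega⟩):ℕ) = 1 := by
    have := hlow ⟨0, by omega⟩ (by simp)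
    omega
  have hσ1 : ((σ ⟨1, by omega⟩):ℕ) = 0 := by
    have hb := hlow ⟨1, by omega⟩ (by simp)
    have hinj : σ ⟨0, by omega⟩ ≠ σ ⟨1, by omega⟩ := by
      intro hcc
      have := σ.injective hcc
      have := congrArg Fin.val this
      simp at this
    have : ((σ ⟨1, by omega⟩):ℕ) ≠ 1 := by
      intro hcc
      exact hinj (Fin.ext (by omega))
    omega
  apply Equiv.ext
  intro c
  apply Fin.ext
  rw [sigStar_val]
  by_cases hc0 : (c:ℕ) = 0
  · rw [if_pos hc0]
    have : c = ⟨0, by omega⟩ := Fin.ext hc0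
    rw [this]
    exact hσ0
  · by_cases hc1 : (c:ℕ) = 1
    · rw [if_neg hc0, if_pos hc1]
      have : c = ⟨1, by omega⟩ := Fin.ext hc1
      rw [this]
      exact hσ1
    · rw [if_neg hc0, if_neg hc1]
      have hc2 : 2 ≤ (c:ℕ) := by omega
      have hσc2 : 2 ≤ ((σ c):ℕ) := by
        by_contra hle
        have hσc1 : ((σ c):ℕ) ≤ 1 := by omega
        have : σ c = σ ⟨0, by omega⟩ ∨ σ c = σ ⟨1, by omega⟩ := by
          rcases Nat.eq_zero_or_pos ((σ c):ℕ) with hy | hy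
          · right; exact Fin.ext (by omega)
          · left; exact Fin.ext (by omega)
        rcases this with hcc | hcc
        · have := congrArg Fin.val (σ.injective hcc)
          simp at this
          omega
        · have := congrArg Fin.val (σ.injective hcc)
          simp at this
          omega
      have := hsymm ((σ c):ℕ) (σ c) rfl hσc2
      rw [Equiv.symm_apply_apply] at this
      have hσck := (σ c).isLt
      have hck := c.isLt
      omega

/-- Forward: vanishing Hankel det forces the next recurrence value. -/
lemma det_hankel_forward (a : ℕ → ℝ) (γ δ : ℝ) (k : ℕ) (hk : 3 ≤ k)
    (ha0 : a 0 = 0)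
    (hs : ∀ n, 2 ≤ n → n ≤ k → sval a γ δ n = 0)
    (hdet : (hankelM a k).det = 0) :
    a 1 * a 1 * (sval a γ δ (k+1))^(k-2) = 0 := by
  rw [det_Bmat_eq a γ δ k] at hdet
  rw [Matrix.det_apply] at hdet
  set B := Bmat a γ δ k with hB
  have hBzero : ∀ (r c : Fin k), 2 ≤ (r:ℕ) → (r:ℕ) + (c:ℕ) ≤ k → B r c = 0 := by
    intro r c hr hrc
    have : B r c = sval a γ δ ((r:ℕ)+(c:ℕ)) := by simp [hB, Bmat, hr]
    rw [this]
    exact hs _ (by omega) hrc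
  have hB00 : B ⟨0, by omega⟩ ⟨0, by omega⟩ = 0 := by
    have : B ⟨0, by omega⟩ ⟨0, by omega⟩ = a 0 := by simp [hB, Bmat]
    rw [this, ha0]
  have hterm : ∀ σ : Equiv.Perm (Fin k), σ ≠ sigStar k hk → (∏ c : Fin k, B (σ c) c) = 0 := by
    intro σ hσ
    by_contra hne
    have hfac : ∀ c : Fin k, B (σ c) c ≠ 0 := by
      intro c h
      exact hne (Finset.prod_eq_zero (Finset.mem_univ c) h)
    apply hσ
    apply perm_eq_sigStar k hk σ
    · intro h
      apply hfac ⟨0, by omega⟩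
      have : σ ⟨0, by omega⟩ = ⟨0, by omega⟩ := Fin.ext h
      rw [this]
      exact hB00
    · intro c h2'
      by_contra hlt
      exact hfac c (hBzero (σ c) c h2' (by omega))
  have hprod : (∏ c : Fin k, B (sigStar k hk c) c)
      = a 1 * a 1 * (sval a γ δ (k+1))^(k-2) := by
    have hBval : ∀ c : Fin k, B (sigStar k hk c) c
        = if (c:ℕ) ≤ 1 then a 1 else sval a γ δ (k+1) := by
      intro c
      have hsv := sigStar_val k hk c
      by_cases hc0 : (c:ℕ) = 0
      · rw [if_pos (by omega)]
        have hrow : ((sigStar k hk c):ℕ) = 1 := by rw [hsv, if_pos hc0]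
        have : B (sigStar k hk c) c = a (((sigStar k hk c):ℕ) + (c:ℕ)) := by
          simp [hB, Bmat, hrow]
        rw [this, hrow, hc0]
      · by_cases hc1 : (c:ℕ) = 1
        · rw [if_pos (by omega)]
          have hrow : ((sigStar k hk c):ℕ) = 0 := by rw [hsv, if_neg hc0, if_pos hc1]
          have : B (sigStar k hk c) c = a (((sigStar k hk c):ℕ) + (c:ℕ)) := by
            simp [hB, Bmat, hrow]
          rw [this, hrow, hc1]
        · have hc2 : 2 ≤ (c:ℕ) := by omega
          have hck := c.isLt
          rw [if_neg (by omega)]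
          have hrow : ((sigStar k hk c):ℕ) = k+1-(c:ℕ) := by
            rw [hsv, if_neg hc0, if_neg hc1]
          have hrow2 : 2 ≤ ((sigStar k hk c):ℕ) := by omega
          have : B (sigStar k hk c) c = sval a γ δ (((sigStar k hk c):ℕ) + (c:ℕ)) := by
            simp [hB, Bmat, hrow2]
          rw [this, hrow]
          congr 1
          omega
    rw [Finset.prod_congr rfl (fun c _ => hBval c),
      Finset.prod_ite (fun _ => a 1) (fun _ => sval a γ δ (k+1)),
      Finset.prod_const, Finset.prod_const]
    have hfilt : (Finset.univ.filter (fun c : Fin k => (c:ℕ) ≤ 1))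
        = {(⟨0, by omega⟩ : Fin k), ⟨1, by omega⟩} := by
      ext c
      simp only [Finset.mem_filter, Finset.mem_univ, true_and, Finset.mem_insert,
        Finset.mem_singleton, Fin.ext_iff]
      omega
    have hcard1 : (Finset.univ.filter (fun c : Fin k => (c:ℕ) ≤ 1)).card = 2 := by
      rw [hfilt, Finset.card_insert_of_notMem (by simp), Finset.card_singleton]
    have hcard2 : (Finset.univ.filter (fun c : Fin k => ¬ (c:ℕ) ≤ 1)).card = k - 2 := by
      have := Finset.card_filter_add_card_filter_not
        (s := (Finset.univ : Finset (Fin k))) (fun c : Fin k => (c:ℕ) ≤ 1)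
      rw [hcard1] at this
      simp only [Finset.card_univ, Fintype.card_fin] at this
      omega
    rw [hcard1, hcard2]
    ring
  rw [Finset.sum_eq_single (sigStar k hk)] at hdet
  · rw [hprod] at hdet
    rcases Int.units_eq_one_or (Equiv.Perm.sign (sigStar k hk)) with hu | hu
    · rw [hu, one_smul] at hdet
      exact hdet
    · rw [hu, Units.smul_def] at hdet
      simp only [Units.val_neg, Units.val_one, neg_zsmul, one_zsmul, neg_eq_zero] at hdet
      exact hdet
  · intro b _ hb
    rw [hterm b hb, smul_zero]
  · intro h
    exact absurd (Finset.mem_univ _) h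

/-- the sequence `a_n = p_{l-n}(t)`, zero for `n > l`. -/
noncomputable def aseq (l : ℕ) (t : Fin l → ℝ) (n : ℕ) : ℝ :=
  if n ≤ l then pp l (l - n) t else 0

lemma tauP_eq_hankel (l k : ℕ) (t : Fin l → ℝ) :
    tauP l k t = (hankelM (aseq l t) k).det := by
  unfold tauP hankelM aseq
  congr 1
  ext i j
  simp only [Matrix.of_apply]
  by_cases h : (i:ℕ) + (j:ℕ) ≤ l
  · rw [if_pos h, if_pos h, Nat.sub_sub]
  · rw [if_neg h, if_neg h]

lemma aseq_zero_eq (l : ℕ) (hl : 2 ≤ l) (t : Fin l → ℝ) :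
    tauP l 1 t = aseq l t 0 := by
  rw [tauP_eq_hankel]
  unfold hankelM
  rw [Matrix.det_fin_one]
  simp

lemma tauP_two_eq (l : ℕ) (hl : 2 ≤ l) (t : Fin l → ℝ) :
    tauP l 2 t = aseq l t 0 * aseq l t 2 - aseq l t 1 * aseq l t 1 := by
  rw [tauP_eq_hankel]
  unfold hankelM
  rw [Matrix.det_fin_two]
  simp only [Matrix.of_apply]
  norm_num
  try ring

/-- Forward characterization: on the divisor, `pp l m t = PF m α β`. -/
lemma forward_char (l : ℕ) (hl : 2 ≤ l) (t : Fin l → ℝ)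
    (h1 : ∀ j : ℕ, 1 ≤ j → j ≤ l → j ≠ 2 → tauP l j t = 0)
    (h2 : tauP l 2 t ≠ 0) :
    (∀ m : ℕ, m ≤ l → pp l m t = PF m (pp l 1 t) (pp l 2 t - (pp l 1 t)^2))
      ∧ PF l (pp l 1 t) (pp l 2 t - (pp l 1 t)^2) = 0
      ∧ PF (l-1) (pp l 1 t) (pp l 2 t - (pp l 1 t)^2) ≠ 0 := by
  set a := aseq l t with ha
  have ha0 : a 0 = 0 := by
    rw [ha, ← aseq_zero_eq l hl t]
    exact h1 1 (by omega) (by omega) (by omega)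
  have ha1 : a 1 ≠ 0 := by
    intro hz
    apply h2
    rw [tauP_two_eq l hl t, ← ha, ha0, hz]
    ring
  set γ := a 2 / a 1 with hγ
  set δ := (a 3 - γ * a 2) / a 1 with hδ
  have hdets : ∀ k, 3 ≤ k → k ≤ l → (hankelM a k).det = 0 := by
    intro k h3 hkl
    rw [ha, ← tauP_eq_hankel]
    exact h1 k (by omega) hkl (by omega)
  have hs : ∀ n, 2 ≤ n → n ≤ l + 1 → sval a γ δ n = 0 := by
    intro n
    induction n using Nat.strong_induction_on with
    | _ n ih =>
      intro hn2 hnl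
      match n, hn2 with
      | 2, _ =>
        unfold sval
        rw [ha0]
        norm_num
        rw [hγ]
        field_simp
        ring
      | 3, _ =>
        unfold sval
        norm_num
        rw [hδ]
        field_simp
        ring
      | (m+4), _ =>
        have hk : 3 ≤ m+3 := by omega
        have hkl : m+3 ≤ l := by omega
        have hres := det_hankel_forward a γ δ (m+3) hk ha0
          (fun n' hn'2 hn'l => ih n' (by omega) hn'2 (by omega))
          (hdets (m+3) hk hkl)
        have hpow : (sval a γ δ (m+4))^(m+1) = 0 := by
          have hmul : a 1 * a 1 ≠ 0 := mul_ne_zero ha1 ha1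
          have : (m+3+1) = m+4 := by omega
          rw [this] at hres
          have : (m+3-2) = m+1 := by omega
          rw [this] at hres
          exact (mul_eq_zero.mp hres).resolve_left hmul
        exact pow_eq_zero_iff (by omega) |>.mp hpow
  -- now δ ≠ 0 etc.
  have hal : a l = 1 := by
    rw [ha]
    unfold aseq
    rw [if_pos (le_refl l), Nat.sub_self, pp_zero]
  have halp : a (l+1) = 0 := by
    rw [ha]; unfold aseq; rw [if_neg (by omega)]
  have hp : ∀ m : ℕ, m ≤ l → pp l m t = a (l - m) := by
    intro m hm
    rw [ha]; unfold aseq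
    rw [if_pos (by omega)]
    congr 1
    omega
  have hsl1 := hs (l+1) (by omega) (by omega)
  have hsl := hs l (by omega) (by omega)
  unfold sval at hsl1 hsl
  rw [halp] at hsl1
  have el1 : l + 1 - 1 = l := by omega
  have el2 : l + 1 - 2 = l - 1 := by omega
  rw [el1, el2, hal] at hsl1
  -- hsl1 : 0 - γ * 1 - δ * a (l-1) = 0
  have hgd : γ = - δ * a (l-1) := by linarith
  have ell1 : l - 1 + 1 = l := by omega  -- unused maybe
  rw [hal] at hsl
  -- hsl : 1 - γ * a (l-1) - δ * a (l-2) = 0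
  have hδne : δ ≠ 0 := by
    intro hz
    rw [hz] at hgd
    rw [hgd, hz] at hsl
    norm_num at hsl
  set α := pp l 1 t with hα
  set β := pp l 2 t - (pp l 1 t)^2 with hβ
  have hp1 : pp l 1 t = a (l-1) := hp 1 (by omega)
  have hp2 : pp l 2 t = a (l-2) := hp 2 hl
  have hδα : δ * α = - γ := by
    rw [hα, hp1, hgd]; ring
  have hδβ : δ * β = 1 := by
    have : δ * pp l 2 t = 1 - γ * a (l-1) := by
      rw [hp2]; linarith
    rw [hβ]
    have h2' : δ * (pp l 2 t - (pp l 1 t)^2) = (1 - γ * a (l-1)) - (δ * pp l 1 t) * pp l 1 t := by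
      rw [← this]; ring
    rw [h2', hδα, hp1]
    ring
  -- upward recurrence
  have hrec : ∀ m : ℕ, 2 ≤ m → m ≤ l → pp l m t = α * pp l (m-1) t + β * pp l (m-2) t := by
    intro m hm2 hml
    have hn := hs (l + 2 - m) (by omega) (by omega)
    unfold sval at hn
    have e1 : l + 2 - m ≤ l := by omega
    have e2 : l + 2 - m - 1 = l - (m-1) := by omega
    have e3 : l + 2 - m - 2 = l - m := by omega
    have e4 : l + 2 - m = l - (m - 2) := by omega
    rw [e2, e3, e4] at hn
    -- hn : a (l - (m-2)) - γ * a (l - (m-1)) - δ * a (l - m) = 0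
    rw [hp m hml, hp (m-1) (by omega), hp (m-2) (by omega)]
    -- multiply by δ
    have hγeq : γ = - (δ * α) := by rw [hδα]; ring
    rw [hγeq] at hn
    apply mul_left_cancel₀ hδne
    have : δ * (α * a (l-(m-1)) + β * a (l-(m-2)))
        = (δ*α) * a (l-(m-1)) + (δ*β) * a (l-(m-2)) := by ring
    rw [this, hδβ]
    linarith
  have hPF : ∀ m : ℕ, m ≤ l → pp l m t = PF m α β := by
    intro m
    induction m using Nat.strong_induction_on with
    | _ m ih =>
      intro hml
      match m with
      | 0 => rw [pp_zero, PF_zero]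
      | 1 => rw [PF_one]
      | (n+2) =>
        have h2' : 2 ≤ n+2 := by omega
        rw [hrec (n+2) h2' hml, PF_add_two]
        have e1 : n+2-1 = n+1 := by omega
        have e2 : n+2-2 = n := by omega
        rw [e1, e2, ih (n+1) (by omega) (by omega), ih n (by omega) (by omega)]
  refine ⟨hPF, ?_, ?_⟩
  · rw [← hPF l (le_refl l), hp l (le_refl l), Nat.sub_self, ha0]
  · rw [← hPF (l-1) (by omega), hp (l-1) (by omega)]
    have : l - (l-1) = 1 := by omega
    rw [this]
    exact ha1

/-- Backward: points constructed from `(α,β)` on the curve lie in the divisor. -/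
lemma backward_char (l : ℕ) (hl : 2 ≤ l) (α β : ℝ)
    (hPl : PF l α β = 0) (hPl1 : PF (l-1) α β ≠ 0) :
    (∀ j : ℕ, 1 ≤ j → j ≤ l → j ≠ 2 → tauP l j (Ginv l (fun i => PF ((i:ℕ)+1) α β)) = 0)
      ∧ tauP l 2 (Ginv l (fun i => PF ((i:ℕ)+1) α β)) ≠ 0 := by
  set tt := Ginv l (fun i => PF ((i:ℕ)+1) α β) with htt
  have hppm : ∀ m : ℕ, m ≤ l → pp l m tt = PF m α β := by
    intro m hm
    match m with
    | 0 => rw [pp_zero, PF_zero]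
    | (n+1) =>
      rw [htt, pp_Ginv l _ n (by omega)]
  have hβ : β ≠ 0 := by
    intro hz
    rw [hz, PF_beta_zero] at hPl hPl1
    have : α = 0 := by
      by_contra hα
      exact (pow_ne_zero l hα) hPl
    rw [this] at hPl1
    exact hPl1 (zero_pow (by omega))
  have ha : ∀ n : ℕ, aseq l tt n = if n ≤ l then PF (l-n) α β else 0 := by
    intro n
    unfold aseq
    by_cases h : n ≤ l
    · rw [if_pos h, if_pos h, hppm (l-n) (by omega)]
    · rw [if_neg h, if_neg h]
  set γ := -α/β with hγ
  set δ := (1:ℝ)/β with hδ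
  have hs : ∀ n, 2 ≤ n → n ≤ l + 1 → sval (aseq l tt) γ δ n = 0 := by
    intro n hn2 hnl
    unfold sval
    rcases Nat.lt_or_ge n (l+1) with h | h
    · have h1 : n ≤ l := by omega
      rw [ha n, ha (n-1), ha (n-2), if_pos h1, if_pos (by omega), if_pos (by omega)]
      have e1 : l - (n-1) = (l-n)+1 := by omega
      have e2 : l - (n-2) = (l-n)+2 := by omega
      rw [e1, e2, PF_add_two, hγ, hδ]
      field_simp
      ring
    · have hn : n = l+1 := by omega
      subst hn
      have e1 : l + 1 - 1 = l := by omega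
      have e2 : l + 1 - 2 = l - 1 := by omega
      rw [e1, e2, ha (l+1), ha l, ha (l-1), if_neg (by omega), if_pos (le_refl l),
        if_pos (by omega), Nat.sub_self, PF_zero]
      have e3 : l - (l-1) = 1 := by omega
      rw [e3, PF_one, hγ, hδ]
      field_simp
      ring
  constructor
  · intro j hj1 hjl hj2
    match j, hj1 with
    | 1, _ =>
      rw [aseq_zero_eq l hl tt, ha 0, if_pos (by omega), Nat.sub_zero]
      exact hPl
    | (m+2), _ =>
      have h3 : 3 ≤ m+2 := by omega
      rw [tauP_eq_hankel]
      exact det_hankel_zero (aseq l tt) γ δ (m+2) h3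
        (fun n hn2 hnl => hs n hn2 (by omega))
  · rw [tauP_two_eq l hl tt]
    rw [ha 0, ha 1, ha 2, if_pos (by omega), if_pos (by omega), if_pos (by omega)]
    rw [Nat.sub_zero, hPl]
    have : l - 1 = l - 1 := rfl
    intro hc
    apply hPl1
    have : PF (l-1) α β * PF (l-1) α β = 0 := by linarith
    exact (mul_self_eq_zero).mp this

/-! ### The curve pieces in the `(α,β)`-plane -/

open Real

def Sset (l : ℕ) : Set (ℝ × ℝ) := {z | PF l z.1 z.2 = 0 ∧ PF (l-1) z.1 z.2 ≠ 0}

noncomputable def thetaAng (l m : ℕ) : ℝ := m * π / (l+1)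

noncomputable def Qset (l m : ℕ) : Set (ℝ × ℝ) :=
  (fun ρ : ℝ => (2*ρ*Real.cos (thetaAng l m), -ρ^2)) '' (Set.Ioi 0)

def Lset : Set (ℝ × ℝ) := (fun b : ℝ => ((0:ℝ), b)) '' (Set.Ioi 0)

lemma PF_zero_zero (m : ℕ) (hm : 1 ≤ m) : PF m 0 0 = 0 := by
  rw [PF_beta_zero]
  exact zero_pow (by omega)

lemma thetaAng_mem (l m : ℕ) (hm1 : 1 ≤ m) (hml : m ≤ l) :
    0 < thetaAng l m ∧ thetaAng l m < π := by
  unfold thetaAng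
  have hπ := Real.pi_pos
  have hl1 : (0:ℝ) < (l:ℝ)+1 := by positivity
  constructor
  · apply div_pos
    · have : (1:ℝ) ≤ (m:ℝ) := by exact_mod_cast hm1
      nlinarith
    · exact hl1
  · rw [div_lt_iff₀ hl1]
    have : (m:ℝ) < (l:ℝ)+1 := by exact_mod_cast Nat.lt_succ_of_le hml
    nlinarith

lemma sin_thetaAng_pos (l m : ℕ) (hm1 : 1 ≤ m) (hml : m ≤ l) :
    0 < Real.sin (thetaAng l m) := by
  obtain ⟨h1, h2⟩ := thetaAng_mem l m hm1 hml
  exact Real.sin_pos_of_pos_of_lt_pi h1 h2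

lemma lp1_thetaAng (l m : ℕ) : ((l:ℝ)+1) * thetaAng l m = m * π := by
  unfold thetaAng
  field_simp

lemma uC_l_thetaAng (l m : ℕ) (hm1 : 1 ≤ m) (hml : m ≤ l) :
    uC l (Real.cos (thetaAng l m)) = 0 := by
  have h := uC_sin l (thetaAng l m)
  rw [lp1_thetaAng] at h
  rw [Real.sin_nat_mul_pi] at h
  have hs := sin_thetaAng_pos l m hm1 hml
  exact (mul_eq_zero.mp h).resolve_right (by linarith)

lemma uC_lm1_thetaAng (l m : ℕ) (hl : 1 ≤ l) (hm1 : 1 ≤ m) (hml : m ≤ l) :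
    uC (l-1) (Real.cos (thetaAng l m)) ≠ 0 := by
  have h := uC_sin (l-1) (thetaAng l m)
  have e : ((l-1:ℕ):ℝ) + 1 = (l:ℝ) := by
    push_cast [Nat.cast_sub hl]
    ring
  rw [e] at h
  have e2 : (l:ℝ) * thetaAng l m = m * π - thetaAng l m := by
    have := lp1_thetaAng l m
    ring_nf
    ring_nf at this
    linarith
  rw [e2, Real.sin_sub, Real.sin_nat_mul_pi] at h
  have hs := sin_thetaAng_pos l m hm1 hml
  have hcos2 : Real.cos ((m:ℝ)*π) ≠ 0 := by
    have hsin := Real.sin_nat_mul_pi m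
    have := Real.sin_sq_add_cos_sq ((m:ℝ)*π)
    intro hc
    rw [hc, hsin] at this
    norm_num at this
  intro hc
  rw [hc] at h
  have : Real.cos ((m:ℝ)*π) * Real.sin (thetaAng l m) = 0 := by linarith
  rcases mul_eq_zero.mp this with h' | h'
  · exact hcos2 h'
  · linarith

lemma Qset_subset_Sset (l m : ℕ) (hl : 2 ≤ l) (hm1 : 1 ≤ m) (hml : m ≤ l) :
    Qset l m ⊆ Sset l := by
  rintro z ⟨ρ, hρ, rfl⟩
  have hρ' : (0:ℝ) < ρ := hρ
  constructor
  · show PF l _ _ = 0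
    rw [PF_scale, uC_l_thetaAng l m hm1 hml]
    ring
  · show PF (l-1) _ _ ≠ 0
    rw [PF_scale]
    exact mul_ne_zero (pow_ne_zero _ (by linarith)) (uC_lm1_thetaAng l m (by omega) hm1 hml)

lemma Lset_subset_Sset (l : ℕ) (hl : 2 ≤ l) (hodd : Odd l) : Lset ⊆ Sset l := by
  rintro z ⟨b, hb, rfl⟩
  obtain ⟨j, hj⟩ := hodd
  have hb' : (0:ℝ) < b := hb
  constructor
  · show PF l 0 b = 0
    rw [show l = 2*j+1 by omega, PF_odd_alpha_zero]
  · show PF (l-1) 0 b ≠ 0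
    rw [show l-1 = 2*j by omega, PF_even_alpha_zero]
    positivity

/-- covering of the divisor curve by the pieces. -/
lemma Sset_cover (l : ℕ) (hl : 2 ≤ l) (z : ℝ × ℝ) (hz : z ∈ Sset l) :
    (∃ m, 1 ≤ m ∧ m ≤ l ∧ z ∈ Qset l m) ∨ (Odd l ∧ z ∈ Lset) := by
  obtain ⟨hz1, hz2⟩ := hz
  rcases lt_trichotomy z.2 0 with hneg | hzero | hpos
  · -- β < 0
    left
    set ρ := Real.sqrt (-z.2) with hρdef
    have hρ : 0 < ρ := Real.sqrt_pos.mpr (by linarith)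
    have hρ2 : ρ^2 = -z.2 := Real.sq_sqrt (by linarith)
    set c := z.1/(2*ρ) with hcdef
    have hz1eq : z.1 = 2*ρ*c := by
      rw [hcdef]
      field_simp
    have hz2eq : z.2 = -ρ^2 := by rw [hρ2]; ring
    have hPFl : PF l z.1 z.2 = ρ^l * uC l c := by
      rw [hz1eq, hz2eq, PF_scale]
    have hPFl1 : PF (l-1) z.1 z.2 = ρ^(l-1) * uC (l-1) c := by
      rw [hz1eq, hz2eq, PF_scale]
    have hul : uC l c = 0 := by
      rw [hPFl] at hz1
      exact (mul_eq_zero.mp hz1).resolve_left (pow_ne_zero _ (by linarith))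
    have hcabs : |c| < 1 := by
      by_contra hge
      exact uC_ne_zero_of_one_le_abs l (by linarith [abs_nonneg c, not_lt.mp hge]) hul
    have hc1 : -1 < c := by cases abs_lt.mp hcabs; linarith
    have hc2 : c < 1 := by cases abs_lt.mp hcabs; linarith
    set θ := Real.arccos c with hθdef
    have hcos : Real.cos θ = c := Real.cos_arccos (by linarith) (by linarith)
    have hθpos : 0 < θ := Real.arccos_pos.mpr hc2
    have hθlt : θ < π := by
      rcases lt_or_eq_of_le (Real.arccos_le_pi c) with h | h
      · exact h
      · exfalso
        have := Real.arccos_eq_pi.mp h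
        linarith
    have hsinz : Real.sin (((l:ℝ)+1) * θ) = 0 := by
      have := uC_sin l θ
      rw [hcos, hul] at this
      linarith
    obtain ⟨n, hn⟩ := Real.sin_eq_zero_iff.mp hsinz
    have hπ := Real.pi_pos
    have hlθpos : 0 < ((l:ℝ)+1) * θ := by positivity
    have hlθlt : ((l:ℝ)+1) * θ < ((l:ℝ)+1) * π := by
      apply mul_lt_mul_of_pos_left hθlt
      positivity
    have hn1 : 1 ≤ n := by
      by_contra h
      push_neg at h
      have : (n:ℝ) ≤ 0 := by exact_mod_cast Int.lt_add_one_iff.mp h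
      nlinarith
    have hnl : (n:ℝ) < (l:ℝ)+1 := by
      by_contra h
      push_neg at h
      nlinarith
    have hnl' : n ≤ l := by
      have h2 : n < (l:ℤ) + 1 := by exact_mod_cast hnl
      omega
    set m := n.toNat with hm
    have hmn : (m:ℝ) = (n:ℝ) := by
      rw [hm]
      norm_cast
      omega
    have hθeq : θ = thetaAng l m := by
      unfold thetaAng
      rw [hmn]
      have hl1 : ((l:ℝ)+1) ≠ 0 := by positivity
      field_simp
      linarith [hn]
    refine ⟨m, by omega, by omega, ρ, hρ, ?_⟩
    rw [← hθeq]
    ext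
    · simp [hz1eq, hcos]
    · simp [hz2eq]
  · -- β = 0 impossible
    exfalso
    rw [hzero, PF_beta_zero] at hz1 hz2
    have h1 : z.1 = 0 := pow_eq_zero_iff (by omega : l ≠ 0) |>.mp hz1
    rw [h1] at hz2
    exact hz2 (zero_pow (by omega))
  · -- β > 0 : l odd, α = 0
    right
    have hz1zero : z.1 = 0 := by
      rcases lt_trichotomy z.1 0 with h | h | h
      · exfalso
        have hp := PF_pos l (show (0:ℝ) < -z.1 by linarith) hpos
        have := PF_neg l z.1 z.2
        rw [show -z.1 = -z.1 from rfl] at hp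
        rw [show (-(z.1)) = -z.1 from rfl] at hp
        have heq : PF l (-z.1) z.2 = (-1)^l * PF l z.1 z.2 := PF_neg l z.1 z.2
        rw [hz1] at heq
        rw [heq] at hp
        norm_num at hp
      · exact h
      · exfalso
        have hp := PF_pos l h hpos
        rw [hz1] at hp
        norm_num at hp
    have hodd : Odd l := by
      rcases Nat.even_or_odd l with he | ho
      · exfalso
        obtain ⟨j, hj⟩ := he
        have hpow : PF l z.1 z.2 = z.2 ^ j := by
          rw [hz1zero, show l = 2*j by omega, PF_even_alpha_zero]
        rw [hz1] at hpow
        have := pow_pos hpos j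
        linarith
      · exact ho
    exact ⟨hodd, ⟨z.2, hpos, by ext <;> simp [hz1zero]⟩⟩

lemma Qset_disjoint (l : ℕ) (hl : 2 ≤ l) {m m' : ℕ} (hm1 : 1 ≤ m) (hml : m ≤ l)
    (hm1' : 1 ≤ m') (hml' : m' ≤ l) (hne : m ≠ m') :
    Qset l m ∩ Qset l m' = ∅ := by
  ext z
  simp only [Set.mem_inter_iff, Set.mem_empty_iff_false, iff_false]
  rintro ⟨⟨ρ, hρ, rfl⟩, ⟨ρ', hρ', heq⟩⟩
  have hρ0 : (0:ℝ) < ρ := hρ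
  have hρ0' : (0:ℝ) < ρ' := hρ'
  have h2 : -ρ'^2 = -ρ^2 := congrArg Prod.snd heq
  have hρeq : ρ' = ρ := by nlinarith
  have h1 : 2*ρ'*Real.cos (thetaAng l m') = 2*ρ*Real.cos (thetaAng l m) :=
    congrArg Prod.fst heq
  rw [hρeq] at h1
  have hcos : Real.cos (thetaAng l m') = Real.cos (thetaAng l m) := by
    have h2ρ : (2:ℝ)*ρ ≠ 0 := by positivity
    apply mul_left_cancel₀ h2ρ
    calc (2*ρ) * Real.cos (thetaAng l m') = 2*ρ*Real.cos (thetaAng l m') := by ring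
      _ = 2*ρ*Real.cos (thetaAng l m) := h1
      _ = (2*ρ) * Real.cos (thetaAng l m) := by ring
  have hmem : thetaAng l m ∈ Set.Icc 0 π := by
    obtain ⟨a, b⟩ := thetaAng_mem l m hm1 hml
    exact ⟨le_of_lt a, le_of_lt b⟩
  have hmem' : thetaAng l m' ∈ Set.Icc 0 π := by
    obtain ⟨a, b⟩ := thetaAng_mem l m' hm1' hml'
    exact ⟨le_of_lt a, le_of_lt b⟩
  have := Real.injOn_cos hmem' hmem hcos
  unfold thetaAng at this
  have hπ := Real.pi_pos
  have hl1 : ((l:ℝ)+1) ≠ 0 := by positivity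
  field_simp at this
  have : (m':ℕ) = m := by exact_mod_cast this
  exact hne this.symm

lemma Qset_Lset_disjoint (l m : ℕ) : Qset l m ∩ Lset = ∅ := by
  ext z
  simp only [Set.mem_inter_iff, Set.mem_empty_iff_false, iff_false]
  rintro ⟨⟨ρ, hρ, rfl⟩, ⟨b, hb, heq⟩⟩
  have hρ0 : (0:ℝ) < ρ := hρ
  have hb0 : (0:ℝ) < b := hb
  have := congrArg Prod.snd heq
  simp at this
  nlinarith

/-- the closed sets cutting out each piece. -/
noncomputable def CQ (l m : ℕ) : Set (ℝ × ℝ) :=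
  {z | z.2 ≤ 0 ∧ z.1 = 2 * Real.sqrt (-z.2) * Real.cos (thetaAng l m)}

def CL : Set (ℝ × ℝ) := {z | z.1 = 0 ∧ 0 ≤ z.2}

lemma CQ_closed (l m : ℕ) : IsClosed (CQ l m) := by
  apply IsClosed.inter
  · exact isClosed_le continuous_snd continuous_const
  · apply isClosed_eq continuous_fst
    exact (continuous_const.mul (Real.continuous_sqrt.comp continuous_snd.neg)).mul continuous_const

lemma CL_closed : IsClosed CL := by
  apply IsClosed.inter
  · exact isClosed_eq continuous_fst continuous_const
  · exact isClosed_le continuous_const continuous_snd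

lemma Sset_inter_CQ (l m : ℕ) (hl : 2 ≤ l) (hm1 : 1 ≤ m) (hml : m ≤ l) :
    Sset l ∩ CQ l m = Qset l m := by
  apply Set.Subset.antisymm
  · rintro z ⟨⟨hz1, hz2⟩, hc2, hc1⟩
    have hz2ne : z.2 ≠ 0 := by
      intro h0
      rw [h0] at hc1
      simp at hc1
      rw [h0, PF_beta_zero] at hz1 hz2
      have h1 : z.1 = 0 := pow_eq_zero_iff (by omega : l ≠ 0) |>.mp hz1
      rw [h1] at hz2
      exact hz2 (zero_pow (by omega))
    have hneg : z.2 < 0 := lt_of_le_of_ne hc2 hz2ne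
    refine ⟨Real.sqrt (-z.2), Real.sqrt_pos.mpr (by linarith), ?_⟩
    rw [Prod.ext_iff]
    constructor
    · exact hc1.symm
    · show -(Real.sqrt (-z.2))^2 = z.2
      rw [Real.sq_sqrt (by linarith : (0:ℝ) ≤ -z.2)]
      ring
  · intro z hz
    refine ⟨Qset_subset_Sset l m hl hm1 hml hz, ?_⟩
    obtain ⟨ρ, hρ, rfl⟩ := hz
    have hρ0 : (0:ℝ) < ρ := hρ
    constructor
    · show -ρ^2 ≤ 0
      nlinarith
    · show 2*ρ*Real.cos (thetaAng l m) = 2 * Real.sqrt (-(-ρ^2)) * Real.cos (thetaAng l m)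
      rw [neg_neg, Real.sqrt_sq (by linarith)]

lemma Sset_inter_CL (l : ℕ) (hl : 2 ≤ l) (hodd : Odd l) :
    Sset l ∩ CL = Lset := by
  apply Set.Subset.antisymm
  · rintro z ⟨⟨hz1, hz2⟩, hc1, hc2⟩
    have hz2ne : z.2 ≠ 0 := by
      intro h0
      rw [hc1, h0] at hz2
      exact hz2 (PF_zero_zero (l-1) (by omega))
    refine ⟨z.2, lt_of_le_of_ne hc2 (Ne.symm hz2ne), ?_⟩
    rw [Prod.ext_iff]
    exact ⟨hc1.symm, rfl⟩
  · intro z hz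
    refine ⟨Lset_subset_Sset l hl hodd hz, ?_⟩
    obtain ⟨b, hb, rfl⟩ := hz
    exact ⟨rfl, le_of_lt hb⟩

lemma Qset_connected (l m : ℕ) : IsConnected (Qset l m) := by
  apply IsConnected.image
  · exact isConnected_Ioi
  · apply Continuous.continuousOn
    apply Continuous.prodMk
    · exact (continuous_const.mul continuous_id).mul continuous_const
    · exact (continuous_id.pow 2).neg

lemma Lset_connected : IsConnected Lset := by
  apply IsConnected.image
  · exact isConnected_Ioi
  · exact (Continuous.prodMk continuous_const continuous_id).continuousOn

/-! ### Counting connected components via a clopen partition -/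

lemma card_components_of_partition {X : Type*} [TopologicalSpace X] {N : ℕ}
    (U : Fin N → Set X)
    (hconn : ∀ i, IsConnected (U i))
    (hclopen : ∀ i, IsClopen (U i))
    (hcover : ∀ x, ∃ i, x ∈ U i)
    (hdisj : ∀ i j, i ≠ j → U i ∩ U j = ∅) :
    Nat.card (ConnectedComponents X) = N := by
  classical
  have hexu : ∀ x : X, ∃! i, x ∈ U i := by
    intro x
    obtain ⟨i, hi⟩ := hcover x
    refine ⟨i, hi, ?_⟩
    intro j hj
    by_contra hne
    have := hdisj j i hne
    exact absurd (Set.mem_inter hj hi) (by rw [this]; exact Set.notMem_empty x)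
  set f : X → Fin N := fun x => Fintype.choose _ (hexu x) with hf
  have hmemf : ∀ x, x ∈ U (f x) := fun x => Fintype.choose_spec _ (hexu x)
  have hfiff : ∀ x i, f x = i ↔ x ∈ U i := by
    intro x i
    constructor
    · intro h; rw [← h]; exact hmemf x
    · intro h
      exact ((hexu x).unique (hmemf x) h)
  have hcont : Continuous f := by
    apply IsLocallyConstant.continuous
    rw [IsLocallyConstant.iff_isOpen_fiber]
    intro i
    have : f ⁻¹' {i} = U i := by
      ext x
      simp only [Set.mem_preimage, Set.mem_singleton_iff]
      exact hfiff x i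
    rw [this]
    exact (hclopen i).2
  have hne : ∀ i, (U i).Nonempty := fun i => (hconn i).nonempty
  set g : Fin N → ConnectedComponents X :=
    fun i => ConnectedComponents.mk (hne i).some with hg
  have hglift : ∀ i, hcont.connectedComponentsLift (g i) = i := by
    intro i
    rw [hg]
    rw [Continuous.connectedComponentsLift_apply_coe]
    exact (hfiff _ i).mpr (hne i).some_mem
  have hliftg : ∀ c, g (hcont.connectedComponentsLift c) = c := by
    intro c
    obtain ⟨x, rfl⟩ := ConnectedComponents.surjective_coe c
    rw [Continuous.connectedComponentsLift_apply_coe]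
    rw [hg]
    rw [ConnectedComponents.coe_eq_coe]
    have hsub : U (f x) ⊆ connectedComponent x :=
      (hconn (f x)).subset_connectedComponent (hmemf x)
    have hmem : (hne (f x)).some ∈ connectedComponent x := hsub (hne (f x)).some_mem
    exact (connectedComponent_eq hmem).symm
  have e : ConnectedComponents X ≃ Fin N :=
    ⟨hcont.connectedComponentsLift, g, hliftg, hglift⟩
  rw [Nat.card_congr e, Nat.card_eq_fintype_card, Fintype.card_fin]

/-- **Casian–Kodama, Lemma 4.8**: the affine part of the one-dimensional Painlevé
divisor `𝒟^{{α₂}}` of the nilpotent `sl(l+1,ℝ)` Toda lattice, i.e. the set of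
`t ∈ ℝ^l` where `τ_j(t) = 0` for all `j ≠ 2` (`1 ≤ j ≤ l`) and `τ₂(t) ≠ 0`, has
exactly `2·⌊(l+1)/2⌋` connected components. -/
theorem card_components_painleve_divisor_alpha_two (l : ℕ) (hl : 2 ≤ l) :
    Nat.card (ConnectedComponents
      {t : Fin l → ℝ //
        (∀ j : ℕ, 1 ≤ j → j ≤ l → j ≠ 2 → tauP l j t = 0) ∧ tauP l 2 t ≠ 0}) =
      2 * ((l + 1) / 2) := by
  classical
  set N := 2 * ((l+1)/2) with hN
  have hlN : l ≤ N := by omega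
  have hNl : N ≤ l + 1 := by omega
  set X := {t : Fin l → ℝ //
      (∀ j : ℕ, 1 ≤ j → j ≤ l → j ≠ 2 → tauP l j t = 0) ∧ tauP l 2 t ≠ 0} with hX
  set Ψ : (Fin l → ℝ) → ℝ × ℝ :=
    fun t => (pp l 1 t, pp l 2 t - (pp l 1 t)^2) with hΨ
  have hΨcont : Continuous Ψ := by
    apply Continuous.prodMk
    · exact pp_continuous l 1
    · exact (pp_continuous l 2).sub ((pp_continuous l 1).pow 2)
  set Ξ : ℝ × ℝ → (Fin l → ℝ) :=
    fun z => Ginv l (fun i : Fin l => PF ((i:ℕ)+1) z.1 z.2) with hΞ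
  have hΞcont : Continuous Ξ := by
    apply (Ginv_continuous l).comp
    apply continuous_pi
    intro i
    exact PF_continuous ((i:ℕ)+1)
  -- forward: Ψ maps X into Sset, with inversion
  have hforward : ∀ x : X, Ψ x.val ∈ Sset l ∧ Ξ (Ψ x.val) = x.val := by
    intro x
    obtain ⟨hc1, hc2⟩ := x.2
    obtain ⟨hPF, hSl, hSl1⟩ := forward_char l hl x.val hc1 hc2
    constructor
    · exact ⟨hSl, hSl1⟩
    · show Ginv l (fun i : Fin l => PF ((i:ℕ)+1) (Ψ x.val).1 (Ψ x.val).2) = x.val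
      have : (fun i : Fin l => PF ((i:ℕ)+1) (Ψ x.val).1 (Ψ x.val).2) = Fmap l x.val := by
        funext i
        rw [hΨ, Fmap]
        exact (hPF ((i:ℕ)+1) (by omega)).symm
      rw [this, Ginv_Fmap]
  -- backward
  have hbackward : ∀ z : ℝ × ℝ, z ∈ Sset l →
      ((∀ j : ℕ, 1 ≤ j → j ≤ l → j ≠ 2 → tauP l j (Ξ z) = 0) ∧ tauP l 2 (Ξ z) ≠ 0) := by
    intro z hz
    exact backward_char l hl z.1 z.2 hz.1 hz.2
  have hΨΞ : ∀ z : ℝ × ℝ, Ψ (Ξ z) = z := by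
    intro z
    rw [hΨ, hΞ]
    have h1 : pp l 1 (Ginv l (fun i : Fin l => PF ((i:ℕ)+1) z.1 z.2)) = PF 1 z.1 z.2 := by
      rw [show (1:ℕ) = 0 + 1 by rfl, pp_Ginv l _ 0 (by omega)]
    have h2 : pp l 2 (Ginv l (fun i : Fin l => PF ((i:ℕ)+1) z.1 z.2)) = PF 2 z.1 z.2 := by
      rw [show (2:ℕ) = 1 + 1 by rfl, pp_Ginv l _ 1 (by omega)]
    rw [Prod.ext_iff]
    constructor
    · show pp l 1 _ = z.1
      rw [h1, PF_one]
    · show pp l 2 _ - (pp l 1 _)^2 = z.2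
      rw [h1, h2, PF_add_two, PF_one, PF_zero]
      ring
  -- pieces
  set piece : Fin N → Set (ℝ × ℝ) :=
    fun i => if (i:ℕ) < l then Qset l ((i:ℕ)+1) else Lset with hpiece
  have hoddof : ∀ i : Fin N, ¬ ((i:ℕ) < l) → Odd l := by
    intro i hi
    have := i.isLt
    rcases Nat.even_or_odd l with he | ho
    · exfalso
      obtain ⟨j, hj⟩ := he
      omega
    · exact ho
  have hpieceS : ∀ i : Fin N, piece i ⊆ Sset l := by
    intro i
    simp only [hpiece]
    by_cases h : (i:ℕ) < l
    · rw [if_pos h]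
      exact Qset_subset_Sset l _ hl (by omega) (by omega)
    · rw [if_neg h]
      exact Lset_subset_Sset l hl (hoddof i h)
  have hpieceC : ∀ i : Fin N, piece i = Sset l ∩ (if (i:ℕ) < l then CQ l ((i:ℕ)+1) else CL) := by
    intro i
    simp only [hpiece]
    by_cases h : (i:ℕ) < l
    · rw [if_pos h, if_pos h, Sset_inter_CQ l ((i:ℕ)+1) hl (by omega) (by omega)]
    · rw [if_neg h, if_neg h, Sset_inter_CL l hl (hoddof i h)]
  have hCclosed : ∀ i : Fin N, IsClosed (if (i:ℕ) < l then CQ l ((i:ℕ)+1) else CL) := by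
    intro i
    by_cases h : (i:ℕ) < l
    · rw [if_pos h]; exact CQ_closed l _
    · rw [if_neg h]; exact CL_closed
  have hpiececonn : ∀ i : Fin N, IsConnected (piece i) := by
    intro i
    simp only [hpiece]
    by_cases h : (i:ℕ) < l
    · rw [if_pos h]; exact Qset_connected l _
    · rw [if_neg h]; exact Lset_connected
  have hpiecedisj : ∀ i j : Fin N, i ≠ j → piece i ∩ piece j = ∅ := by
    intro i j hne
    simp only [hpiece]
    by_cases hi : (i:ℕ) < l <;> by_cases hj : (j:ℕ) < l
    · rw [if_pos hi, if_pos hj]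
      apply Qset_disjoint l hl (by omega) (by omega) (by omega) (by omega)
      intro hc
      apply hne
      apply Fin.ext
      omega
    · rw [if_pos hi, if_neg hj]
      exact Qset_Lset_disjoint l _
    · rw [if_neg hi, if_pos hj]
      rw [Set.inter_comm]
      exact Qset_Lset_disjoint l _
    · exfalso
      have hi' := i.isLt
      have hj' := j.isLt
      apply hne
      apply Fin.ext
      omega
  -- the pieces in X
  set U : Fin N → Set X := fun i => {x : X | Ψ x.val ∈ piece i} with hU
  have hUclosed : ∀ i, IsClosed (U i) := by
    intro i
    have : U i = (fun x : X => Ψ x.val) ⁻¹' (if (i:ℕ) < l then CQ l ((i:ℕ)+1) else CL) := by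
      ext x
      simp only [hU, Set.mem_setOf_eq, Set.mem_preimage]
      constructor
      · intro h
        rw [hpieceC i] at h
        exact h.2
      · intro h
        rw [hpieceC i]
        exact ⟨(hforward x).1, h⟩
    rw [this]
    exact (hCclosed i).preimage (hΨcont.comp continuous_subtype_val)
  have hUcover : ∀ x : X, ∃ i, x ∈ U i := by
    intro x
    rcases Sset_cover l hl (Ψ x.val) (hforward x).1 with ⟨m, hm1, hml, hQ⟩ | ⟨hodd, hL⟩
    · refine ⟨⟨m-1, by omega⟩, ?_⟩
      simp only [hU]
      simp only [Set.mem_setOf_eq]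
      simp only [hpiece]
      try simp only [Fin.val_mk]
      rw [if_pos (by omega)]
      have : m - 1 + 1 = m := by omega
      rw [this]
      exact hQ
    · have hNeq : N = l + 1 := by
        obtain ⟨j, hj⟩ := hodd
        omega
      refine ⟨⟨l, by omega⟩, ?_⟩
      simp only [hU]
      simp only [Set.mem_setOf_eq]
      simp only [hpiece]
      try simp only [Fin.val_mk]
      rw [if_neg (by omega)]
      exact hL
  have hUdisj : ∀ i j, i ≠ j → U i ∩ U j = ∅ := by
    intro i j hne
    ext x
    simp only [hU, Set.mem_inter_iff, Set.mem_setOf_eq, Set.mem_empty_iff_false, iff_false]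
    rintro ⟨h1, h2⟩
    have := hpiecedisj i j hne
    exact absurd (Set.mem_inter h1 h2) (by rw [this]; exact Set.notMem_empty _)
  have hUopen : ∀ i, IsOpen (U i) := by
    intro i
    rw [← isClosed_compl_iff]
    have : (U i)ᶜ = ⋃ j ∈ (Finset.univ : Finset (Fin N)).filter (fun j => j ≠ i), U j := by
      ext x
      simp only [Set.mem_compl_iff, Set.mem_iUnion, Finset.mem_filter, Finset.mem_univ, true_and]
      constructor
      · intro h
        obtain ⟨j, hj⟩ := hUcover x
        refine ⟨j, ⟨?_, hj⟩⟩
        intro hc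
        rw [hc] at hj
        exact h hj
      · rintro ⟨j, hjne, hj⟩ hxi
        have := hUdisj j i hjne
        exact absurd (Set.mem_inter hj hxi) (by rw [this]; exact Set.notMem_empty _)
    rw [this]
    apply Set.Finite.isClosed_biUnion
    · exact Set.toFinite _
    · intro j _
      exact hUclosed j
  have hUconn : ∀ i, IsConnected (U i) := by
    intro i
    have hpc := hpiececonn i
    haveI : ConnectedSpace (piece i) := Subtype.connectedSpace hpc
    haveI : Nonempty (piece i) := hpc.nonempty.to_subtype
    set κ : piece i → X := fun z =>
      ⟨Ξ z.val, (hbackward z.val (hpieceS i z.2)).1, (hbackward z.val (hpieceS i z.2)).2⟩ with hκ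
    have hκcont : Continuous κ := by
      apply Continuous.subtype_mk
      exact hΞcont.comp continuous_subtype_val
    have hrange : U i = Set.range κ := by
      ext x
      simp only [hU, Set.mem_setOf_eq, Set.mem_range]
      constructor
      · intro h
        refine ⟨⟨Ψ x.val, h⟩, ?_⟩
        rw [hκ]
        apply Subtype.ext
        exact (hforward x).2
      · rintro ⟨z, rfl⟩
        rw [hκ]
        show Ψ (Ξ z.val) ∈ piece i
        rw [hΨΞ]
        exact z.2
    rw [hrange]
    exact isConnected_range hκcont
  exact card_components_of_partition U hUconn (fun i => ⟨hUclosed i, hUopen i⟩) hUcover hUdisj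
end
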